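/- arXiv:1506.06938 — 14 statements merged into one kernel-verified Lean document; each statement's English description precedes it below -/
import Mathlib

section
/- Let m_d denote Lebesgue measure on ℝ^d and let K ⊂ ℝ^d be a nonempty compact set. Suppose there exist c_K > 0 and γ ∈ (0,1) such that for every open set S ⊂ ℝ^d one has m_d(K + S) ≥ c_K · m_d(S)^{1−γ}. Then for every nonempty compact set E ⊂ ℝ^d, the lower Minkowski dimension satisfies dim_m(K + E) ≥ γ·d + (1−γ)·dim_m(E). -/
open Filter MeasureTheory Metric Set Pointwise
open scoped ENNReal NNReal

/-- The minimal number of balls of radius `δ` needed to cover `A`. -/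
noncomputable def coverNumber {X : Type*} [PseudoMetricSpace X] (A : Set X) (δ : ℝ) : ℕ :=
  sInf {N : ℕ | ∃ C : Finset X, C.card = N ∧ A ⊆ ⋃ x ∈ C, Metric.ball x δ}

/-- The lower Minkowski dimension of a set: the liminf as `δ → 0⁺` of
`log N(A, δ) / log (1/δ)`. -/
noncomputable def lowerMinkDim {X : Type*} [PseudoMetricSpace X] (A : Set X) : ℝ :=
  liminf (fun δ : ℝ => Real.log (coverNumber A δ) / Real.log (1 / δ)) (nhdsWithin 0 (Set.Ioi 0))

lemma coverNumber_spec {X : Type*} [PseudoMetricSpace X] {A : Set X} (hA : IsCompact A)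
    {δ : ℝ} (hδ : 0 < δ) :
    ∃ C : Finset X, C.card = coverNumber A δ ∧ A ⊆ ⋃ x ∈ C, Metric.ball x δ := by
  have hne : {N : ℕ | ∃ C : Finset X, C.card = N ∧ A ⊆ ⋃ x ∈ C, Metric.ball x δ}.Nonempty := by
    obtain ⟨t, htf, hts⟩ := Metric.totallyBounded_iff.1 hA.totallyBounded δ hδ
    exact ⟨htf.toFinset.card, htf.toFinset, rfl, by simpa [Set.Finite.mem_toFinset] using hts⟩
  exact Nat.sInf_mem hne

lemma coverNumber_le {X : Type*} [PseudoMetricSpace X] {A : Set X} {δ : ℝ} {C : Finset X}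
    (hC : A ⊆ ⋃ x ∈ C, Metric.ball x δ) : coverNumber A δ ≤ C.card :=
  Nat.sInf_le ⟨C, rfl, hC⟩

lemma one_le_coverNumber {X : Type*} [PseudoMetricSpace X] {A : Set X} (hA : IsCompact A)
    (hAne : A.Nonempty) {δ : ℝ} (hδ : 0 < δ) : 1 ≤ coverNumber A δ := by
  obtain ⟨C, hcard, hC⟩ := coverNumber_spec hA hδ
  rcases Nat.eq_zero_or_pos (coverNumber A δ) with h0 | h1
  · exfalso
    rw [h0, Finset.card_eq_zero] at hcard
    obtain ⟨a, ha⟩ := hAne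
    simpa [hcard] using hC ha
  · exact h1

/-- A maximal `δ`-separated subset of a compact set. -/
lemma exists_separated {X : Type*} [MetricSpace X] {A : Set X} (hA : IsCompact A)
    {δ : ℝ} (hδ : 0 < δ) :
    ∃ F : Finset X, ↑F ⊆ A ∧ ((F : Set X).Pairwise fun x y => δ ≤ dist x y) ∧
      A ⊆ ⋃ x ∈ F, Metric.ball x δ := by
  set S : Set (Set X) := {F | F ⊆ A ∧ F.Pairwise fun x y => δ ≤ dist x y} with hS
  obtain ⟨F, hFS, hFmax⟩ : ∃ F, F ∈ S ∧ ∀ G ∈ S, F ⊆ G → G = F := by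
    have := zorn_subset S ?_
    · obtain ⟨F, hF⟩ := this
      exact ⟨F, hF.1, fun G hG hFG => (hF.2 hG hFG).antisymm hFG⟩
    · intro c hcS hchain
      refine ⟨⋃₀ c, ⟨sUnion_subset fun s hs => (hcS hs).1, ?_⟩, fun s hs => subset_sUnion_of_mem hs⟩
      intro x hx y hy hxy
      obtain ⟨s, hs, hxs⟩ := hx
      obtain ⟨t, ht, hyt⟩ := hy
      rcases hchain.total hs ht with hst | hts
      · exact (hcS ht).2 (hst hxs) hyt hxy
      · exact (hcS hs).2 hxs (hts hyt) hxy
  obtain ⟨t, htf, hts⟩ := Metric.totallyBounded_iff.1 hA.totallyBounded (δ/2) (by linarith)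
  have hFfin : F.Finite := by
    have hsub : F ⊆ ⋃ y ∈ t, F ∩ Metric.ball y (δ/2) := by
      intro x hx
      obtain ⟨y, hy, hxy⟩ := by simpa using hts (hFS.1 hx)
      exact Set.mem_biUnion hy ⟨hx, hxy⟩
    refine Set.Finite.subset (Set.Finite.biUnion htf fun y _ => ?_) hsub
    refine Set.Subsingleton.finite fun x hx z hz => ?_
    by_contra hne
    have h1 := hFS.2 hx.1 hz.1 hne
    have h2 : dist x z < δ := by
      have hx2 := mem_ball.1 hx.2
      have hz2 := mem_ball.1 hz.2
      calc dist x z ≤ dist x y + dist z y := dist_triangle_right x z y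
        _ < δ/2 + δ/2 := by linarith
        _ = δ := by ring
    linarith
  refine ⟨hFfin.toFinset, by simpa using hFS.1, by simpa using hFS.2, ?_⟩
  intro a ha
  by_contra hcon
  have hfar : ∀ x ∈ F, δ ≤ dist a x := by
    intro x hx
    by_contra hlt
    exact hcon (Set.mem_biUnion (hFfin.mem_toFinset.2 hx) (by simpa using lt_of_not_ge hlt))
  have haF : a ∉ F := fun haF => by simpa [hδ.not_ge] using hfar a haF
  have hins : insert a F ∈ S := by
    constructor
    · exact Set.insert_subset ha hFS.1
    · refine (letI : Std.Symm (fun x y : X => δ ≤ dist x y) := ⟨fun x y hxy => ?_⟩; Set.pairwise_insert_of_symm).2 ⟨hFS.2, ?_⟩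
      · rwa [dist_comm]
      · intro b hb _
        exact hfar b hb
  have := hFmax _ hins (Set.subset_insert a F)
  exact haF (this ▸ Set.mem_insert a F)

variable {d : ℕ}

lemma nontrivial_euclidean (hd : 1 ≤ d) : Nontrivial (EuclideanSpace ℝ (Fin d)) := by
  apply Module.nontrivial_of_finrank_pos (R := ℝ)
  rw [finrank_euclideanSpace_fin]
  omega

lemma ball_subset_add {A : Set (EuclideanSpace ℝ (Fin d))} {x : EuclideanSpace ℝ (Fin d)}
    (hx : x ∈ A) {r : ℝ} :
    Metric.ball x r ⊆ A + Metric.ball (0 : EuclideanSpace ℝ (Fin d)) r := by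
  intro z hz
  have : z = x + (z - x) := by abel
  rw [this]
  exact Set.add_mem_add hx (by simpa [mem_ball, dist_eq_norm] using mem_ball.1 hz)

lemma packing_lb (hd : 1 ≤ d) {A : Set (EuclideanSpace ℝ (Fin d))} (hA : IsCompact A)
    {δ : ℝ} (hδ : 0 < δ) :
    (coverNumber A δ : ℝ≥0∞) * (ENNReal.ofReal ((δ/2) ^ d) *
        volume (Metric.ball (0 : EuclideanSpace ℝ (Fin d)) 1))
      ≤ volume (A + Metric.ball (0 : EuclideanSpace ℝ (Fin d)) δ) := by
  haveI := nontrivial_euclidean hd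
  obtain ⟨F, hFA, hFsep, hFcov⟩ := exists_separated hA hδ
  have hdisj : (↑F : Set (EuclideanSpace ℝ (Fin d))).PairwiseDisjoint
      (fun x => Metric.ball x (δ/2)) := by
    intro x hx y hy hxy
    exact Metric.ball_disjoint_ball (by linarith [hFsep hx hy hxy])
  have hsum : volume (⋃ x ∈ F, Metric.ball x (δ/2)) =
      ∑ x ∈ F, volume (Metric.ball x (δ/2)) :=
    measure_biUnion_finset hdisj fun x _ => measurableSet_ball
  have hball : ∀ x : EuclideanSpace ℝ (Fin d), volume (Metric.ball x (δ/2)) =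
      ENNReal.ofReal ((δ/2) ^ d) * volume (Metric.ball (0 : EuclideanSpace ℝ (Fin d)) 1) := by
    intro x
    rw [Measure.addHaar_ball volume x (by linarith : (0:ℝ) ≤ δ/2), finrank_euclideanSpace_fin]
  calc (coverNumber A δ : ℝ≥0∞) * (ENNReal.ofReal ((δ/2) ^ d) *
        volume (Metric.ball (0 : EuclideanSpace ℝ (Fin d)) 1))
      ≤ (F.card : ℝ≥0∞) * (ENNReal.ofReal ((δ/2) ^ d) *
        volume (Metric.ball (0 : EuclideanSpace ℝ (Fin d)) 1)) := by
        gcongr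
        exact_mod_cast coverNumber_le hFcov
    _ = ∑ x ∈ F, volume (Metric.ball x (δ/2)) := by
        simp [hball, Finset.sum_const, nsmul_eq_mul]
    _ = volume (⋃ x ∈ F, Metric.ball x (δ/2)) := hsum.symm
    _ ≤ volume (A + Metric.ball (0 : EuclideanSpace ℝ (Fin d)) δ) := by
        apply measure_mono
        refine Set.iUnion₂_subset fun x hx => ?_
        exact (Metric.ball_subset_ball (by linarith)).trans (ball_subset_add (hFA hx))

lemma cover_ub (hd : 1 ≤ d) {A : Set (EuclideanSpace ℝ (Fin d))} {δ : ℝ} (hδ : 0 < δ)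
    {C : Finset (EuclideanSpace ℝ (Fin d))} (hC : A ⊆ ⋃ x ∈ C, Metric.ball x δ) :
    volume (A + Metric.ball (0 : EuclideanSpace ℝ (Fin d)) δ) ≤
      (C.card : ℝ≥0∞) * (ENNReal.ofReal ((2*δ) ^ d) *
        volume (Metric.ball (0 : EuclideanSpace ℝ (Fin d)) 1)) := by
  haveI := nontrivial_euclidean hd
  have hsub : A + Metric.ball (0 : EuclideanSpace ℝ (Fin d)) δ ⊆
      ⋃ x ∈ C, Metric.ball x (2*δ) := by
    rintro z ⟨a, ha, b, hb, rfl⟩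
    obtain ⟨x, hx, hax⟩ := by simpa using hC ha
    refine Set.mem_biUnion hx ?_
    have hbn : ‖b‖ < δ := by simpa [mem_ball, dist_eq_norm] using hb
    have : dist (a + b) x ≤ dist b 0 + dist a x := by
      calc dist (a + b) x ≤ dist (a+b) a + dist a x := dist_triangle _ _ _
        _ = dist b 0 + dist a x := by rw [dist_comm (a+b) a]; simp [dist_eq_norm]
    rw [mem_ball]
    have : dist (a + b) x < δ + δ := lt_of_le_of_lt this (by
      simp only [dist_eq_norm, sub_zero] at *
      linarith [hax])
    linarith
  calc volume (A + Metric.ball (0 : EuclideanSpace ℝ (Fin d)) δ)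
      ≤ volume (⋃ x ∈ C, Metric.ball x (2*δ)) := measure_mono hsub
    _ ≤ ∑ x ∈ C, volume (Metric.ball x (2*δ)) := measure_biUnion_finset_le C _
    _ = (C.card : ℝ≥0∞) * (ENNReal.ofReal ((2*δ) ^ d) *
        volume (Metric.ball (0 : EuclideanSpace ℝ (Fin d)) 1)) := by
        have : ∀ x : EuclideanSpace ℝ (Fin d), volume (Metric.ball x (2*δ)) =
            ENNReal.ofReal ((2*δ) ^ d) * volume (Metric.ball (0 : EuclideanSpace ℝ (Fin d)) 1) := by
          intro x
          rw [Measure.addHaar_ball volume x (by linarith : (0:ℝ) ≤ 2*δ), finrank_euclideanSpace_fin]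
        simp [this, Finset.sum_const, nsmul_eq_mul]

lemma volume_unit_ball_pos (hd : 1 ≤ d) :
    0 < (volume (Metric.ball (0 : EuclideanSpace ℝ (Fin d)) 1)).toReal := by
  have h0 : (0:ℝ≥0∞) < volume (Metric.ball (0 : EuclideanSpace ℝ (Fin d)) 1) :=
    measure_ball_pos volume 0 one_pos
  have ht : volume (Metric.ball (0 : EuclideanSpace ℝ (Fin d)) 1) < ⊤ := measure_ball_lt_top
  exact ENNReal.toReal_pos h0.ne' ht.ne

lemma key_ineq (hd : 1 ≤ d) {K E : Set (EuclideanSpace ℝ (Fin d))}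
    (hKc : IsCompact K) (hEc : IsCompact E)
    {c γ : ℝ} (hc : 0 < c) (hγ : γ ∈ Set.Ioo (0 : ℝ) 1)
    (h : ∀ S : Set (EuclideanSpace ℝ (Fin d)), IsOpen S →
      ENNReal.ofReal c * volume S ^ (1 - γ) ≤ volume (K + S))
    {δ : ℝ} (hδ0 : 0 < δ) :
    c * ((coverNumber E δ : ℝ) *
        ((δ/2)^d * (volume (Metric.ball (0 : EuclideanSpace ℝ (Fin d)) 1)).toReal)) ^ (1-γ)
      ≤ (coverNumber (K+E) δ : ℝ) *
        ((2*δ)^d * (volume (Metric.ball (0 : EuclideanSpace ℝ (Fin d)) 1)).toReal) := by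
  haveI := nontrivial_euclidean hd
  set v := volume (Metric.ball (0 : EuclideanSpace ℝ (Fin d)) 1) with hv
  have hvt : v ≠ ⊤ := measure_ball_lt_top.ne
  set S := E + Metric.ball (0 : EuclideanSpace ℝ (Fin d)) δ with hSdef
  have hSopen : IsOpen S := IsOpen.add_left isOpen_ball
  obtain ⟨C, hCcard, hCcov⟩ := coverNumber_spec (hKc.add hEc) hδ0
  have hγ0 : (0:ℝ) ≤ 1 - γ := by linarith [hγ.2]
  have chain : ENNReal.ofReal c *
      ((coverNumber E δ : ℝ≥0∞) * (ENNReal.ofReal ((δ/2)^d) * v)) ^ (1-γ)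
      ≤ (coverNumber (K+E) δ : ℝ≥0∞) * (ENNReal.ofReal ((2*δ)^d) * v) := by
    calc ENNReal.ofReal c * ((coverNumber E δ : ℝ≥0∞) * (ENNReal.ofReal ((δ/2)^d) * v)) ^ (1-γ)
        ≤ ENNReal.ofReal c * (volume S) ^ (1-γ) := by
          gcongr
          exact packing_lb hd hEc hδ0
      _ ≤ volume (K + S) := h S hSopen
      _ = volume ((K + E) + Metric.ball (0 : EuclideanSpace ℝ (Fin d)) δ) := by
          rw [hSdef, add_assoc]
      _ ≤ (C.card : ℝ≥0∞) * (ENNReal.ofReal ((2*δ)^d) * v) := cover_ub hd hδ0 hCcov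
      _ = (coverNumber (K+E) δ : ℝ≥0∞) * (ENNReal.ofReal ((2*δ)^d) * v) := by rw [hCcard]
  have hrhs_ne : (coverNumber (K+E) δ : ℝ≥0∞) * (ENNReal.ofReal ((2*δ)^d) * v) ≠ ⊤ :=
    ENNReal.mul_ne_top (ENNReal.natCast_ne_top _)
      (ENNReal.mul_ne_top ENNReal.ofReal_ne_top hvt)
  have := ENNReal.toReal_mono hrhs_ne chain
  simp only [← ENNReal.toReal_rpow, ENNReal.toReal_mul, ENNReal.toReal_ofReal hc.le,
    ENNReal.toReal_ofReal (by positivity : (0:ℝ) ≤ (δ/2)^d),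
    ENNReal.toReal_ofReal (by positivity : (0:ℝ) ≤ (2*δ)^d), ENNReal.toReal_natCast] at this
  exact this

lemma coverNumber_mul_le (hd : 1 ≤ d) {A : Set (EuclideanSpace ℝ (Fin d))} (hA : IsCompact A)
    {R δ : ℝ} (hR0 : 0 < R) (hR : A ⊆ Metric.ball 0 R) (hδ : 0 < δ) :
    (coverNumber A δ : ℝ) * (δ/2)^d ≤ (R+δ)^d := by
  haveI := nontrivial_euclidean hd
  set v := volume (Metric.ball (0 : EuclideanSpace ℝ (Fin d)) 1) with hv
  have hvt : v ≠ ⊤ := measure_ball_lt_top.ne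
  have hv0 : v ≠ 0 := (measure_ball_pos volume 0 one_pos).ne'
  have hsub : A + Metric.ball (0 : EuclideanSpace ℝ (Fin d)) δ ⊆
      Metric.ball (0 : EuclideanSpace ℝ (Fin d)) (R + δ) := by
    rintro z ⟨a, ha, b, hb, rfl⟩
    have h1 : ‖a‖ < R := by simpa [mem_ball, dist_eq_norm] using hR ha
    have h2 : ‖b‖ < δ := by simpa [mem_ball, dist_eq_norm] using hb
    have : ‖a + b‖ < R + δ := lt_of_le_of_lt (norm_add_le a b) (by linarith)
    simpa [mem_ball, dist_eq_norm]
  have hvol : volume (Metric.ball (0 : EuclideanSpace ℝ (Fin d)) (R + δ)) =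
      ENNReal.ofReal ((R+δ)^d) * v := by
    rw [hv, Measure.addHaar_ball volume 0 (by linarith : (0:ℝ) ≤ R+δ), finrank_euclideanSpace_fin]
  have hchain : ((coverNumber A δ : ℝ≥0∞) * ENNReal.ofReal ((δ/2)^d)) * v ≤
      ENNReal.ofReal ((R+δ)^d) * v := by
    rw [mul_assoc]
    exact (packing_lb hd hA hδ).trans ((measure_mono hsub).trans_eq hvol)
  rw [ENNReal.mul_le_mul_iff_left hv0 hvt, ← ENNReal.ofReal_natCast,
    ← ENNReal.ofReal_mul (by positivity)] at hchain
  exact (ENNReal.ofReal_le_ofReal_iff (by positivity)).1 hchain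

theorem stmt1 (d : ℕ) (hd : 1 ≤ d) (K : Set (EuclideanSpace ℝ (Fin d)))
    (hKne : K.Nonempty) (hKc : IsCompact K)
    (c γ : ℝ) (hc : 0 < c) (hγ : γ ∈ Set.Ioo (0 : ℝ) 1)
    (h : ∀ S : Set (EuclideanSpace ℝ (Fin d)), IsOpen S →
      ENNReal.ofReal c * volume S ^ (1 - γ) ≤ volume (K + S))
    (E : Set (EuclideanSpace ℝ (Fin d))) (hEne : E.Nonempty) (hEc : IsCompact E) :
    γ * d + (1 - γ) * lowerMinkDim E ≤ lowerMinkDim (K + E) := by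
  obtain ⟨hγ0, hγ1⟩ := hγ
  have h1γ : (0:ℝ) < 1 - γ := by linarith
  simp only [lowerMinkDim]
  set l : Filter ℝ := nhdsWithin 0 (Set.Ioi 0) with hl
  haveI hlne : l.NeBot := by rw [hl]; exact nhdsGT_neBot 0
  set V := (volume (Metric.ball (0 : EuclideanSpace ℝ (Fin d)) 1)).toReal with hV
  have hVpos : 0 < V := volume_unit_ball_pos hd
  have hKEc : IsCompact (K + E) := hKc.add hEc
  have hKEne : (K + E).Nonempty := hKne.add hEne
  obtain ⟨R, hR1, hRsub⟩ := hKEc.isBounded.subset_ball_lt 1 0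
  set C₀ : ℝ := Real.log c + (1-γ)*(Real.log V - d*Real.log 2) - Real.log V - d*Real.log 2
    with hC₀
  set g : ℝ → ℝ := fun δ => Real.log (coverNumber E δ) / Real.log (1/δ) with hg
  set f : ℝ → ℝ := fun δ => Real.log (coverNumber (K+E) δ) / Real.log (1/δ) with hf
  have hIoo : Set.Ioo (0:ℝ) 1 ∈ l := Ioo_mem_nhdsGT one_pos
  -- pointwise estimate
  have hpt : ∀ δ ∈ Set.Ioo (0:ℝ) 1,
      γ*d + (1-γ) * g δ + C₀ / Real.log (1/δ) ≤ f δ := by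
    intro δ hδ
    obtain ⟨hδ0, hδ1⟩ := hδ
    have hN2R : (1:ℝ) ≤ (coverNumber E δ : ℝ) := by
      exact_mod_cast one_le_coverNumber hEc hEne hδ0
    have hN1R : (1:ℝ) ≤ (coverNumber (K+E) δ : ℝ) := by
      exact_mod_cast one_le_coverNumber hKEc hKEne hδ0
    have hkey := key_ineq hd hKc hEc hc ⟨hγ0, hγ1⟩ h hδ0
    have hx : (0:ℝ) < (coverNumber E δ : ℝ) * ((δ/2)^d * V) := by positivity
    have hlhs : (0:ℝ) < c * ((coverNumber E δ : ℝ) * ((δ/2)^d * V)) ^ (1-γ) := by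
      have := Real.rpow_pos_of_pos hx (1-γ)
      positivity
    have hlog := Real.log_le_log hlhs hkey
    have l1 : Real.log (c * ((coverNumber E δ : ℝ) * ((δ/2)^d * V)) ^ (1-γ))
        = Real.log c + (1-γ)*(Real.log (coverNumber E δ) +
            ((d:ℝ)*(Real.log δ - Real.log 2) + Real.log V)) := by
      rw [Real.log_mul hc.ne' (by positivity), Real.log_rpow hx,
        Real.log_mul (by positivity) (by positivity),
        Real.log_mul (by positivity) hVpos.ne', Real.log_pow,
        Real.log_div hδ0.ne' two_ne_zero]
    have l2 : Real.log ((coverNumber (K+E) δ : ℝ) * ((2*δ)^d * V))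
        = Real.log (coverNumber (K+E) δ) +
            ((d:ℝ)*(Real.log 2 + Real.log δ) + Real.log V) := by
      rw [Real.log_mul (by positivity) (by positivity),
        Real.log_mul (by positivity) hVpos.ne', Real.log_pow,
        Real.log_mul two_ne_zero hδ0.ne']
    rw [l1, l2] at hlog
    have hL : Real.log (1/δ) = -Real.log δ := by rw [one_div, Real.log_inv]
    have hLpos : 0 < Real.log (1/δ) := Real.log_pos (one_lt_one_div hδ0 hδ1)
    have hmain : γ*d*Real.log (1/δ) + (1-γ)*Real.log (coverNumber E δ) + C₀
        ≤ Real.log (coverNumber (K+E) δ) := by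
      rw [hL, hC₀]
      nlinarith [hlog]
    have heq : γ*d + (1-γ) * g δ + C₀ / Real.log (1/δ)
        = (γ*d*Real.log (1/δ) + (1-γ)*Real.log (coverNumber E δ) + C₀) / Real.log (1/δ) := by
      rw [hg]
      field_simp
    rw [heq, hf]
    exact (div_le_div_iff_of_pos_right hLpos).2 hmain
  -- log(1/δ) → ∞
  have htop : Tendsto (fun δ : ℝ => Real.log (1/δ)) l atTop := by
    have h1 : Tendsto (fun δ : ℝ => δ⁻¹) l atTop := tendsto_inv_nhdsGT_zero
    have h2 := Real.tendsto_log_atTop.comp h1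
    refine h2.congr fun δ => ?_
    simp [Function.comp, one_div]
  have hLge1 : ∀ᶠ δ in l, 1 ≤ Real.log (1/δ) := htop.eventually_ge_atTop 1
  -- f is eventually bounded above
  have hfB : ∀ᶠ δ in l, f δ ≤ (d:ℝ) * Real.log (2*(R+1)) + d := by
    filter_upwards [hIoo, hLge1] with δ hδ hL1
    obtain ⟨hδ0, hδ1⟩ := hδ
    have hLpos : (0:ℝ) < Real.log (1/δ) := lt_of_lt_of_le one_pos hL1
    have hN1R : (1:ℝ) ≤ (coverNumber (K+E) δ : ℝ) := by
      exact_mod_cast one_le_coverNumber hKEc hKEne hδ0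
    have hmul := coverNumber_mul_le hd hKEc (by linarith : (0:ℝ) < R) hRsub hδ0
    have h3 : (coverNumber (K+E) δ : ℝ) * δ^d ≤ (2*(R+1))^d := by
      have ha : (coverNumber (K+E) δ : ℝ) * (δ/2)^d ≤ (R+1)^d := by
        refine hmul.trans (pow_le_pow_left₀ (by linarith) (by linarith) d)
      calc (coverNumber (K+E) δ : ℝ) * δ^d
          = ((coverNumber (K+E) δ : ℝ) * (δ/2)^d) * 2^d := by
            rw [div_pow, mul_assoc, div_mul_eq_mul_div, mul_div_assoc,
              div_self (by positivity : ((2:ℝ))^d ≠ 0), mul_one]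
        _ ≤ (R+1)^d * 2^d := mul_le_mul_of_nonneg_right ha (by positivity)
        _ = (2*(R+1))^d := by rw [← mul_pow]; ring_nf
    have h2 : (coverNumber (K+E) δ : ℝ) ≤ (2*(R+1)/δ)^d := by
      rw [div_pow, le_div_iff₀ (by positivity)]
      exact h3
    have hlogN : Real.log (coverNumber (K+E) δ)
        ≤ (d:ℝ) * Real.log (2*(R+1)) + (d:ℝ) * Real.log (1/δ) := by
      have hh := Real.log_le_log (by linarith) h2
      rw [Real.log_pow, Real.log_div (by linarith : (2:ℝ)*(R+1) ≠ 0) hδ0.ne',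
        mul_sub] at hh
      rw [one_div, Real.log_inv, mul_neg]
      linarith
    have hlogR : (0:ℝ) ≤ (d:ℝ) * Real.log (2*(R+1)) := by
      apply mul_nonneg (Nat.cast_nonneg d)
      apply Real.log_nonneg
      linarith
    calc f δ = Real.log (coverNumber (K+E) δ) / Real.log (1/δ) := by rw [hf]
      _ ≤ ((d:ℝ) * Real.log (2*(R+1)) + (d:ℝ) * Real.log (1/δ)) / Real.log (1/δ) :=
          (div_le_div_iff_of_pos_right hLpos).2 hlogN
      _ = (d:ℝ) * Real.log (2*(R+1)) / Real.log (1/δ) + d := by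
          field_simp
      _ ≤ (d:ℝ) * Real.log (2*(R+1)) + d := by
          have := div_le_self hlogR hL1
          linarith
  have hfcb : IsCoboundedUnder (· ≥ ·) l f :=
    IsBoundedUnder.isCoboundedUnder_ge ⟨(d:ℝ) * Real.log (2*(R+1)) + d, eventually_map.mpr hfB⟩
  have hgbdd : IsBoundedUnder (· ≥ ·) l g := by
    refine ⟨0, eventually_map.mpr ?_⟩
    filter_upwards [hIoo] with δ hδ
    have hN2R : (1:ℝ) ≤ (coverNumber E δ : ℝ) := by
      exact_mod_cast one_le_coverNumber hEc hEne hδ.1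
    exact div_nonneg (Real.log_nonneg hN2R)
      (Real.log_pos (one_lt_one_div hδ.1 hδ.2)).le
  refine le_of_forall_sub_le fun ε hε => ?_
  have hgev : ∀ᶠ δ in l, liminf g l - ε/2 < g δ := by
    refine eventually_lt_of_lt_liminf ?_ hgbdd
    linarith
  have hC0ev : ∀ᶠ δ in l, -(ε/2) < C₀ / Real.log (1/δ) := by
    have hT : Tendsto (fun δ => C₀ / Real.log (1/δ)) l (nhds (0:ℝ)) := htop.const_div_atTop C₀
    exact hT.eventually (eventually_gt_nhds (by linarith))
  have hev : ∀ᶠ δ in l, (γ*(d:ℝ) + (1-γ)*liminf g l) - ε ≤ f δ := by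
    filter_upwards [hIoo, hgev, hC0ev] with δ hδ h1 h2
    have h3 := hpt δ hδ
    have h4 : (1-γ)*(liminf g l - ε/2) ≤ (1-γ)*g δ :=
      mul_le_mul_of_nonneg_left h1.le h1γ.le
    nlinarith [h3, h4, h2]
  exact le_liminf_of_le hfcb hev
end

section
/- Let G be an abelian group and let K, S ⊂ G be finite nonempty sets. Then for every positive integer k, |{(x_0 − x_1, x_0 − x_2, …, x_0 − x_k) : x_0, x_1, …, x_k ∈ K}|^{1/(k+1)} · |S|^{1 − k/(k+1)} ≤ |K + S|, where |·| denotes cardinality. -/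
open Pointwise

theorem key {G : Type*} [AddCommGroup G] [DecidableEq G] (K S : Finset G) (k : ℕ) :
    Nat.card {v : Fin k → G | ∃ x₀ ∈ (K : Set G), ∃ x : Fin k → G,
        (∀ i, x i ∈ (K : Set G)) ∧ v = fun i => x₀ - x i} * S.card ≤ (K + S).card ^ (k + 1) := by
  classical
  set V : Set (Fin k → G) := {v : Fin k → G | ∃ x₀ ∈ (K : Set G), ∃ x : Fin k → G,
        (∀ i, x i ∈ (K : Set G)) ∧ v = fun i => x₀ - x i} with hVdef
  choose x₀ hx₀ x hx hvx using fun v : ↥V => v.2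
  set F : ↥V × ↥(S : Set G) → (Fin (k + 1) → ↥((K + S : Finset G) : Set G)) :=
    fun p => Fin.cons ⟨x₀ p.1 + p.2, by
        exact_mod_cast Finset.add_mem_add (hx₀ p.1) p.2.2⟩
      (fun i => ⟨x p.1 i + p.2, by
        exact_mod_cast Finset.add_mem_add (hx p.1 i) p.2.2⟩) with hF
  have hinj : Function.Injective F := by
    intro p q h
    have h0 : x₀ p.1 + (p.2 : G) = x₀ q.1 + q.2 := by
      have := congrFun h 0
      simpa [hF, Subtype.ext_iff] using this
    have hi : ∀ i : Fin k, x p.1 i + (p.2 : G) = x q.1 i + q.2 := by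
      intro i
      have := congrFun h i.succ
      simpa [hF, Subtype.ext_iff] using this
    have h1 : p.1 = q.1 := by
      have e1 : (p.1 : Fin k → G) = fun i => x₀ p.1 - x p.1 i := hvx p.1
      have e2 : (q.1 : Fin k → G) = fun i => x₀ q.1 - x q.1 i := hvx q.1
      apply Subtype.ext
      rw [e1, e2]
      funext i
      have h2 := congrArg₂ (· - ·) h0 (hi i)
      simpa [add_sub_add_right_eq_sub] using h2
    have h2 : p.2 = q.2 := by
      apply Subtype.ext
      rw [h1] at h0
      exact add_left_cancel h0
    exact Prod.ext h1 h2
  have hcard := Nat.card_le_card_of_injective F hinj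
  have hdom : Nat.card (↥V × ↥(S : Set G)) = Nat.card V * S.card := by
    simp [Nat.card_prod, Nat.card_coe_set_eq, Set.ncard_coe_finset]
  have hcod : Nat.card (Fin (k + 1) → ↥((K + S : Finset G) : Set G)) = (K + S).card ^ (k + 1) := by
    simp [Nat.card_eq_fintype_card, Fintype.card_fun, ← Finset.coe_add, Fintype.card_coe]
  rw [hdom, hcod] at hcard
  exact hcard

theorem stmt2 {G : Type*} [AddCommGroup G] [DecidableEq G]
    (K S : Finset G) (hK : K.Nonempty) (hS : S.Nonempty) (k : ℕ) (hk : 1 ≤ k) :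
    (Nat.card {v : Fin k → G | ∃ x₀ ∈ (K : Set G), ∃ x : Fin k → G,
        (∀ i, x i ∈ (K : Set G)) ∧ v = fun i => x₀ - x i} : ℝ) ^ ((1 : ℝ) / (k + 1))
      * (S.card : ℝ) ^ (1 - (k : ℝ) / (k + 1)) ≤ ((K + S).card : ℝ) := by
  have hc := key K S k
  set N := Nat.card {v : Fin k → G | ∃ x₀ ∈ (K : Set G), ∃ x : Fin k → G,
        (∀ i, x i ∈ (K : Set G)) ∧ v = fun i => x₀ - x i} with hN
  have hkpos : (0 : ℝ) < (k : ℝ) + 1 := by positivity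
  have hexp : 1 - (k : ℝ) / (k + 1) = 1 / (k + 1) := by field_simp; ring
  rw [hexp, ← Real.mul_rpow (by positivity) (by positivity)]
  have h1 : ((N : ℝ) * S.card) ≤ ((K + S).card : ℝ) ^ ((k : ℝ) + 1) := by
    have : ((N * S.card : ℕ) : ℝ) ≤ (((K + S).card ^ (k + 1) : ℕ) : ℝ) := by exact_mod_cast hc
    push_cast at this
    rw [show ((k : ℝ) + 1) = ((k + 1 : ℕ) : ℝ) by push_cast; ring, Real.rpow_natCast]
    exact_mod_cast this
  calc ((N : ℝ) * S.card) ^ ((1 : ℝ) / (k + 1))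
      ≤ (((K + S).card : ℝ) ^ ((k : ℝ) + 1)) ^ ((1 : ℝ) / (k + 1)) :=
        Real.rpow_le_rpow (by positivity) h1 (by positivity)
    _ = ((K + S).card : ℝ) := by
        rw [← Real.rpow_mul (by positivity), mul_one_div, div_self hkpos.ne', Real.rpow_one]
end

section
/- Let G be an abelian group and let K, S ⊂ G be finite nonempty sets. Fix an integer k ≥ 2 and signs ε_2, …, ε_k ∈ {+1, −1}. Then |K + ε_2·K + ε_3·K + ⋯ + ε_k·K|^{1/k} · |S|^{1 − 1/k} ≤ |K + S|, where K + ε_2·K + ⋯ + ε_k·K denotes the set of all sums x_1 + ε_2 x_2 + ⋯ + ε_k x_k with each x_i ∈ K, and |·| denotes cardinality. -/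
open Pointwise

lemma sum_mem_card_nsmul' {G : Type*} [AddCommGroup G] [DecidableEq G]
    {ι : Type*} (s : Finset ι) (f : ι → G) (K : Finset G)
    (h : ∀ i ∈ s, f i ∈ K) : ∑ i ∈ s, f i ∈ s.card • K := by
  induction s using Finset.cons_induction with
  | empty => simp [Finset.mem_zero]
  | cons a s ha ih =>
      rw [Finset.sum_cons, Finset.card_cons, succ_nsmul']
      exact Finset.add_mem_add (h a (Finset.mem_cons_self a s))
        (ih fun i hi => h i (Finset.mem_cons_of_mem hi))

theorem stmt3 {G : Type*} [AddCommGroup G] [DecidableEq G]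
    (K S : Finset G) (hK : K.Nonempty) (hS : S.Nonempty)
    (k : ℕ) (hk : 2 ≤ k) (ε : Fin k → ℤ)
    (hε0 : ε ⟨0, by omega⟩ = 1) (hε : ∀ i, ε i = 1 ∨ ε i = -1) :
    (Nat.card {g : G | ∃ x : Fin k → G, (∀ i, x i ∈ (K : Set G)) ∧
        g = ∑ i, ε i • x i} : ℝ) ^ ((1 : ℝ) / k)
      * (S.card : ℝ) ^ (1 - 1 / (k : ℝ)) ≤ ((K + S).card : ℝ) := by
  classical
  set P : Finset (Fin k) := Finset.univ.filter (fun i => ε i = 1) with hP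
  set m := P.card with hm
  set n := Pᶜ.card with hn
  have hmn : m + n = k := by
    rw [hm, hn, Finset.card_add_card_compl, Fintype.card_fin]
  -- the set is contained in m • K - n • K
  have hsub : {g : G | ∃ x : Fin k → G, (∀ i, x i ∈ (K : Set G)) ∧
      g = ∑ i, ε i • x i} ⊆ ((m • K - n • K : Finset G) : Set G) := by
    rintro g ⟨x, hx, rfl⟩
    have hsplit : ∑ i, ε i • x i = (∑ i ∈ P, x i) - ∑ i ∈ Pᶜ, x i := by
      rw [← Finset.sum_filter_add_sum_filter_not Finset.univ (fun i => ε i = 1)]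
      have h1 : ∑ i ∈ P, ε i • x i = ∑ i ∈ P, x i := by
        refine Finset.sum_congr rfl fun i hi => ?_
        have : ε i = 1 := (Finset.mem_filter.mp hi).2
        simp [this]
      have h2 : ∑ i ∈ Finset.univ.filter (fun i => ¬ ε i = 1), ε i • x i
          = ∑ i ∈ Pᶜ, -(x i) := by
        rw [show Finset.univ.filter (fun i => ¬ ε i = 1) = Pᶜ by
          simp [hP, Finset.compl_filter]]
        refine Finset.sum_congr rfl fun i hi => ?_
        have hne : ¬ ε i = 1 := by
          simpa [hP, Finset.mem_compl, Finset.mem_filter] using hi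
        have : ε i = -1 := (hε i).resolve_left hne
        simp [this]
      rw [h1, h2, Finset.sum_neg_distrib, sub_eq_add_neg]
    rw [hsplit]
    exact Finset.sub_mem_sub (sum_mem_card_nsmul' P x K fun i _ => hx i)
      (sum_mem_card_nsmul' Pᶜ x K fun i _ => hx i)
  have hcard : (Nat.card {g : G | ∃ x : Fin k → G, (∀ i, x i ∈ (K : Set G)) ∧
      g = ∑ i, ε i • x i}) ≤ (m • K - n • K : Finset G).card := by
    have h1 := Nat.card_mono ((m • K - n • K : Finset G)).finite_toSet hsub
    have h2 : Nat.card (((m • K - n • K : Finset G) : Set G)) = (m • K - n • K : Finset G).card := by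
      rw [Nat.card_coe_set_eq, Set.ncard_coe_finset]
    exact h1.trans_eq h2
  -- Plünnecke–Ruzsa
  have hPR := Finset.pluennecke_ruzsa_inequality_nsmul_sub_nsmul_add hS K m n
  rw [hmn] at hPR
  clear_value P m n
  have hs0 : ((S.card : ℚ≥0)) ≠ 0 := by
    exact_mod_cast hS.card_pos.ne'
  have hq : ((m • K - n • K : Finset G).card * S.card ^ (k-1) : ℚ≥0)
      ≤ ((S + K).card : ℚ≥0) ^ k := by
    calc ((m • K - n • K : Finset G).card * S.card ^ (k-1) : ℚ≥0)
        ≤ ((((S + K).card : ℚ≥0) / S.card) ^ k * S.card) * (S.card : ℚ≥0) ^ (k-1) :=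
          mul_le_mul_left hPR _
      _ = ((S + K).card : ℚ≥0) ^ k := by
          have hss : ((S.card : ℚ≥0)) * (S.card : ℚ≥0) ^ (k-1) = (S.card : ℚ≥0) ^ k := by
            rw [← pow_succ']; congr 1; exact Nat.sub_add_cancel (le_trans one_le_two hk)
          rw [div_pow, mul_assoc, hss, div_mul_cancel₀ _ (pow_ne_zero k hs0)]
  have hnat : (m • K - n • K : Finset G).card * S.card ^ (k-1) ≤ (K + S).card ^ k := by
    rw [add_comm K S]; exact_mod_cast hq
  -- take k-th roots
  have hS0 : (0:ℝ) < (S.card : ℝ) := by exact_mod_cast hS.card_pos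
  have hk0 : (0:ℝ) < (k:ℝ) := by positivity
  set r : ℝ := (Nat.card {g : G | ∃ x : Fin k → G, (∀ i, x i ∈ (K : Set G)) ∧
      g = ∑ i, ε i • x i} : ℝ) with hr
  have hr0 : 0 ≤ r := Nat.cast_nonneg _
  have hmain : r * (S.card : ℝ) ^ (k - 1) ≤ ((K + S).card : ℝ) ^ k := by
    calc r * (S.card : ℝ) ^ (k - 1)
        ≤ ((m • K - n • K : Finset G).card : ℝ) * (S.card : ℝ) ^ (k - 1) :=
          mul_le_mul_of_nonneg_right (Nat.cast_le.mpr hcard) (by positivity)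
      _ ≤ ((K + S).card : ℝ) ^ k := by exact_mod_cast hnat
  clear_value r
  have hc0 : (0:ℝ) ≤ ((K + S).card : ℝ) := Nat.cast_nonneg _
  have key : (r * (S.card : ℝ) ^ (k - 1)) ^ ((1:ℝ)/k) ≤ ((K + S).card : ℝ) := by
    calc (r * (S.card : ℝ) ^ (k - 1)) ^ ((1:ℝ)/k)
        ≤ (((K + S).card : ℝ) ^ k) ^ ((1:ℝ)/k) := by
          apply Real.rpow_le_rpow (by positivity) hmain (by positivity)
      _ = ((K + S).card : ℝ) := by
          rw [← Real.rpow_natCast _ k, ← Real.rpow_mul hc0]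
          rw [mul_one_div, div_self hk0.ne', Real.rpow_one]
  refine le_trans (le_of_eq ?_) key
  have hexp : ((k-1:ℕ):ℝ) * ((1:ℝ)/(k:ℝ)) = 1 - 1/(k:ℝ) := by
    rw [Nat.cast_sub (le_trans one_le_two hk), Nat.cast_one, sub_mul, one_mul,
      mul_one_div, div_self hk0.ne']
  rw [Real.mul_rpow hr0 (by positivity), ← Real.rpow_natCast ((S.card:ℝ)) (k-1),
    ← Real.rpow_mul hS0.le, hexp]
end

section
/- For every d ≥ 1 there is a positive constant C_d such that if K ⊂ ℝ^d is compact and S ⊂ ℝ^d is open, then for every positive integer k, m_{dk}({(x_0 − x_1, x_0 − x_2, …, x_0 − x_k) : x_0, …, x_k ∈ K})^{1/(k+1)} · m_d(S)^{1 − k/(k+1)} ≤ C_d · m_d(K + S), where m_n denotes Lebesgue measure on ℝ^n. -/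
open MeasureTheory Set Pointwise

theorem stmt4 (d : ℕ) (hd : 1 ≤ d) :
    ∃ C : ℝ, 0 < C ∧
      ∀ K S : Set (EuclideanSpace ℝ (Fin d)), IsCompact K → IsOpen S →
        ∀ k : ℕ, 1 ≤ k →
          (volume {v : Fin k → EuclideanSpace ℝ (Fin d) |
              ∃ x₀ ∈ K, ∃ x : Fin k → EuclideanSpace ℝ (Fin d),
                (∀ i, x i ∈ K) ∧ v = fun i => x₀ - x i}) ^ ((1 : ℝ) / (k + 1))
            * (volume S) ^ (1 - (k : ℝ) / (k + 1))
            ≤ ENNReal.ofReal C * volume (K + S) := by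
  refine ⟨1, one_pos, fun K S hK hS k hk => ?_⟩
  set D : Set (Fin k → EuclideanSpace ℝ (Fin d)) := {v | ∃ x₀ ∈ K, ∃ x : Fin k → EuclideanSpace ℝ (Fin d),
      (∀ i, x i ∈ K) ∧ v = fun i => x₀ - x i} with hDdef
  -- D is compact, hence measurable
  have hDeq : D = (fun p : EuclideanSpace ℝ (Fin d) × (Fin k → EuclideanSpace ℝ (Fin d)) => fun i => p.1 - p.2 i) ''
      (K ×ˢ Set.univ.pi fun _ => K) := by
    ext v
    constructor
    · rintro ⟨x₀, hx₀, x, hx, rfl⟩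
      exact ⟨(x₀, x), ⟨hx₀, fun i _ => hx i⟩, rfl⟩
    · rintro ⟨⟨x₀, x⟩, ⟨hx₀, hx⟩, rfl⟩
      exact ⟨x₀, hx₀, x, fun i => hx i (mem_univ i), rfl⟩
  have hDcomp : IsCompact D := by
    rw [hDeq]
    have hc : Continuous fun p : EuclideanSpace ℝ (Fin d) × (Fin k → EuclideanSpace ℝ (Fin d)) =>
        fun i => p.1 - p.2 i := by fun_prop
    exact (hK.prod (isCompact_univ_pi fun _ => hK)).image hc
  have hD : MeasurableSet D := hDcomp.measurableSet
  -- K + S is open, hence measurable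
  have hKS : IsOpen (K + S) := hS.add_left
  -- The shear map
  set Ψ : (Fin k → EuclideanSpace ℝ (Fin d)) × EuclideanSpace ℝ (Fin d) → EuclideanSpace ℝ (Fin d) × (Fin k → EuclideanSpace ℝ (Fin d)) :=
    fun p => (p.2, fun i => p.2 - p.1 i) with hΨdef
  haveI : (volume : Measure (Fin k → EuclideanSpace ℝ (Fin d))).IsNegInvariant := Measure.pi.isNegInvariant _
  have hΨ : MeasurePreserving Ψ volume volume := by
    have h1 : MeasurePreserving (fun p : EuclideanSpace ℝ (Fin d) × (Fin k → EuclideanSpace ℝ (Fin d)) => (p.1, fun i => p.1 - p.2 i))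
        ((volume : Measure (EuclideanSpace ℝ (Fin d))).prod
          (volume : Measure (Fin k → EuclideanSpace ℝ (Fin d))))
        ((volume : Measure (EuclideanSpace ℝ (Fin d))).prod
          (volume : Measure (Fin k → EuclideanSpace ℝ (Fin d)))) := by
      refine MeasurePreserving.skew_product
        (g := fun y v => fun i => y - v i)
        (μc := (volume : Measure (Fin k → EuclideanSpace ℝ (Fin d))))
        (μd := (volume : Measure (Fin k → EuclideanSpace ℝ (Fin d))))
        (MeasurePreserving.id (volume : Measure (EuclideanSpace ℝ (Fin d))))
        ?_ (ae_of_all _ fun y => ?_)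
      · exact measurable_pi_lambda _ fun i =>
          measurable_fst.sub ((measurable_pi_apply i).comp measurable_snd)
      · exact (Measure.measurePreserving_sub_left (volume : Measure (Fin k → EuclideanSpace ℝ (Fin d)))
          (fun _ => y)).map_eq
    exact h1.comp Measure.measurePreserving_swap
  set T : Set (EuclideanSpace ℝ (Fin d) × (Fin k → EuclideanSpace ℝ (Fin d))) := (K + S) ×ˢ Set.univ.pi fun _ => (K + S) with hTdef
  have hT : MeasurableSet T :=
    hKS.measurableSet.prod (MeasurableSet.univ_pi fun _ => hKS.measurableSet)
  set A : Set ((Fin k → EuclideanSpace ℝ (Fin d)) × EuclideanSpace ℝ (Fin d)) := Ψ ⁻¹' T with hAdef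
  have hA : MeasurableSet A := hΨ.measurable hT
  -- volume A = volume (K+S) ^ (k+1)
  have hvolA : volume A = volume (K + S) ^ (k + 1) := by
    rw [hAdef, hΨ.measure_preimage hT.nullMeasurableSet, hTdef, Measure.volume_eq_prod,
      Measure.prod_prod, volume_pi_pi, Finset.prod_const, Finset.card_univ, Fintype.card_fin,
      pow_succ, mul_comm]
  -- lower bound for volume A
  have hlow : volume D * volume S ≤ volume A := by
    have := Measure.prod_apply (μ := (volume : Measure (Fin k → EuclideanSpace ℝ (Fin d))))
      (ν := (volume : Measure (EuclideanSpace ℝ (Fin d)))) hA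
    rw [Measure.volume_eq_prod, this]
    calc volume D * volume S = ∫⁻ v, D.indicator (fun _ => volume S) v := by
          rw [lintegral_indicator_const hD, mul_comm]
      _ ≤ ∫⁻ v, volume (Prod.mk v ⁻¹' A) := by
          refine lintegral_mono fun v => ?_
          by_cases hv : v ∈ D
          · rw [Set.indicator_of_mem hv]
            obtain ⟨x₀, hx₀, x, hx, rfl⟩ := hv
            have hsub : (fun y => y + -x₀) ⁻¹' S ⊆
                Prod.mk (fun i => x₀ - x i) ⁻¹' A := by
              intro y hy
              simp only [hAdef, hΨdef, hTdef, mem_preimage, mem_prod, mem_univ_pi]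
              constructor
              · have : y = x₀ + (y + -x₀) := by abel
                rw [this]
                exact Set.add_mem_add hx₀ hy
              · intro i
                have : y - (x₀ - x i) = x i + (y + -x₀) := by abel
                rw [this]
                exact Set.add_mem_add (hx i) hy
            calc volume S = volume ((fun y => y + -x₀) ⁻¹' S) :=
                  (measure_preimage_add_right volume (-x₀) S).symm
              _ ≤ _ := measure_mono hsub
          · rw [Set.indicator_of_notMem hv]
            exact zero_le
  have hab : volume D * volume S ≤ volume (K + S) ^ (k + 1) := hvolA ▸ hlow
  -- now the rpow algebra
  have hkR : ((k : ℝ) + 1) ≠ 0 := by positivity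
  have hexp : (1 : ℝ) - (k : ℝ) / (k + 1) = 1 / (k + 1) := by field_simp; ring
  rw [hexp, ENNReal.ofReal_one, one_mul]
  have hr : (0 : ℝ) ≤ 1 / ((k : ℝ) + 1) := by positivity
  calc volume D ^ ((1 : ℝ) / (k + 1)) * volume S ^ ((1 : ℝ) / (k + 1))
      = (volume D * volume S) ^ ((1 : ℝ) / (k + 1)) :=
        (ENNReal.mul_rpow_of_nonneg _ _ hr).symm
    _ ≤ (volume (K + S) ^ (k + 1)) ^ ((1 : ℝ) / (k + 1)) :=
        ENNReal.rpow_le_rpow hab hr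
    _ = volume (K + S) := by
        rw [← ENNReal.rpow_natCast (volume (K + S)) (k + 1), ← ENNReal.rpow_mul,
          show ((k + 1 : ℕ) : ℝ) * (1 / ((k : ℝ) + 1)) = 1 by push_cast; field_simp]
        exact ENNReal.rpow_one _
end

section
/- For every d ≥ 1 there is a positive constant C_d such that if K ⊂ ℝ^d is compact and S ⊂ ℝ^d is open, then for every integer k ≥ 2 and every choice of signs ε_2, …, ε_k ∈ {+1, −1}, m_d(K + ε_2·K + ⋯ + ε_k·K)^{1/k} · m_d(S)^{1 − 1/k} ≤ C_d · m_d(K + S), where K + ε_2·K + ⋯ + ε_k·K denotes the set of sums x_1 + ε_2 x_2 + ⋯ + ε_k x_k with each x_i ∈ K, and m_d denotes Lebesgue measure on ℝ^d. -/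
open MeasureTheory Set Pointwise Metric
open scoped ENNReal NNReal

section Aux

lemma floor_coord' {δ : ℝ} (hδ : 0 < δ) (t : ℝ) (z : ℤ) :
    t ∈ Set.Ico (δ * z) (δ * z + δ) ↔ ⌊t / δ⌋ = z := by
  rw [Int.floor_eq_iff, le_div_iff₀ hδ, div_lt_iff₀ hδ, Set.mem_Ico]
  constructor <;> intro h <;> constructor <;> nlinarith [h.1, h.2]

/-- A coordinate box in Euclidean space with lower corner `a` and side length `s`. -/
def eBox {d : ℕ} (a : Fin d → ℝ) (s : ℝ) : Set (EuclideanSpace ℝ (Fin d)) :=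
  {x | ∀ i, x i ∈ Set.Ico (a i) (a i + s)}

lemma eBox_eq_preimage {d : ℕ} (a : Fin d → ℝ) (s : ℝ) :
    eBox a s = (MeasurableEquiv.toLp 2 (Fin d → ℝ)).symm ⁻¹'
      (Set.univ.pi fun i => Set.Ico (a i) (a i + s)) := by
  ext x; simp [eBox, Set.mem_pi]

lemma eBox_measurable {d : ℕ} (a : Fin d → ℝ) (s : ℝ) : MeasurableSet (eBox a s) := by
  rw [eBox_eq_preimage]
  exact (MeasurableEquiv.toLp 2 (Fin d → ℝ)).symm.measurable
    (MeasurableSet.univ_pi fun i => measurableSet_Ico)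

lemma volume_eBox {d : ℕ} (a : Fin d → ℝ) (s : ℝ) :
    volume (eBox a s) = ENNReal.ofReal s ^ d := by
  rw [eBox_eq_preimage, (EuclideanSpace.volume_preserving_symm_measurableEquiv_toLp (Fin d)).measure_preimage
    (MeasurableSet.univ_pi fun i => measurableSet_Ico).nullMeasurableSet]
  rw [volume_pi_pi]
  simp [Real.volume_Ico]

/-- The lattice cube of side `δ` indexed by `z : Fin d → ℤ`. -/
def eCube {d : ℕ} (δ : ℝ) (z : Fin d → ℤ) : Set (EuclideanSpace ℝ (Fin d)) :=
  eBox (fun i => δ * z i) δ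

lemma mem_eCube_iff {d : ℕ} {δ : ℝ} (hδ : 0 < δ) (z : Fin d → ℤ)
    (x : EuclideanSpace ℝ (Fin d)) :
    x ∈ eCube δ z ↔ ∀ i, ⌊x i / δ⌋ = z i := by
  unfold eCube eBox
  simp only [Set.mem_setOf_eq]
  exact forall_congr' fun i => floor_coord' hδ _ _

lemma self_mem_eCube {d : ℕ} {δ : ℝ} (hδ : 0 < δ) (x : EuclideanSpace ℝ (Fin d)) :
    x ∈ eCube δ (fun i => ⌊x i / δ⌋) :=
  (mem_eCube_iff hδ _ x).2 fun _ => rfl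

lemma eCube_pairwise_disjoint {d : ℕ} {δ : ℝ} (hδ : 0 < δ) (F : Set (Fin d → ℤ)) :
    F.PairwiseDisjoint (eCube δ) := by
  intro z _ z' _ hne
  refine Set.disjoint_left.2 fun x hx hx' => hne ?_
  funext i
  rw [← (mem_eCube_iff hδ z x).1 hx i, (mem_eCube_iff hδ z' x).1 hx' i]

/-- Lower volume bound from disjoint cubes inside `T`. -/
lemma card_mul_le_volume {d : ℕ} {δ : ℝ} (hδ : 0 < δ) (F : Finset (Fin d → ℤ))
    (T : Set (EuclideanSpace ℝ (Fin d))) (h : ∀ z ∈ F, eCube δ z ⊆ T) :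
    (F.card : ℝ≥0∞) * ENNReal.ofReal δ ^ d ≤ volume T := by
  calc (F.card : ℝ≥0∞) * ENNReal.ofReal δ ^ d
      = ∑ z ∈ F, volume (eCube δ z) := by
        simp [eCube, volume_eBox, Finset.sum_const, nsmul_eq_mul]
    _ = volume (⋃ z ∈ F, eCube δ z) := by
        rw [measure_biUnion_finset (eCube_pairwise_disjoint hδ _) fun z _ => eBox_measurable _ _]
    _ ≤ volume T := measure_mono (Set.iUnion₂_subset h)

/-- Upper volume bound from boxes covering `T`. -/
lemma volume_le_card_mul {d : ℕ} {ι : Type*} (F : Finset ι) (c : ι → Fin d → ℝ) (s : ℝ)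
    (T : Set (EuclideanSpace ℝ (Fin d))) (h : T ⊆ ⋃ z ∈ F, eBox (c z) s) :
    volume T ≤ (F.card : ℝ≥0∞) * ENNReal.ofReal s ^ d := by
  calc volume T ≤ ∑ z ∈ F, volume (eBox (c z) s) :=
        (measure_mono h).trans (measure_biUnion_finset_le F _)
    _ = (F.card : ℝ≥0∞) * ENNReal.ofReal s ^ d := by
        simp [volume_eBox, Finset.sum_const, nsmul_eq_mul]

lemma abs_coord_le_norm {d : ℕ} (x : EuclideanSpace ℝ (Fin d)) (i : Fin d) : |x i| ≤ ‖x‖ := by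
  rw [EuclideanSpace.norm_eq]
  have h1 : |x i| = Real.sqrt (‖x i‖ ^ 2) := by
    rw [Real.sqrt_sq_eq_abs]; simp
  rw [h1]
  apply Real.sqrt_le_sqrt
  exact Finset.single_le_sum (f := fun j => ‖x j‖ ^ 2) (fun j _ => by positivity)
    (Finset.mem_univ i)

lemma finite_index {d : ℕ} {δ : ℝ} (hδ : 0 < δ) {C : Set (EuclideanSpace ℝ (Fin d))}
    (hC : Bornology.IsBounded C) : {z : Fin d → ℤ | (eCube δ z ∩ C).Nonempty}.Finite := by
  obtain ⟨R, hR⟩ := isBounded_iff_forall_norm_le.1 hC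
  apply Set.Finite.subset (Set.Finite.pi fun i : Fin d => Set.finite_Icc ⌈(-R - δ) / δ⌉ ⌊R / δ⌋)
  rintro z ⟨x, hx, hxC⟩
  intro i _
  have hxi : |x i| ≤ R := (abs_coord_le_norm x i).trans (hR x hxC)
  have h1 : δ * z i ≤ x i := (hx i).1
  have h2 : x i < δ * z i + δ := (hx i).2
  have h3 := abs_le.1 hxi
  constructor
  · rw [Int.ceil_le, div_le_iff₀ hδ]
    nlinarith [h3.1]
  · rw [Int.le_floor, le_div_iff₀ hδ]
    nlinarith [h3.2]

lemma sum_mem_nsmul' {G : Type*} [AddCommGroup G] [DecidableEq G] {ι : Type*} (B : Finset G)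
    (P : Finset ι) (f : ι → G) (h : ∀ i ∈ P, f i ∈ B) : ∑ i ∈ P, f i ∈ P.card • B := by
  classical
  induction P using Finset.cons_induction with
  | empty => simp [Finset.mem_zero]
  | cons a P ha ih =>
      rw [Finset.sum_cons, Finset.card_cons, succ_nsmul, add_comm (f a) _]
      exact Finset.add_mem_add (ih fun i hi => h i (Finset.mem_cons_of_mem hi))
        (h a (Finset.mem_cons_self a P))

lemma pluennecke_nat {G : Type*} [AddCommGroup G] [DecidableEq G] {A B : Finset G}
    (hA : A.Nonempty) (m n k : ℕ) (hmn : m + n = k) (hk1 : 1 ≤ k) :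
    (m • B - n • B).card * A.card ^ (k - 1) ≤ (A + B).card ^ k := by
  have h := Finset.pluennecke_ruzsa_inequality_nsmul_sub_nsmul_add hA B m n
  rw [hmn] at h
  have hA0 : (A.card : ℚ≥0) ≠ 0 := by simpa using hA.card_ne_zero
  rw [← Nat.cast_le (α := ℚ≥0)]
  push_cast
  calc ((m • B - n • B).card : ℚ≥0) * (A.card : ℚ≥0) ^ (k - 1)
      ≤ (((A + B).card / A.card : ℚ≥0) ^ k * A.card) * (A.card : ℚ≥0) ^ (k - 1) := by gcongr
    _ = ((A + B).card : ℚ≥0) ^ k := by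
        rw [div_pow, mul_assoc, ← pow_succ' (A.card : ℚ≥0) (k - 1),
          Nat.sub_add_cancel hk1, div_mul_cancel₀]
        exact pow_ne_zero _ hA0

lemma two_mul_le_two_pow' {k : ℕ} (hk : 2 ≤ k) : 2 * k ≤ 2 ^ k := by
  have := Nat.lt_two_pow_self (n := k - 1)
  have h2 : 2 ^ (k - 1) * 2 = 2 ^ k := by
    rw [← pow_succ, Nat.sub_add_cancel (by omega)]
  omega

lemma final_calc {X Y M : ℝ≥0∞} {d k : ℕ} (hk : 2 ≤ k)
    (h : X * Y ^ (k - 1) ≤ (2 * k : ℝ≥0∞) ^ d * M ^ k) :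
    X ^ ((1 : ℝ) / k) * Y ^ (1 - 1 / (k : ℝ)) ≤ 2 ^ d * M := by
  have hk0 : (k : ℝ) ≠ 0 := by positivity
  have h1 : Y ^ (1 - 1 / (k : ℝ)) = (Y ^ (k - 1 : ℕ)) ^ ((1 : ℝ) / k) := by
    rw [← ENNReal.rpow_natCast Y (k - 1), ← ENNReal.rpow_mul]
    congr 1
    rw [Nat.cast_sub (by omega : 1 ≤ k)]
    push_cast
    field_simp
  rw [h1, ← ENNReal.mul_rpow_of_nonneg _ _ (by positivity)]
  refine (ENNReal.rpow_le_rpow h (by positivity)).trans ?_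
  rw [ENNReal.mul_rpow_of_nonneg _ _ (by positivity)]
  have h3 : ∀ Z : ℝ≥0∞, (Z ^ k) ^ ((1 : ℝ) / k) = Z := by
    intro Z
    rw [← ENNReal.rpow_natCast Z k, ← ENNReal.rpow_mul, mul_one_div_cancel hk0,
      ENNReal.rpow_one]
  have h4 : ((2 * k : ℝ≥0∞) ^ d) ^ ((1 : ℝ) / k) ≤ 2 ^ d := by
    have h5 : (2 * k : ℝ≥0∞) ≤ 2 ^ k := by
      have := two_mul_le_two_pow' hk
      exact_mod_cast Nat.cast_le.2 this
    calc ((2 * k : ℝ≥0∞) ^ d) ^ ((1 : ℝ) / k)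
        ≤ ((2 ^ k : ℝ≥0∞) ^ d) ^ ((1 : ℝ) / k) :=
          ENNReal.rpow_le_rpow (by gcongr) (by positivity)
      _ = ((2 ^ d : ℝ≥0∞) ^ k) ^ ((1 : ℝ) / k) := by rw [← pow_mul, ← pow_mul, Nat.mul_comm]
      _ = 2 ^ d := h3 _
  rw [h3 M]
  exact mul_le_mul_left h4 M

end Aux

set_option maxHeartbeats 2000000 in
theorem stmt5 (d : ℕ) (hd : 1 ≤ d) :
    ∃ C : ℝ, 0 < C ∧
      ∀ K S : Set (EuclideanSpace ℝ (Fin d)), IsCompact K → IsOpen S →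
        ∀ k : ℕ, ∀ hk : 2 ≤ k, ∀ ε : Fin k → ℤ,
          ε ⟨0, by omega⟩ = 1 → (∀ i, ε i = 1 ∨ ε i = -1) →
            (volume {g : EuclideanSpace ℝ (Fin d) |
                ∃ x : Fin k → EuclideanSpace ℝ (Fin d),
                  (∀ i, x i ∈ K) ∧ g = ∑ i, ε i • x i}) ^ ((1 : ℝ) / k)
              * (volume S) ^ (1 - 1 / (k : ℝ))
              ≤ ENNReal.ofReal C * volume (K + S) := by
  refine ⟨2 ^ d, by positivity, ?_⟩
  intro K S hK hS k hk ε hε0 hεpm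
  have hkR : (1:ℝ) < k := by exact_mod_cast (by omega : 1 < k)
  have hp : 0 < 1 - 1 / (k : ℝ) := by
    have : 1 / (k:ℝ) < 1 := by
      rw [div_lt_one (by linarith)]; exact hkR
    linarith
  have hofReal : ENNReal.ofReal ((2:ℝ) ^ d) = (2 : ℝ≥0∞) ^ d := by
    rw [ENNReal.ofReal_pow (by norm_num)]
    norm_num
  rw [hofReal]
  set SigSet := {g : EuclideanSpace ℝ (Fin d) |
      ∃ x : Fin k → EuclideanSpace ℝ (Fin d),
        (∀ i, x i ∈ K) ∧ g = ∑ i, ε i • x i} with hSigDef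
  by_cases hM : volume (K + S) = ∞
  · rw [hM, ENNReal.mul_top (by positivity)]
    exact le_top
  rcases K.eq_empty_or_nonempty with hKe | hKne
  · have hempty : SigSet = ∅ := by
      ext g
      simp only [hSigDef, Set.mem_setOf_eq, Set.mem_empty_iff_false, iff_false]
      rintro ⟨x, hx, -⟩
      exact absurd (hx ⟨0, by omega⟩) (by simp [hKe])
    rw [hempty, measure_empty, ENNReal.zero_rpow_of_pos (by positivity), zero_mul]
    exact zero_le
  -- main case
  have key : ∀ C : Set (EuclideanSpace ℝ (Fin d)), C ⊆ S → IsCompact C →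
      (volume SigSet) ^ ((1:ℝ)/k) * (volume C) ^ (1 - 1/(k:ℝ)) ≤ 2 ^ d * volume (K + S) := by
    intro C hCS hCc
    rcases C.eq_empty_or_nonempty with hCe | hCne
    · rw [hCe, measure_empty, ENNReal.zero_rpow_of_pos hp, mul_zero]
      exact zero_le
    obtain ⟨r, hr, hthick⟩ := hCc.exists_thickening_subset_open hS hCS
    have hdR : (1:ℝ) ≤ d := by exact_mod_cast hd
    set δ := r / (3 * d) with hδdef
    have hδ : 0 < δ := by positivity
    apply final_calc hk
    -- Finsets of cube indices
    have hBfin := finite_index hδ hK.isBounded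
    have hAfin := finite_index hδ hCc.isBounded
    set A := hAfin.toFinset with hAdef
    set B := hBfin.toFinset with hBdef
    have hAne : A.Nonempty := by
      obtain ⟨c, hc⟩ := hCne
      exact ⟨fun i => ⌊c i / δ⌋, by
        rw [hAdef, Set.Finite.mem_toFinset]
        exact ⟨c, self_mem_eCube hδ c, hc⟩⟩
    set e := ENNReal.ofReal δ with hedef
    -- L4 : volume C ≤ |A| e^d
    have hC_le : volume C ≤ (A.card : ℝ≥0∞) * e ^ d := by
      apply volume_le_card_mul A (fun z i => δ * z i) δ C
      intro c hc
      refine Set.mem_iUnion₂.2 ⟨fun i => ⌊c i / δ⌋, ?_, self_mem_eCube hδ c⟩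
      rw [hAdef, Set.Finite.mem_toFinset]
      exact ⟨c, self_mem_eCube hδ c, hc⟩
    -- L5 : |A + B| e^d ≤ volume (K + S)
    have hAB_le : ((A + B).card : ℝ≥0∞) * e ^ d ≤ volume (K + S) := by
      apply card_mul_le_volume hδ
      intro w hw
      obtain ⟨a, ha, b, hb, rfl⟩ := Finset.mem_add.1 hw
      rw [hAdef, Set.Finite.mem_toFinset] at ha
      rw [hBdef, Set.Finite.mem_toFinset] at hb
      obtain ⟨c, hcc, hcC⟩ := ha
      obtain ⟨y, hyc, hyK⟩ := hb
      intro x hx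
      have hxy : x - y ∈ S := by
        apply hthick
        rw [mem_thickening_iff]
        refine ⟨c, hcC, ?_⟩
        have hcoord : ∀ i, dist ((x - y) i) (c i) ≤ 2 * δ := by
          intro i
          have e1 : δ * ((a + b) i : ℤ) ≤ x i := (hx i).1
          have e2 : x i < δ * ((a + b) i : ℤ) + δ := (hx i).2
          have e3 : δ * (b i) ≤ y i := (hyc i).1
          have e4 : y i < δ * (b i) + δ := (hyc i).2
          have e5 : δ * (a i) ≤ c i := (hcc i).1
          have e6 : c i < δ * (a i) + δ := (hcc i).2
          have hab : (((a + b) i : ℤ) : ℝ) = (a i : ℝ) + (b i : ℝ) := by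
            rw [Pi.add_apply]
            push_cast
            ring
          rw [hab] at e1 e2
          have hsub : (x - y) i = x i - y i := rfl
          rw [hsub, Real.dist_eq, abs_le]
          constructor <;> nlinarith
        have hd2 : dist (x - y) c ≤ 2 * d * δ := by
          rw [EuclideanSpace.dist_eq]
          have hsum : ∑ i, dist ((x - y) i) (c i) ^ 2 ≤ (2 * d * δ) ^ 2 := by
            calc ∑ i, dist ((x - y) i) (c i) ^ 2
                ≤ ∑ _i : Fin d, (2 * δ) ^ 2 := by
                  apply Finset.sum_le_sum
                  intro i _
                  have := hcoord i
                  nlinarith [dist_nonneg (x := (x - y) i) (y := c i)]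
              _ = d * (2 * δ) ^ 2 := by
                  rw [Finset.sum_const]
                  simp [nsmul_eq_mul]
              _ ≤ (2 * d * δ) ^ 2 := by nlinarith
          calc Real.sqrt (∑ i, dist ((x - y) i) (c i) ^ 2)
              ≤ Real.sqrt ((2 * d * δ) ^ 2) := Real.sqrt_le_sqrt hsum
            _ = 2 * d * δ := Real.sqrt_sq (by positivity)
        calc dist (x - y) c ≤ 2 * d * δ := hd2
          _ < r := by
              have hd0 : (0:ℝ) < (d:ℝ) := by linarith
              rw [hδdef, show 2 * (d:ℝ) * (r / (3 * d)) = (2/3) * r by field_simp]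
              linarith
      exact Set.mem_add.2 ⟨y, hyK, x - y, hxy, by abel⟩
    -- L6 : volume SigSet ≤ |D| (2kδ)^d
    classical
    set P := Finset.univ.filter (fun i : Fin k => ε i = 1) with hPdef
    set N := Finset.univ.filter (fun i : Fin k => ¬ ε i = 1) with hNdef
    have hmn : P.card + N.card = k := by
      rw [hPdef, hNdef, Finset.card_filter_add_card_filter_not]
      simp
    set D := P.card • B - N.card • B with hDdef
    have hSig_le : volume SigSet ≤ (D.card : ℝ≥0∞) * ENNReal.ofReal (2 * k * δ) ^ d := by
      apply volume_le_card_mul D (fun w j => δ * w j - k * δ) (2 * k * δ) SigSet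
      rintro g ⟨x, hxK, rfl⟩
      set z : Fin k → (Fin d → ℤ) := fun i j => ⌊x i j / δ⌋ with hzdef
      have hz : ∀ i, z i ∈ B := by
        intro i
        rw [hBdef, Set.Finite.mem_toFinset]
        exact ⟨x i, self_mem_eCube hδ (x i), hxK i⟩
      set w := ∑ i, ε i • z i with hwdef
      have hwD : w ∈ D := by
        have hsplit : w = ∑ i ∈ P, z i - ∑ i ∈ N, z i := by
          rw [hwdef, ← Finset.sum_filter_add_sum_filter_not Finset.univ
            (fun i : Fin k => ε i = 1) (fun i => ε i • z i)]
          have hP : ∑ i ∈ P, ε i • z i = ∑ i ∈ P, z i := by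
            apply Finset.sum_congr rfl
            intro i hi
            rw [hPdef, Finset.mem_filter] at hi
            rw [hi.2, one_smul]
          have hN : ∑ i ∈ N, ε i • z i = -∑ i ∈ N, z i := by
            rw [← Finset.sum_neg_distrib]
            apply Finset.sum_congr rfl
            intro i hi
            rw [hNdef, Finset.mem_filter] at hi
            rcases hεpm i with h1 | h1
            · exact absurd h1 hi.2
            · rw [h1, neg_smul, one_smul]
          rw [hP, hN]
          abel
        rw [hsplit, hDdef]
        exact Finset.sub_mem_sub (sum_mem_nsmul' B P z fun i _ => hz i)
          (sum_mem_nsmul' B N z fun i _ => hz i)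
      refine Set.mem_iUnion₂.2 ⟨w, hwD, ?_⟩
      intro j
      have hgj : (∑ i, ε i • x i) j = ∑ i, (ε i : ℝ) * x i j := by
        rw [WithLp.ofLp_sum, Finset.sum_apply]
        refine Finset.sum_congr rfl fun i _ => ?_
        rw [WithLp.ofLp_smul, Pi.smul_apply, zsmul_eq_mul]
      have hwj : ((w j : ℤ) : ℝ) = ∑ i, (ε i : ℝ) * (z i j : ℝ) := by
        rw [hwdef, Finset.sum_apply]
        push_cast
        refine Finset.sum_congr rfl fun i _ => ?_
        rw [Pi.smul_apply, smul_eq_mul]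
        push_cast
        ring
      have hbound : |(∑ i, ε i • x i) j - δ * (w j : ℤ)| < k * δ := by
        rw [hgj]
        have hrw : ∑ i, (ε i : ℝ) * x i j - δ * ((w j : ℤ) : ℝ)
            = ∑ i, (ε i : ℝ) * (x i j - δ * (z i j : ℝ)) := by
          rw [hwj, Finset.mul_sum, ← Finset.sum_sub_distrib]
          refine Finset.sum_congr rfl fun i _ => by ring
        rw [hrw]
        have hne : (Finset.univ : Finset (Fin k)).Nonempty := by
          have : Nonempty (Fin k) := ⟨⟨0, by omega⟩⟩
          exact Finset.univ_nonempty
        calc |∑ i, (ε i : ℝ) * (x i j - δ * (z i j : ℝ))|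
            ≤ ∑ i, |(ε i : ℝ) * (x i j - δ * (z i j : ℝ))| := Finset.abs_sum_le_sum_abs _ _
          _ < ∑ _i : Fin k, δ := by
              apply Finset.sum_lt_sum_of_nonempty hne
              intro i _
              have hmem := self_mem_eCube hδ (x i)
              have e1 : δ * (z i j : ℝ) ≤ x i j := (hmem j).1
              have e2 : x i j < δ * (z i j : ℝ) + δ := (hmem j).2
              have heps : |(ε i : ℝ)| = 1 := by
                rcases hεpm i with h1 | h1 <;> rw [h1] <;> norm_num
              rw [abs_mul, heps, one_mul, abs_lt]
              constructor <;> nlinarith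
          _ = k * δ := by
              rw [Finset.sum_const]
              simp [nsmul_eq_mul]
      rw [abs_lt] at hbound
      refine ⟨?_, ?_⟩
      · show δ * ((w j : ℤ) : ℝ) - k * δ ≤ (∑ i, ε i • x i) j
        nlinarith [hbound.1]
      · show (∑ i, ε i • x i) j < δ * ((w j : ℤ) : ℝ) - k * δ + 2 * k * δ
        nlinarith [hbound.2]
    -- Plünnecke
    have hPl := pluennecke_nat (B := B) hAne P.card N.card k hmn (by omega)
    rw [← hDdef] at hPl
    have hDcast : (D.card : ℝ≥0∞) * (A.card : ℝ≥0∞) ^ (k - 1) ≤ ((A + B).card : ℝ≥0∞) ^ k := by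
      exact_mod_cast Nat.cast_le.2 hPl
    have h2ke : ENNReal.ofReal (2 * k * δ) = (2 * (k : ℝ≥0∞)) * e := by
      rw [ENNReal.ofReal_mul (by positivity), hedef]
      congr 1
      rw [show (2 * (k:ℝ)) = ((2 * k : ℕ) : ℝ) by push_cast; ring, ENNReal.ofReal_natCast]
      push_cast
      ring
    rw [h2ke] at hSig_le
    calc volume SigSet * (volume C) ^ (k - 1)
        ≤ ((D.card : ℝ≥0∞) * ((2 * (k : ℝ≥0∞)) * e) ^ d)
            * ((A.card : ℝ≥0∞) * e ^ d) ^ (k - 1) := by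
          exact mul_le_mul' hSig_le (by gcongr)
      _ = (2 * (k : ℝ≥0∞)) ^ d
            * (((D.card : ℝ≥0∞) * (A.card : ℝ≥0∞) ^ (k - 1)) * (e ^ d * (e ^ d) ^ (k - 1))) := by
          rw [mul_pow, mul_pow]
          ring
      _ = (2 * (k : ℝ≥0∞)) ^ d
            * (((D.card : ℝ≥0∞) * (A.card : ℝ≥0∞) ^ (k - 1)) * (e ^ d) ^ k) := by
          rw [← pow_succ' (e ^ d) (k - 1), Nat.sub_add_cancel (by omega)]
      _ ≤ (2 * (k : ℝ≥0∞)) ^ d * ((((A + B).card : ℝ≥0∞)) ^ k * (e ^ d) ^ k) := by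
          gcongr
      _ = (2 * (k : ℝ≥0∞)) ^ d * (((A + B).card : ℝ≥0∞) * e ^ d) ^ k := by
          rw [mul_pow ((A + B).card : ℝ≥0∞) (e ^ d) k]
      _ ≤ (2 * (k : ℝ≥0∞)) ^ d * (volume (K + S)) ^ k := by
          gcongr
  -- conclude by inner regularity of `volume` on the open set `S`
  have hreg := hS.measure_eq_iSup_isCompact volume
  have hsup : (volume S) ^ (1 - 1/(k:ℝ))
      = ⨆ (C : Set (EuclideanSpace ℝ (Fin d))) (_ : C ⊆ S) (_ : IsCompact C),
          (volume C) ^ (1 - 1/(k:ℝ)) := by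
    rw [hreg]
    rw [show ∀ x : ℝ≥0∞, x ^ (1 - 1/(k:ℝ)) = ENNReal.orderIsoRpow _ hp x from fun x => by
      simp [ENNReal.orderIsoRpow]]
    rw [OrderIso.map_iSup]
    refine iSup_congr fun C => ?_
    rw [OrderIso.map_iSup]
    refine iSup_congr fun h1 => ?_
    rw [OrderIso.map_iSup]
    exact iSup_congr fun h2 => by simp [ENNReal.orderIsoRpow]
  rw [hsup]
  simp only [ENNReal.mul_iSup]
  exact iSup_le fun C => iSup_le fun hCS => iSup_le fun hCc => key C hCS hCc
end

section
/- Let d ≥ 1 and let K ⊂ ℝ^d be a nonempty compact set satisfying K = ⋃_{j=0}^J φ_j(K), where φ_j(x) = r·x + b_j for a common ratio r ∈ (0,1) and points b_0, …, b_J ∈ ℝ^d whose convex hull has nonempty interior. If k is a positive integer with k + 1 ≥ d/r, then the k-fold sumset k·K = K + K + ⋯ + K (k summands) has nonempty interior in ℝ^d. -/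
open Set Pointwise

/-- The `k`-fold iterated sumset `A + A + ⋯ + A` (`k` summands). -/
def kSum {M : Type*} [AddCommMonoid M] (k : ℕ) (A : Set M) : Set M :=
  {x | ∃ f : Fin k → M, (∀ i, f i ∈ A) ∧ x = ∑ i, f i}

lemma exists_sub_mult {ι : Type*} [DecidableEq ι] (s : Finset ι) (g : ι → ℕ) (k : ℕ)
    (h : k ≤ ∑ i ∈ s, g i) : ∃ m : ι → ℕ, (∀ i, m i ≤ g i) ∧ ∑ i ∈ s, m i = k := by
  induction k with
  | zero => exact ⟨fun _ => 0, fun _ => Nat.zero_le _, by simp⟩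
  | succ k ih =>
    obtain ⟨m, hm, hsum⟩ := ih (Nat.le_of_succ_le h)
    have hex : ∃ i ∈ s, m i < g i := by
      by_contra hcon
      push_neg at hcon
      have : ∑ i ∈ s, g i ≤ ∑ i ∈ s, m i := Finset.sum_le_sum hcon
      omega
    obtain ⟨i, his, hi⟩ := hex
    refine ⟨Function.update m i (m i + 1), fun j => ?_, ?_⟩
    · rcases eq_or_ne j i with rfl | hne
      · simpa using hi
      · simp [Function.update_of_ne hne, hm j]
    · rw [Finset.sum_update_of_mem his, Finset.sdiff_singleton_eq_erase]
      rw [← Finset.add_sum_erase s m his] at hsum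
      omega

lemma multiset_sum_mem_kSum {M : Type*} [AddCommMonoid M] {A : Set M} {k : ℕ} (T : Multiset M)
    (hcard : Multiset.card T = k) (hmem : ∀ x ∈ T, x ∈ A) : T.sum ∈ kSum k A := by
  have hl : (T.toList : Multiset M) = T := T.coe_toList
  have hlen : T.toList.length = k := by rw [← hcard, ← hl]; simp
  refine ⟨fun i => T.toList.get (Fin.cast hlen.symm i), fun i => ?_, ?_⟩
  · exact hmem _ (Multiset.mem_toList.mp (T.toList.get_mem _))
  · have h1 : T.sum = T.toList.sum := by rw [← hl]; simp
    have h2 : T.toList.sum = ∑ j : Fin T.toList.length, T.toList.get j := by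
      conv_lhs => rw [← List.ofFn_get T.toList]
      rw [List.sum_ofFn]
    rw [h1, h2]
    exact (Fintype.sum_equiv (finCongr hlen.symm) _ _ fun i => rfl).symm

theorem stmt6 (d J k : ℕ) (hd : 1 ≤ d) (r : ℝ) (hr0 : 0 < r) (hr1 : r < 1)
    (b : Fin (J + 1) → EuclideanSpace ℝ (Fin d))
    (hconv : (interior (convexHull ℝ (Set.range b))).Nonempty)
    (K : Set (EuclideanSpace ℝ (Fin d))) (hKne : K.Nonempty) (hKc : IsCompact K)
    (hself : K = ⋃ j : Fin (J + 1), (fun x => r • x + b j) '' K)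
    (hk : 1 ≤ k) (hkr : (d : ℝ) / r ≤ (k : ℝ) + 1) :
    (interior (kSum k K)).Nonempty := by
  classical
  have hr1' : (0:ℝ) < 1 - r := by linarith
  -- invariance of K
  have hKinv : ∀ x ∈ K, ∀ j, r • x + b j ∈ K := by
    intro x hx j
    rw [hself]
    exact Set.mem_iUnion.2 ⟨j, ⟨x, hx, rfl⟩⟩
  have hfr : Module.finrank ℝ (EuclideanSpace ℝ (Fin d)) = d := finrank_euclideanSpace_fin
  -- span of range b is top
  have hspan : affineSpan ℝ (Set.range b) = ⊤ := by
    have h1 : affineSpan ℝ (convexHull ℝ (Set.range b)) = ⊤ :=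
      ((convex_convexHull ℝ _).interior_nonempty_iff_affineSpan_eq_top).1 hconv
    rwa [affineSpan_convexHull] at h1
  obtain ⟨t, hts, htspan, htind⟩ := exists_affineIndependent ℝ (EuclideanSpace ℝ (Fin d)) (Set.range b)
  have htfin : t.Finite := finite_set_of_fin_dim_affineIndependent ℝ htind
  letI : Fintype t := htfin.fintype
  set F := htfin.toFinset with hF
  have hFcoe : (F : Set (EuclideanSpace ℝ (Fin d))) = t := htfin.coe_toFinset
  have hcard : (F.card : ℝ) ≤ (d : ℝ) + 1 := by
    have h1 : Fintype.card t ≤ Module.finrank ℝ (vectorSpan ℝ (Set.range ((↑) : t → EuclideanSpace ℝ (Fin d)))) + 1 :=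
      htind.card_le_finrank_succ
    have h2 : Module.finrank ℝ (vectorSpan ℝ (Set.range ((↑) : t → EuclideanSpace ℝ (Fin d)))) ≤
        Module.finrank ℝ (EuclideanSpace ℝ (Fin d)) :=
      Submodule.finrank_le _
    have h3 : F.card = Fintype.card t := htfin.card_toFinset
    have : F.card ≤ d + 1 := by omega
    exact_mod_cast this
  set D := convexHull ℝ t with hD
  have hDconv : Convex ℝ D := convex_convexHull ℝ t
  have hDint : (interior D).Nonempty := by
    refine (hDconv.interior_nonempty_iff_affineSpan_eq_top).2 ?_
    rw [hD, affineSpan_convexHull, htspan, hspan]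
  set ρ : ℝ := (k : ℝ) / (1 - r) with hρ
  have hk0 : (0:ℝ) < k := by exact_mod_cast hk
  have hρ0 : 0 < ρ := div_pos hk0 hr1'
  set Ω := ρ • D with hΩ
  -- the covering step
  have hcover : ∀ x ∈ Ω, ∃ s ∈ kSum k (Set.range b), ∃ x' ∈ Ω, x = r • x' + s := by
    rintro x ⟨z, hz, rfl⟩
    rw [hD, ← hFcoe] at hz
    obtain ⟨w, hw0, hw1, hwz⟩ := Finset.mem_convexHull'.1 hz
    have hFne : F.Nonempty := by
      rcases F.eq_empty_or_nonempty with h | h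
      · rw [h] at hw1; simp at hw1
      · exact h
    set g : EuclideanSpace ℝ (Fin d) → ℕ := fun y => ⌊ρ * w y⌋₊ with hg
    have hkg : k ≤ ∑ y ∈ F, g y := by
      have hlt : ∑ y ∈ F, (ρ * w y - 1) < ∑ y ∈ F, (g y : ℝ) :=
        Finset.sum_lt_sum_of_nonempty hFne fun y _ => Nat.sub_one_lt_floor _
      have hsum1 : ∑ y ∈ F, (ρ * w y - 1) = ρ - F.card := by
        rw [Finset.sum_sub_distrib, ← Finset.mul_sum, hw1]
        simp
      have hρk : (k : ℝ) + (d : ℝ) ≤ ρ := by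
        rw [hρ, le_div_iff₀ hr1']
        have hdr : (d : ℝ) ≤ r * ((k : ℝ) + 1) := by
          rwa [div_le_iff₀ hr0, mul_comm] at hkr
        have hd1 : (1 : ℝ) ≤ d := by exact_mod_cast hd
        nlinarith
      have : (k : ℝ) - 1 < ∑ y ∈ F, (g y : ℝ) := by
        rw [hsum1] at hlt
        linarith
      have hcast : ((∑ y ∈ F, g y : ℕ) : ℝ) = ∑ y ∈ F, (g y : ℝ) := by push_cast; ring
      have : (k : ℝ) < ((∑ y ∈ F, g y : ℕ) : ℝ) + 1 := by rw [hcast]; linarith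
      have : k < (∑ y ∈ F, g y) + 1 := by exact_mod_cast this
      omega
    obtain ⟨m, hm, hmsum⟩ := exists_sub_mult F g k hkg
    set s := ∑ y ∈ F, (m y : ℝ) • y with hs
    have hsmem : s ∈ kSum k (Set.range b) := by
      set Mm := F.val.bind (fun y => Multiset.replicate (m y) y) with hMm
      have hMsum : s = Mm.sum := by
        rw [hMm, Multiset.sum_bind, hs]
        rw [show (Finset.sum F fun y => (m y : ℝ) • y) =
            (F.val.map fun y => (m y : ℝ) • y).sum from rfl]
        congr 1
        refine Multiset.map_congr rfl fun y _ => ?_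
        rw [Multiset.sum_replicate, Nat.cast_smul_eq_nsmul]
      rw [hMsum]
      refine multiset_sum_mem_kSum _ ?_ ?_
      · rw [hMm, Multiset.card_bind, ← hmsum]
        rw [show (Finset.sum F fun y => m y) = (F.val.map fun y => m y).sum from rfl]
        congr 1
        exact Multiset.map_congr rfl fun y _ => by simp
      · intro y hy
        rw [hMm, Multiset.mem_bind] at hy
        obtain ⟨i, hiF, hyi⟩ := hy
        rw [Multiset.eq_of_mem_replicate hyi]
        apply hts
        rw [← hFcoe]
        exact hiF
    -- coefficients
    set μ : EuclideanSpace ℝ (Fin d) → ℝ := fun y => ρ * w y - m y with hμ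
    have hμ0 : ∀ y ∈ F, 0 ≤ μ y := by
      intro y hy
      have h1 : (m y : ℝ) ≤ (g y : ℝ) := by exact_mod_cast hm y
      have h2 : (g y : ℝ) ≤ ρ * w y := Nat.floor_le (mul_nonneg hρ0.le (hw0 y hy))
      simp only [hμ]; linarith
    have hμsum : ∑ y ∈ F, μ y = r * ρ := by
      simp only [hμ]
      rw [Finset.sum_sub_distrib, ← Finset.mul_sum, hw1]
      have : ((∑ y ∈ F, m y : ℕ) : ℝ) = ∑ y ∈ F, (m y : ℝ) := by push_cast; ring
      rw [← this, hmsum, hρ]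
      field_simp
      ring
    have hrρ0 : 0 < r * ρ := mul_pos hr0 hρ0
    set z' := ∑ y ∈ F, (μ y / (r * ρ)) • y with hz'
    have hz'D : z' ∈ D := by
      rw [hD, ← hFcoe]
      refine Finset.mem_convexHull'.2 ⟨fun y => μ y / (r * ρ), fun y hy => div_nonneg (hμ0 y hy) hrρ0.le, ?_, rfl⟩
      rw [← Finset.sum_div, hμsum, div_self hrρ0.ne']
    refine ⟨s, hsmem, ρ • z', ⟨z', hz'D, rfl⟩, ?_⟩
    have key : (r * ρ) • z' = ρ • z - s := by
      rw [hz', Finset.smul_sum]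
      have : ∀ y ∈ F, (r * ρ) • ((μ y / (r * ρ)) • y) = μ y • y := by
        intro y _
        rw [smul_smul, mul_div_cancel₀ _ hrρ0.ne']
      rw [Finset.sum_congr rfl this]
      have hzz : ρ • z = ∑ y ∈ F, (ρ * w y) • y := by
        rw [← hwz, Finset.smul_sum]
        exact Finset.sum_congr rfl fun y _ => by rw [smul_smul]
      rw [hzz, hs, ← Finset.sum_sub_distrib]
      exact Finset.sum_congr rfl fun y _ => by rw [hμ, sub_smul]
    have : r • (ρ • z') = (r * ρ) • z' := by rw [smul_smul]
    rw [this, key]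
    abel
  -- the iteration step
  have hstep : ∀ y ∈ kSum k K, ∀ s ∈ kSum k (Set.range b), r • y + s ∈ kSum k K := by
    rintro y ⟨f, hf, rfl⟩ s ⟨u, hu, rfl⟩
    choose jj hjj using hu
    refine ⟨fun i => r • f i + u i, fun i => ?_, ?_⟩
    · show r • f i + u i ∈ K
      rw [← hjj i]; exact hKinv _ (hf i) (jj i)
    · rw [Finset.sum_add_distrib, Finset.smul_sum]
  -- compactness and nonemptiness of kSum k K
  obtain ⟨x₀, hx₀⟩ := hKne
  have hksne : (∑ _i : Fin k, x₀) ∈ kSum k K := ⟨fun _ => x₀, fun _ => hx₀, rfl⟩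
  have hkscpt : IsCompact (kSum k K) := by
    have himg : kSum k K = (fun f : Fin k → EuclideanSpace ℝ (Fin d) => ∑ i, f i) '' (Set.univ.pi fun _ => K) := by
      ext x
      constructor
      · rintro ⟨f, hf, rfl⟩; exact ⟨f, fun i _ => hf i, rfl⟩
      · rintro ⟨f, hf, rfl⟩; exact ⟨f, fun i => hf i (Set.mem_univ i), rfl⟩
    rw [himg]
    exact (isCompact_univ_pi fun _ => hKc).image
      (continuous_finset_sum _ fun i _ => continuous_apply i)
  -- bound
  have hΩcpt : IsCompact Ω := by
    rw [hΩ, hD]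
    exact (htfin.isCompact_convexHull ℝ).smul ρ
  obtain ⟨M, hM⟩ : ∃ M, ∀ x ∈ Ω, dist x (∑ _i : Fin k, x₀) ≤ M := by
    obtain ⟨R, hR⟩ := (Metric.isBounded_iff_subset_closedBall (∑ _i : Fin k, x₀)).1 hΩcpt.isBounded
    exact ⟨R, fun x hx => hR hx⟩
  -- approximation
  have happrox : ∀ n : ℕ, ∀ x ∈ Ω, ∃ y ∈ kSum k K, dist x y ≤ r ^ n * M := by
    intro n
    induction n with
    | zero =>
      intro x hx
      exact ⟨_, hksne, by simpa using hM x hx⟩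
    | succ n ih =>
      intro x hx
      obtain ⟨s, hs, x', hx', rfl⟩ := hcover x hx
      obtain ⟨y', hy', hdy⟩ := ih x' hx'
      refine ⟨r • y' + s, hstep _ hy' _ hs, ?_⟩
      have hda : r • x' + s - (r • y' + s) = r • (x' - y') := by
        rw [smul_sub]; abel
      rw [dist_eq_norm, hda, norm_smul, Real.norm_eq_abs, abs_of_pos hr0]
      have : ‖x' - y'‖ ≤ r ^ n * M := by rwa [dist_eq_norm] at hdy
      calc r * ‖x' - y'‖ ≤ r * (r ^ n * M) := by
            exact mul_le_mul_of_nonneg_left this hr0.le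
        _ = r ^ (n + 1) * M := by ring
  -- Ω ⊆ kSum k K
  have hM0 : 0 ≤ M := by
    obtain ⟨z, hz⟩ := hDint
    have hzΩ : ρ • z ∈ Ω := ⟨z, interior_subset hz, rfl⟩
    exact le_trans dist_nonneg (hM _ hzΩ)
  have hΩsub : Ω ⊆ kSum k K := by
    intro x hx
    rw [← hkscpt.isClosed.closure_eq]
    rw [Metric.mem_closure_iff]
    intro ε hε
    obtain ⟨n, hn⟩ : ∃ n : ℕ, r ^ n * M < ε := by
      have h1 : Filter.Tendsto (fun n : ℕ => r ^ n * M) Filter.atTop (nhds (0 * M)) :=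
        (tendsto_pow_atTop_nhds_zero_of_lt_one hr0.le hr1).mul_const M
      rw [zero_mul] at h1
      have := (h1.eventually (gt_mem_nhds hε)).exists
      exact this
    obtain ⟨y, hy, hdist⟩ := happrox n x hx
    exact ⟨y, hy, lt_of_le_of_lt hdist hn⟩
  -- conclude
  obtain ⟨z, hz⟩ := hDint
  have hint : ρ • z ∈ interior Ω := by
    rw [hΩ, interior_smul₀ hρ0.ne' D]
    exact ⟨z, hz, rfl⟩
  exact ⟨ρ • z, interior_mono hΩsub hint⟩
end

section
/- Fix a ∈ (0, 1/2) and let C_a = {(1−a)·Σ_{j=0}^∞ ε_j a^j : ε_j ∈ {0,1} for all j} ⊂ ℝ. If k is a positive integer with k ≥ (1−a)/a, then the k-fold sumset C_a + C_a + ⋯ + C_a (k summands) contains a nontrivial interval, i.e., has nonempty interior in ℝ. -/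
open Set Pointwise

/-- The homogeneous Cantor set `C_a = {(1-a) ∑ εⱼ aʲ : εⱼ ∈ {0,1}}`. -/
def homCantor (a : ℝ) : Set ℝ :=
  {x | ∃ ε : ℕ → ℝ, (∀ j, ε j = 0 ∨ ε j = 1) ∧ x = (1 - a) * ∑' j : ℕ, ε j * a ^ j}

/-- Remainders of the greedy expansion of `x` in base `a` with digits in `{0,…,k}`. -/
noncomputable def remSeq (a : ℝ) (k : ℕ) (x : ℝ) : ℕ → ℝ
  | 0 => x
  | n + 1 => (remSeq a k x n - (min k ⌊remSeq a k x n⌋₊ : ℕ)) / a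

/-- Digits of the greedy expansion. -/
noncomputable def digSeq (a : ℝ) (k : ℕ) (x : ℝ) (n : ℕ) : ℕ :=
  min k ⌊remSeq a k x n⌋₊

lemma digSeq_le (a : ℝ) (k : ℕ) (x : ℝ) (n : ℕ) : digSeq a k x n ≤ k :=
  min_le_left _ _

lemma rem_bounds (a : ℝ) (ha0 : 0 < a) (ha1 : a < 1) (k : ℕ) (hka : 1 - a ≤ k * a)
    (x : ℝ) (hx0 : 0 ≤ x) (hx1 : x ≤ k / (1 - a)) :
    ∀ n, 0 ≤ remSeq a k x n ∧ remSeq a k x n ≤ k / (1 - a) := by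
  intro n
  induction n with
  | zero => exact ⟨hx0, hx1⟩
  | succ n ih =>
    obtain ⟨h0, h1⟩ := ih
    have h1a : (0 : ℝ) < 1 - a := by linarith
    set r := remSeq a k x n with hr
    have hd : ((min k ⌊r⌋₊ : ℕ) : ℝ) ≤ r := by
      calc ((min k ⌊r⌋₊ : ℕ) : ℝ) ≤ (⌊r⌋₊ : ℝ) := by exact_mod_cast min_le_right _ _
        _ ≤ r := Nat.floor_le h0
    have hup : r - ((min k ⌊r⌋₊ : ℕ) : ℝ) ≤ k * a / (1 - a) := by
      rcases le_or_gt (k : ℕ) ⌊r⌋₊ with h | h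
      · have hmin : min k ⌊r⌋₊ = k := min_eq_left h
        rw [hmin]
        have heq : (k : ℝ) / (1 - a) - k = k * a / (1 - a) := by field_simp; ring
        linarith
      · have hmin : min k ⌊r⌋₊ = ⌊r⌋₊ := min_eq_right h.le
        rw [hmin]
        have hlt : r < ⌊r⌋₊ + 1 := Nat.lt_floor_add_one r
        have h1le : (1 : ℝ) ≤ k * a / (1 - a) := by
          rw [le_div_iff₀ h1a]; linarith
        linarith
    constructor
    · show 0 ≤ (r - ((min k ⌊r⌋₊ : ℕ) : ℝ)) / a
      exact div_nonneg (by linarith) ha0.le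
    · show (r - ((min k ⌊r⌋₊ : ℕ) : ℝ)) / a ≤ k / (1 - a)
      rw [div_le_iff₀ ha0]
      calc r - ((min k ⌊r⌋₊ : ℕ) : ℝ) ≤ k * a / (1 - a) := hup
        _ = k / (1 - a) * a := by ring

lemma partial_sum_eq (a : ℝ) (ha0 : a ≠ 0) (k : ℕ) (x : ℝ) :
    ∀ n, ∑ j ∈ Finset.range n, (digSeq a k x j : ℝ) * a ^ j
      = x - a ^ n * remSeq a k x n := by
  intro n
  induction n with
  | zero => simp [remSeq]
  | succ n ih =>
    rw [Finset.sum_range_succ, ih]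
    have hrem : remSeq a k x (n + 1) = (remSeq a k x n - (digSeq a k x n : ℝ)) / a := by
      simp [remSeq, digSeq]
    rw [hrem]
    field_simp
    ring

theorem stmt8 (a : ℝ) (ha0 : 0 < a) (ha1 : a < 1 / 2) (k : ℕ) (hk : 1 ≤ k)
    (hka : (1 - a) / a ≤ (k : ℝ)) :
    (interior (kSum k (homCantor a))).Nonempty := by
  have ha1' : a < 1 := by linarith
  have h1a : (0 : ℝ) < 1 - a := by linarith
  have hka' : 1 - a ≤ k * a := by
    rw [div_le_iff₀ ha0] at hka; linarith
  -- Step 1: Icc 0 k ⊆ kSum k (homCantor a)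
  have hsub : Icc (0 : ℝ) k ⊆ kSum k (homCantor a) := by
    rintro x ⟨hx0, hxk⟩
    set y := x / (1 - a) with hy
    have hy0 : 0 ≤ y := div_nonneg hx0 h1a.le
    have hy1 : y ≤ k / (1 - a) := by
      rw [hy, div_le_div_iff₀ h1a h1a]; nlinarith
    set δ : ℕ → ℕ := digSeq a k y with hδ
    have hbd := rem_bounds a ha0 ha1' k hka' y hy0 hy1
    -- the digit series sums to y
    have hsummable : Summable (fun j => (δ j : ℝ) * a ^ j) := by
      apply Summable.of_nonneg_of_le
        (fun j => by positivity)
        (fun j => ?_)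
        (Summable.mul_left (k : ℝ) (summable_geometric_of_lt_one ha0.le ha1'))
      have : (δ j : ℝ) ≤ k := by exact_mod_cast digSeq_le a k y j
      have ha : (0:ℝ) ≤ a ^ j := by positivity
      nlinarith
    have htsum : ∑' j, (δ j : ℝ) * a ^ j = y := by
      have ht1 := hsummable.hasSum.tendsto_sum_nat
      have ht2 : Filter.Tendsto (fun n => ∑ j ∈ Finset.range n, (δ j : ℝ) * a ^ j)
          Filter.atTop (nhds y) := by
        have heq : (fun n => ∑ j ∈ Finset.range n, (δ j : ℝ) * a ^ j)
            = fun n => y - a ^ n * remSeq a k y n := by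
          funext n; exact partial_sum_eq a ha0.ne' k y n
        rw [heq]
        have h0 : Filter.Tendsto (fun n : ℕ => a ^ n * remSeq a k y n)
            Filter.atTop (nhds 0) := by
          apply squeeze_zero (g := fun n : ℕ => a ^ n * ((k : ℝ) / (1 - a)))
            (fun n => mul_nonneg (by positivity) (hbd n).1)
            (fun n => by
              have := (hbd n).2
              have ha : (0:ℝ) ≤ a ^ n := by positivity
              nlinarith)
          have := (tendsto_pow_atTop_nhds_zero_of_lt_one ha0.le ha1').mul_const
            ((k : ℝ) / (1 - a))
          simpa using this
        have := Filter.Tendsto.const_sub y h0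
        simpa using this
      exact tendsto_nhds_unique ht1 ht2
    -- split digits into k binary sequences
    set ε : Fin k → ℕ → ℝ := fun i j => if (i : ℕ) < δ j then 1 else 0 with hε
    have hεsummable : ∀ i : Fin k, Summable (fun j => ε i j * a ^ j) := by
      intro i
      apply Summable.of_nonneg_of_le (fun j => ?_) (fun j => ?_)
        (summable_geometric_of_lt_one ha0.le ha1')
      · by_cases h : (i : ℕ) < δ j <;> simp [hε, h] <;> positivity
      · by_cases h : (i : ℕ) < δ j <;> simp [hε, h] <;> positivity
    refine ⟨fun i => (1 - a) * ∑' j, ε i j * a ^ j, fun i => ?_, ?_⟩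
    · exact ⟨ε i, fun j => by by_cases h : (i : ℕ) < δ j <;> simp [hε, h], rfl⟩
    · have hsum_eps : ∀ j, ∑ i : Fin k, ε i j = (δ j : ℝ) := by
        intro j
        rw [hε]
        simp only
        rw [Fin.sum_univ_eq_sum_range (fun i => if i < δ j then (1:ℝ) else 0)]
        rw [Finset.sum_boole]
        have hfil : Finset.filter (fun i => i < δ j) (Finset.range k)
            = Finset.range (δ j) := by
          ext i
          simp only [Finset.mem_filter, Finset.mem_range]
          have : δ j ≤ k := digSeq_le a k y j
          omega
        simp [hfil]
      calc x = (1 - a) * y := by rw [hy]; field_simp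
        _ = (1 - a) * ∑' j, (δ j : ℝ) * a ^ j := by rw [htsum]
        _ = (1 - a) * ∑' j, ∑ i : Fin k, ε i j * a ^ j := by
            congr 1
            apply tsum_congr
            intro j
            rw [← Finset.sum_mul, hsum_eps j]
        _ = (1 - a) * ∑ i : Fin k, ∑' j, ε i j * a ^ j := by
            rw [Summable.tsum_finsetSum (fun i _ => hεsummable i)]
        _ = ∑ i : Fin k, (1 - a) * ∑' j, ε i j * a ^ j := by
            rw [Finset.mul_sum]
  -- Step 2: interior of Icc 0 k is nonempty
  have hk0 : (0 : ℝ) < k := by exact_mod_cast hk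
  refine ⟨(k : ℝ) / 2, interior_mono hsub ?_⟩
  rw [interior_Icc]
  constructor <;> [positivity; linarith]
end

section
/- Fix an integer J > 2 and a real number r with 2/(3J) ≤ r < 1/(J+1). Let K ⊂ ℝ be a nonempty compact set satisfying K = ⋃_{j=0}^J (r·K + j). Then the subset {(x_0 − x_1, x_0 − x_2) : x_0, x_1, x_2 ∈ K} of ℝ² has nonempty interior. -/
lemma hex_round (α β : ℝ) : ∃ u v : ℤ,
    |α - u| ≤ 2/3 ∧ |β - v| ≤ 2/3 ∧ |(α - u) - (β - v)| ≤ 2/3 := by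
  have hf0 := Int.fract_nonneg α
  have hf1 := Int.fract_lt_one α
  have hg0 := Int.fract_nonneg β
  have hg1 := Int.fract_lt_one β
  have hfd : (⌊α⌋ : ℝ) = α - Int.fract α := by rw [Int.fract]; ring
  have hgd : (⌊β⌋ : ℝ) = β - Int.fract β := by rw [Int.fract]; ring
  rcases le_or_gt (Int.fract α) (2/3) with hf | hf
  · rcases le_or_gt (Int.fract β) (2/3) with hg | hg
    · refine ⟨⌊α⌋, ⌊β⌋, ?_, ?_, ?_⟩ <;> rw [abs_le] <;> push_cast [hfd, hgd] <;>
        constructor <;> linarith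
    · rcases le_or_gt (1/3) (Int.fract α) with hf' | hf'
      · refine ⟨⌊α⌋ + 1, ⌊β⌋ + 1, ?_, ?_, ?_⟩ <;> rw [abs_le] <;> push_cast [hfd, hgd] <;>
          constructor <;> linarith
      · refine ⟨⌊α⌋, ⌊β⌋ + 1, ?_, ?_, ?_⟩ <;> rw [abs_le] <;> push_cast [hfd, hgd] <;>
          constructor <;> linarith
  · rcases le_or_gt (Int.fract β) (2/3) with hg | hg
    · rcases le_or_gt (1/3) (Int.fract β) with hg' | hg'
      · refine ⟨⌊α⌋ + 1, ⌊β⌋ + 1, ?_, ?_, ?_⟩ <;> rw [abs_le] <;> push_cast [hfd, hgd] <;>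
          constructor <;> linarith
      · refine ⟨⌊α⌋ + 1, ⌊β⌋, ?_, ?_, ?_⟩ <;> rw [abs_le] <;> push_cast [hfd, hgd] <;>
          constructor <;> linarith
    · refine ⟨⌊α⌋ + 1, ⌊β⌋ + 1, ?_, ?_, ?_⟩ <;> rw [abs_le] <;> push_cast [hfd, hgd] <;>
        constructor <;> linarith

lemma hex_cover (J : ℕ) (m : ℝ) (hmJ : m + 2/3 < (J:ℝ) + 1)
    (a b : ℝ) (ha : |a| ≤ m) (hb : |b| ≤ m) (hab : |a - b| ≤ m) :
    ∃ j₀ j₁ j₂ : ℕ, j₀ ≤ J ∧ j₁ ≤ J ∧ j₂ ≤ J ∧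
      |a - ((j₀:ℝ) - (j₁:ℝ))| ≤ 2/3 ∧ |b - ((j₀:ℝ) - (j₂:ℝ))| ≤ 2/3 ∧
      |(a - ((j₀:ℝ) - (j₁:ℝ))) - (b - ((j₀:ℝ) - (j₂:ℝ)))| ≤ 2/3 := by
  obtain ⟨u, v, hu, hv, huv⟩ := hex_round a b
  have hu' : |(u:ℝ)| ≤ m + 2/3 := by
    calc |(u:ℝ)| = |a - (a - u)| := by ring_nf
    _ ≤ |a| + |a - u| := abs_sub a (a - u)
    _ ≤ m + 2/3 := add_le_add ha hu
  have hv' : |(v:ℝ)| ≤ m + 2/3 := by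
    calc |(v:ℝ)| = |b - (b - v)| := by ring_nf
    _ ≤ |b| + |b - v| := abs_sub b (b - v)
    _ ≤ m + 2/3 := add_le_add hb hv
  have huv' : |(u:ℝ) - (v:ℝ)| ≤ m + 2/3 := by
    calc |(u:ℝ) - v| = |(a - b) - ((a - u) - (b - v))| := by ring_nf
    _ ≤ |a - b| + |(a - u) - (b - v)| := abs_sub _ _
    _ ≤ m + 2/3 := add_le_add hab huv
  -- integer bounds
  have toint : ∀ w : ℤ, |(w:ℝ)| ≤ m + 2/3 → -(J:ℤ) ≤ w ∧ w ≤ (J:ℤ) := by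
    intro w hw
    rw [abs_le] at hw
    have h1 : (w:ℝ) < (J:ℝ) + 1 := lt_of_le_of_lt hw.2 hmJ
    have h2 : -((J:ℝ) + 1) < (w:ℝ) := by linarith [hw.1]
    have h1' : (w:ℤ) < (J:ℤ) + 1 := by exact_mod_cast h1
    have h2' : -((J:ℤ) + 1) < w := by exact_mod_cast h2
    omega
  obtain ⟨hu1, hu2⟩ := toint u hu'
  obtain ⟨hv1, hv2⟩ := toint v hv'
  obtain ⟨huv1, huv2⟩ := toint (u - v) (by push_cast; exact huv')
  set i₀ : ℤ := max u (max v 0) with hi₀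
  have h0i₀ : 0 ≤ i₀ := le_max_of_le_right (le_max_right _ _)
  have hui₀ : u ≤ i₀ := le_max_left _ _
  have hvi₀ : v ≤ i₀ := le_max_of_le_right (le_max_left _ _)
  have hi₀J : i₀ ≤ (J:ℤ) := max_le hu2 (max_le hv2 (by positivity))
  have hi₁J : i₀ - u ≤ (J:ℤ) := by
    rcases max_cases u (max v 0) with ⟨h, _⟩ | ⟨h, _⟩ <;>
      rcases max_cases v (0:ℤ) with ⟨h', _⟩ | ⟨h', _⟩ <;> omega
  have hi₂J : i₀ - v ≤ (J:ℤ) := by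
    rcases max_cases u (max v 0) with ⟨h, _⟩ | ⟨h, _⟩ <;>
      rcases max_cases v (0:ℤ) with ⟨h', _⟩ | ⟨h', _⟩ <;> omega
  have e0 : ((i₀.toNat : ℕ) : ℝ) = (i₀ : ℝ) := by
    exact_mod_cast congrArg (Int.cast : ℤ → ℝ) (Int.toNat_of_nonneg h0i₀)
  have e1 : (((i₀ - u).toNat : ℕ) : ℝ) = (i₀ : ℝ) - (u : ℝ) := by
    have := congrArg (Int.cast : ℤ → ℝ) (Int.toNat_of_nonneg (show (0:ℤ) ≤ i₀ - u by omega))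
    push_cast at this ⊢; linarith
  have e2 : (((i₀ - v).toNat : ℕ) : ℝ) = (i₀ : ℝ) - (v : ℝ) := by
    have := congrArg (Int.cast : ℤ → ℝ) (Int.toNat_of_nonneg (show (0:ℤ) ≤ i₀ - v by omega))
    push_cast at this ⊢; linarith
  refine ⟨i₀.toNat, (i₀ - u).toNat, (i₀ - v).toNat, by omega, by omega, by omega, ?_, ?_, ?_⟩
  · rw [e0, e1]
    have : a - ((i₀:ℝ) - ((i₀:ℝ) - u)) = a - u := by ring
    rw [this]; exact hu
  · rw [e0, e2]
    have : b - ((i₀:ℝ) - ((i₀:ℝ) - v)) = b - v := by ring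
    rw [this]; exact hv
  · rw [e0, e1, e2]
    have : a - ((i₀:ℝ) - ((i₀:ℝ) - u)) - (b - ((i₀:ℝ) - ((i₀:ℝ) - v))) = (a - u) - (b - v) := by ring
    rw [this]; exact huv

open Set

theorem stmt10 (J : ℕ) (hJ : 2 < J) (r : ℝ)
    (hr1 : 2 / (3 * (J : ℝ)) ≤ r) (hr2 : r < 1 / ((J : ℝ) + 1))
    (K : Set ℝ) (hKne : K.Nonempty) (hKc : IsCompact K)
    (hself : K = ⋃ j ∈ Finset.range (J + 1), (fun x => r * x + (j : ℝ)) '' K) :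
    (interior {p : ℝ × ℝ | ∃ x₀ ∈ K, ∃ x₁ ∈ K, ∃ x₂ ∈ K,
        p = (x₀ - x₁, x₀ - x₂)}).Nonempty := by
  set S : Set (ℝ × ℝ) := {p : ℝ × ℝ | ∃ x₀ ∈ K, ∃ x₁ ∈ K, ∃ x₂ ∈ K,
        p = (x₀ - x₁, x₀ - x₂)} with hSdef
  have hJ3 : (3:ℝ) ≤ (J:ℝ) := by exact_mod_cast hJ
  have hr0 : 0 < r := lt_of_lt_of_le (by positivity) hr1
  have hrlt1 : r < 1 := lt_trans hr2 (by rw [div_lt_one (by linarith)]; linarith)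
  set m : ℝ := 2 / (3 * r) with hm_def
  have hm0 : 0 < m := by positivity
  have hrm : r * m = 2/3 := by rw [hm_def]; field_simp
  have hmJbig : m ≤ (J:ℝ) := by
    rw [hm_def, div_le_iff₀ (by positivity)]
    have h2 : 2 ≤ r * (3 * (J:ℝ)) := (div_le_iff₀ (by positivity)).1 hr1
    nlinarith
  have hmJ : m + 2/3 < (J:ℝ) + 1 := by linarith
  -- maps preserve K
  have hmap : ∀ x ∈ K, ∀ j : ℕ, j ≤ J → r * x + (j:ℝ) ∈ K := by
    intro x hx j hj
    rw [hself]
    exact Set.mem_biUnion (Finset.mem_range.2 (Nat.lt_succ_of_le hj)) ⟨x, hx, rfl⟩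
  -- S closed
  have hSeq : S = (fun x : ℝ × ℝ × ℝ => (x.1 - x.2.1, x.1 - x.2.2)) '' (K ×ˢ (K ×ˢ K)) := by
    ext p
    constructor
    · rintro ⟨x₀, h₀, x₁, h₁, x₂, h₂, rfl⟩
      exact ⟨(x₀, x₁, x₂), ⟨h₀, h₁, h₂⟩, rfl⟩
    · rintro ⟨⟨x₀, x₁, x₂⟩, ⟨h₀, h₁, h₂⟩, rfl⟩
      exact ⟨x₀, h₀, x₁, h₁, x₂, h₂, rfl⟩
  have hScl : IsClosed S := by
    rw [hSeq]
    exact ((hKc.prod (hKc.prod hKc)).image (by fun_prop)).isClosed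
  have hSne : S.Nonempty := by
    obtain ⟨x, hx⟩ := hKne
    exact ⟨(x - x, x - x), x, hx, x, hx, x, hx, rfl⟩
  -- hexagon
  set H : Set (ℝ × ℝ) := {p : ℝ × ℝ | |p.1| ≤ m ∧ |p.2| ≤ m ∧ |p.1 - p.2| ≤ m} with hHdef
  -- covering step
  have step : ∀ p ∈ H, ∃ t : ℝ × ℝ, (∀ q ∈ S, r • q + t ∈ S) ∧ r⁻¹ • (p - t) ∈ H := by
    rintro p ⟨hp1, hp2, hp3⟩
    obtain ⟨j₀, j₁, j₂, hj₀, hj₁, hj₂, h1, h2, h3⟩ := hex_cover J m hmJ p.1 p.2 hp1 hp2 hp3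
    refine ⟨((j₀:ℝ) - j₁, (j₀:ℝ) - j₂), ?_, ?_, ?_, ?_⟩
    · rintro q ⟨x₀, h₀, x₁, hx₁, x₂, hx₂, rfl⟩
      refine ⟨r * x₀ + j₀, hmap _ h₀ _ hj₀, r * x₁ + j₁, hmap _ hx₁ _ hj₁,
        r * x₂ + j₂, hmap _ hx₂ _ hj₂, ?_⟩
      simp only [Prod.smul_mk, Prod.mk_add_mk, smul_eq_mul, Prod.mk.injEq]
      constructor <;> ring
    · show |(r⁻¹ • (p - ((j₀:ℝ) - j₁, (j₀:ℝ) - j₂))).1| ≤ m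
      simp only [Prod.smul_fst, Prod.fst_sub, smul_eq_mul]
      rw [abs_mul, abs_inv, abs_of_pos hr0]
      rw [inv_mul_le_iff₀ hr0, hrm]
      exact h1
    · show |(r⁻¹ • (p - ((j₀:ℝ) - j₁, (j₀:ℝ) - j₂))).2| ≤ m
      simp only [Prod.smul_snd, Prod.snd_sub, smul_eq_mul]
      rw [abs_mul, abs_inv, abs_of_pos hr0]
      rw [inv_mul_le_iff₀ hr0, hrm]
      exact h2
    · show |(r⁻¹ • (p - ((j₀:ℝ) - j₁, (j₀:ℝ) - j₂))).1 -
          (r⁻¹ • (p - ((j₀:ℝ) - j₁, (j₀:ℝ) - j₂))).2| ≤ m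
      simp only [Prod.smul_fst, Prod.smul_snd, Prod.fst_sub, Prod.snd_sub, smul_eq_mul]
      rw [← mul_sub, abs_mul, abs_inv, abs_of_pos hr0]
      rw [inv_mul_le_iff₀ hr0, hrm]
      have he : p.1 - ((j₀:ℝ) - j₁) - (p.2 - ((j₀:ℝ) - j₂)) =
          p.1 - ((j₀:ℝ) - j₁, (j₀:ℝ) - j₂).1 - (p.2 - ((j₀:ℝ) - j₁, (j₀:ℝ) - j₂).2) := by ring
      rw [← he]
      exact h3
  -- approximation
  obtain ⟨s₀, hs₀⟩ := hSne
  set C : ℝ := m + dist (0 : ℝ × ℝ) s₀ + 1 with hCdef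
  have hC : 0 < C := by positivity
  have key : ∀ n : ℕ, ∀ p ∈ H, ∃ q ∈ S, dist p q ≤ r ^ n * C := by
    intro n
    induction n with
    | zero =>
      rintro p ⟨hp1, hp2, _⟩
      refine ⟨s₀, hs₀, ?_⟩
      have hd : dist p (0 : ℝ × ℝ) ≤ m := by
        rw [Prod.dist_eq]
        apply max_le
        · rw [Real.dist_eq]; simpa using hp1
        · rw [Real.dist_eq]; simpa using hp2
      calc dist p s₀ ≤ dist p 0 + dist 0 s₀ := dist_triangle _ _ _
        _ ≤ m + dist (0:ℝ×ℝ) s₀ := by linarith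
        _ ≤ r ^ 0 * C := by rw [pow_zero, one_mul, hCdef]; linarith
    | succ n ih =>
      intro p hp
      obtain ⟨t, htS, htH⟩ := step p hp
      obtain ⟨q, hqS, hq⟩ := ih _ htH
      refine ⟨r • q + t, htS q hqS, ?_⟩
      have hp' : r • (r⁻¹ • (p - t)) + t = p := by
        rw [smul_smul, mul_inv_cancel₀ hr0.ne', one_smul]; abel
      calc dist p (r • q + t) = dist (r • (r⁻¹ • (p - t)) + t) (r • q + t) := by rw [hp']
        _ = dist (r • (r⁻¹ • (p - t))) (r • q) := dist_add_right _ _ _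
        _ = ‖r‖ * dist (r⁻¹ • (p - t)) q := dist_smul₀ _ _ _
        _ = r * dist (r⁻¹ • (p - t)) q := by rw [Real.norm_eq_abs, abs_of_pos hr0]
        _ ≤ r * (r ^ n * C) := mul_le_mul_of_nonneg_left hq hr0.le
        _ = r ^ (n + 1) * C := by ring
  -- H ⊆ S
  have hHS : H ⊆ S := by
    intro p hp
    rw [← hScl.closure_eq]
    rw [Metric.mem_closure_iff]
    intro ε hε
    obtain ⟨n, hn⟩ := exists_pow_lt_of_lt_one (div_pos hε hC) hrlt1
    obtain ⟨q, hqS, hq⟩ := key n p hp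
    refine ⟨q, hqS, lt_of_le_of_lt hq ?_⟩
    rw [← lt_div_iff₀ hC]
    exact hn
  -- conclude
  refine ⟨(0, 0), ?_⟩
  rw [mem_interior]
  refine ⟨Metric.ball 0 (m / 2), fun p hp => hHS ?_, Metric.isOpen_ball,
    Metric.mem_ball_self (by positivity)⟩
  rw [Metric.mem_ball, Prod.dist_eq, max_lt_iff] at hp
  obtain ⟨h1, h2⟩ := hp
  rw [Real.dist_eq] at h1 h2
  simp only [Prod.fst_zero, Prod.snd_zero, sub_zero] at h1 h2
  refine ⟨by linarith, by linarith, ?_⟩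
  calc |p.1 - p.2| ≤ |p.1| + |p.2| := abs_sub _ _
    _ ≤ m := by linarith
end

section
/- Fix an integer n ≥ 3, a nonempty subset A ⊂ {0, 1, …, n−1}, and a positive integer k, and let C_{n,A} = {Σ_{j=1}^∞ a_j/n^j : a_j ∈ A for all j} ⊂ ℝ. Suppose that {(a_0 − a_1, a_0 − a_2, …, a_0 − a_k) mod n : a_0, …, a_k ∈ A} = (ℤ/nℤ)^k. Then the set {(x_0 − x_1, x_0 − x_2, …, x_0 − x_k) : x_0, …, x_k ∈ C_{n,A}} ⊂ ℝ^k has positive k-dimensional Lebesgue measure. -/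
open MeasureTheory Set ENNReal

/-- The Cantor-like set `C_{n,A} = {∑_{j≥1} aⱼ n^{-j} : aⱼ ∈ A}`. -/
def digitCantor (n : ℕ) (A : Finset ℕ) : Set ℝ :=
  {x | ∃ a : ℕ → ℕ, (∀ j, a j ∈ A) ∧ x = ∑' j : ℕ, (a j : ℝ) / (n : ℝ) ^ (j + 1)}

namespace Stmt12Aux

open Pointwise

variable {n k : ℕ} {A : Finset ℕ}

/-- The difference function: given a sequence of digit data, produce the vector of
difference sums. -/
noncomputable def F (n : ℕ) (A : Finset ℕ) (k : ℕ) (b : ℕ → ↥A × (Fin k → ↥A)) :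
    Fin k → ℝ :=
  fun i => ∑' j : ℕ, ((((b j).1 : ℕ) : ℝ) - (((b j).2 i : ℕ) : ℝ)) / (n : ℝ) ^ (j + 1)

lemma norm_bound (hn : 2 ≤ n) (c : ℝ) (hc : |c| ≤ n) (j : ℕ) :
    ‖c / (n : ℝ) ^ (j + 1)‖ ≤ ((1 : ℝ) / n) ^ j := by
  have hn0 : (0 : ℝ) < n := by positivity
  rw [Real.norm_eq_abs, abs_div, abs_pow, abs_of_pos hn0, div_pow, one_pow,
    div_le_div_iff₀ (by positivity) (by positivity)]
  calc |c| * (n : ℝ) ^ j ≤ (n : ℝ) * (n : ℝ) ^ j := by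
        apply mul_le_mul_of_nonneg_right hc (by positivity)
    _ = 1 * (n : ℝ) ^ (j + 1) := by ring

lemma summable_geom (hn : 2 ≤ n) : Summable fun j : ℕ => ((1 : ℝ) / n) ^ j := by
  have hn0 : (0 : ℝ) < n := by positivity
  refine summable_geometric_of_lt_one (by positivity) ?_
  rw [div_lt_one hn0]
  exact_mod_cast hn.trans_lt' one_lt_two

lemma summable_div_pow (hn : 2 ≤ n) (c : ℕ → ℝ) (hc : ∀ j, |c j| ≤ n) :
    Summable fun j => c j / (n : ℝ) ^ (j + 1) :=
  Summable.of_norm_bounded (summable_geom hn) fun j => norm_bound hn (c j) (hc j) j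

lemma digit_le (hAn : A ⊆ Finset.range n) (a : ↥A) : ((a : ℕ) : ℝ) ≤ n := by
  have : (a : ℕ) < n := Finset.mem_range.mp (hAn a.2)
  exact_mod_cast this.le

lemma digit_abs (hAn : A ⊆ Finset.range n) (a : ↥A) : |((a : ℕ) : ℝ)| ≤ n := by
  rw [abs_of_nonneg (by positivity)]
  exact digit_le hAn a

lemma diff_abs (hAn : A ⊆ Finset.range n) (a a' : ↥A) :
    |((a : ℕ) : ℝ) - ((a' : ℕ) : ℝ)| ≤ n := by
  have h1 := digit_le hAn a
  have h2 := digit_le hAn a'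
  have h3 : (0 : ℝ) ≤ ((a : ℕ) : ℝ) := by positivity
  have h4 : (0 : ℝ) ≤ ((a' : ℕ) : ℝ) := by positivity
  rw [abs_sub_le_iff]
  constructor <;> linarith

lemma summable_F (hn : 2 ≤ n) (hAn : A ⊆ Finset.range n)
    (b : ℕ → ↥A × (Fin k → ↥A)) (i : Fin k) :
    Summable fun j => ((((b j).1 : ℕ) : ℝ) - (((b j).2 i : ℕ) : ℝ)) / (n : ℝ) ^ (j + 1) :=
  summable_div_pow hn _ fun j => diff_abs hAn _ _

lemma continuous_F (hn : 2 ≤ n) (hAn : A ⊆ Finset.range n) :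
    Continuous (F n A k) := by
  apply continuous_pi
  intro i
  refine continuous_tsum (u := fun j : ℕ => ((1 : ℝ) / n) ^ j) ?_ (summable_geom hn) ?_
  · intro j
    have hc : Continuous fun p : ↥A × (Fin k → ↥A) =>
        (((p.1 : ℕ) : ℝ) - ((p.2 i : ℕ) : ℝ)) / (n : ℝ) ^ (j + 1) :=
      continuous_of_discreteTopology
    exact hc.comp (continuous_apply j)
  · intro j b
    exact norm_bound hn _ (diff_abs hAn _ _) j

/-- Self-similarity step: prepending a digit pair. -/
lemma F_cons (hn : 2 ≤ n) (hAn : A ⊆ Finset.range n)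
    (b : ℕ → ↥A × (Fin k → ↥A)) (a₀ : ↥A) (a : Fin k → ↥A) (i : Fin k) :
    F n A k (fun j => Nat.casesOn j (a₀, a) b) i
      = ((((a₀ : ℕ) : ℝ) - ((a i : ℕ) : ℝ)) + F n A k b i) / n := by
  have hn0 : (0 : ℝ) < n := by positivity
  have hsum := summable_F (k := k) hn hAn (fun j => Nat.casesOn j (a₀, a) b) i
  rw [F, Summable.tsum_eq_zero_add hsum]
  have h1 : ∀ j : ℕ,
      ((((b j).1 : ℕ) : ℝ) - (((b j).2 i : ℕ) : ℝ)) / (n : ℝ) ^ (j + 1 + 1)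
        = (((((b j).1 : ℕ) : ℝ) - (((b j).2 i : ℕ) : ℝ)) / (n : ℝ) ^ (j + 1)) / n := by
    intro j
    rw [div_div, ← pow_succ]
  simp only [h1]
  rw [tsum_div_const]
  rw [F]
  rw [pow_one, ← add_div]
  rfl

end Stmt12Aux

open Stmt12Aux Pointwise

theorem stmt12 (n : ℕ) (hn : 3 ≤ n) (A : Finset ℕ) (hA : A.Nonempty)
    (hAn : A ⊆ Finset.range n) (k : ℕ) (hk : 1 ≤ k)
    (hdiff : {v : Fin k → ZMod n | ∃ a₀ ∈ A, ∃ a : Fin k → ℕ,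
        (∀ i, a i ∈ A) ∧ v = fun i => ((a₀ : ZMod n) - (a i : ZMod n))} = Set.univ) :
    0 < volume {v : Fin k → ℝ | ∃ x₀ ∈ digitCantor n A, ∃ x : Fin k → ℝ,
        (∀ i, x i ∈ digitCantor n A) ∧ v = fun i => x₀ - x i} := by
  classical
  haveI : NeZero n := ⟨by omega⟩
  have hn2 : 2 ≤ n := by omega
  have hn0 : (0 : ℝ) < n := by positivity
  have hnne : (n : ℝ) ≠ 0 := hn0.ne'
  obtain ⟨astar, hastar⟩ := hA
  set S : Set (Fin k → ℝ) := Set.range (F n A k) with hSdef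
  -- S is contained in the target set
  have hSD : S ⊆ {v : Fin k → ℝ | ∃ x₀ ∈ digitCantor n A, ∃ x : Fin k → ℝ,
      (∀ i, x i ∈ digitCantor n A) ∧ v = fun i => x₀ - x i} := by
    rintro _ ⟨b, rfl⟩
    refine ⟨∑' j : ℕ, (((b j).1 : ℕ) : ℝ) / (n : ℝ) ^ (j + 1),
      ⟨fun j => ((b j).1 : ℕ), fun j => (b j).1.2, rfl⟩,
      fun i => ∑' j : ℕ, (((b j).2 i : ℕ) : ℝ) / (n : ℝ) ^ (j + 1),
      fun i => ⟨fun j => ((b j).2 i : ℕ), fun j => ((b j).2 i).2, rfl⟩, ?_⟩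
    funext i
    have hs1 : Summable fun j => (((b j).1 : ℕ) : ℝ) / (n : ℝ) ^ (j + 1) :=
      summable_div_pow hn2 _ fun j => digit_abs hAn _
    have hs2 : Summable fun j => (((b j).2 i : ℕ) : ℝ) / (n : ℝ) ^ (j + 1) :=
      summable_div_pow hn2 _ fun j => digit_abs hAn _
    rw [F, ← Summable.tsum_sub hs1 hs2]
    exact tsum_congr fun j => sub_div _ _ _
  refine lt_of_lt_of_le ?_ (measure_mono hSD)
  -- The translated union set T
  set T : Set (Fin k → ℝ) :=
    {x : Fin k → ℝ | ∃ b, ∃ m : Fin k → ℤ, x = fun i => F n A k b i + (m i : ℝ)} with hTdef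
  -- T is closed
  have hScomp : IsCompact S := isCompact_range (continuous_F hn2 hAn)
  set π : (Fin k → ℝ) → (Fin k → AddCircle (1 : ℝ)) :=
    fun x i => (x i : AddCircle (1 : ℝ)) with hπdef
  have hπcont : Continuous π := continuous_pi fun i =>
    Continuous.comp continuous_quotient_mk' (continuous_apply i)
  have hTeq : T = π ⁻¹' (π '' S) := by
    ext x
    constructor
    · rintro ⟨b, m, rfl⟩
      refine ⟨F n A k b, ⟨b, rfl⟩, ?_⟩
      funext i
      show ((F n A k b i : ℝ) : AddCircle (1:ℝ)) = ((F n A k b i + (m i : ℝ) : ℝ) : AddCircle (1:ℝ))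
      rw [QuotientAddGroup.eq_iff_sub_mem]
      refine AddSubgroup.mem_zmultiples_iff.mpr ⟨-(m i), ?_⟩
      simp [zsmul_eq_mul]
    · rintro ⟨_, ⟨b, rfl⟩, hx⟩
      have hmem : ∀ i, ∃ m : ℤ, F n A k b i - x i = (m : ℝ) := by
        intro i
        have := congrFun hx i
        have h2 : ((F n A k b i : ℝ) : AddCircle (1:ℝ)) = ((x i : ℝ) : AddCircle (1:ℝ)) := this
        rw [QuotientAddGroup.eq_iff_sub_mem] at h2
        obtain ⟨m, hm⟩ := AddSubgroup.mem_zmultiples_iff.mp h2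
        exact ⟨m, by rw [zsmul_eq_mul, mul_one] at hm; exact hm.symm⟩
      choose m hm using hmem
      exact ⟨b, fun i => -(m i), by funext i; have := hm i; push_cast; linarith⟩
  have hTclosed : IsClosed T := by
    rw [hTeq]
    exact ((hScomp.image hπcont).isClosed).preimage hπcont
  -- dividing by n stays in T
  have hstep : ∀ x ∈ T, (fun i => x i / n) ∈ T := by
    rintro x ⟨b, m, rfl⟩
    have hv : (fun i => ((m i : ℤ) : ZMod n)) ∈
        {v : Fin k → ZMod n | ∃ a₀ ∈ A, ∃ a : Fin k → ℕ,
          (∀ i, a i ∈ A) ∧ v = fun i => ((a₀ : ZMod n) - (a i : ZMod n))} := by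
      rw [hdiff]; trivial
    obtain ⟨a₀, ha₀, a, ha, hveq⟩ := hv
    have key : ∀ i, ∃ q : ℤ, (m i : ℤ) = ((a₀ : ℤ) - (a i : ℤ)) + n * q := by
      intro i
      have h1 : (((m i : ℤ) - (a₀ : ℤ) + (a i : ℤ) : ℤ) : ZMod n) = 0 := by
        have h2 := congrFun hveq i
        push_cast
        rw [h2]
        ring
      obtain ⟨q, hq⟩ := (ZMod.intCast_zmod_eq_zero_iff_dvd _ n).mp h1
      exact ⟨q, by linarith⟩
    choose q hq using key
    refine ⟨fun j => Nat.casesOn j (⟨a₀, ha₀⟩, fun i => ⟨a i, ha i⟩) b, q, ?_⟩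
    funext i
    rw [F_cons hn2 hAn]
    have hqi := hq i
    have h3 : (m i : ℝ) = ((a₀ : ℝ) - (a i : ℝ)) + n * (q i : ℝ) := by exact_mod_cast hqi
    field_simp
    ring_nf
    rw [h3]
    push_cast
    ring
  -- base point
  set b₀ : ℕ → ↥A × (Fin k → ↥A) :=
    fun _ => (⟨astar, hastar⟩, fun _ => ⟨astar, hastar⟩) with hb₀
  have hiter : ∀ j : ℕ, ∀ m : Fin k → ℤ,
      (fun i => (F n A k b₀ i + (m i : ℝ)) / (n : ℝ) ^ j) ∈ T := by
    intro j
    induction j with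
    | zero => intro m; refine ⟨b₀, m, ?_⟩; funext i; simp
    | succ j ih =>
      intro m
      have := hstep _ (ih m)
      convert this using 1
      funext i
      rw [pow_succ, div_div]
  -- T is dense, hence equal to univ
  have hTuniv : T = univ := by
    have hdense : ∀ y : Fin k → ℝ, y ∈ closure T := by
      intro y
      rw [Metric.mem_closure_iff]
      intro ε hε
      have hr1 : (1 : ℝ) / n < 1 := by
        rw [div_lt_one hn0]; exact_mod_cast by omega
      obtain ⟨j, hj⟩ := exists_pow_lt_of_lt_one hε hr1
      set m : Fin k → ℤ := fun i => ⌊(n : ℝ) ^ j * y i - F n A k b₀ i⌋ with hm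
      refine ⟨_, hiter j m, ?_⟩
      have hpow : (0 : ℝ) < (n : ℝ) ^ j := by positivity
      have hle : dist y (fun i => (F n A k b₀ i + (m i : ℝ)) / (n : ℝ) ^ j)
          ≤ ((1 : ℝ) / n) ^ j := by
        rw [div_pow, one_pow]
        refine dist_pi_le_iff (by positivity) |>.mpr fun i => ?_
        rw [Real.dist_eq]
        have h1 : y i - (F n A k b₀ i + (m i : ℝ)) / (n : ℝ) ^ j
            = ((n : ℝ) ^ j * y i - F n A k b₀ i - (m i : ℝ)) / (n : ℝ) ^ j := by
          field_simp
          ring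
        rw [h1, abs_div, abs_of_pos hpow, div_le_div_iff₀ hpow hpow]
        have hfl1 : (m i : ℝ) ≤ (n : ℝ) ^ j * y i - F n A k b₀ i := Int.floor_le _
        have hfl2 : (n : ℝ) ^ j * y i - F n A k b₀ i < (m i : ℝ) + 1 := Int.lt_floor_add_one _
        have : |(n : ℝ) ^ j * y i - F n A k b₀ i - (m i : ℝ)| ≤ 1 := by
          rw [abs_le]; constructor <;> linarith
        nlinarith
      exact lt_of_le_of_lt hle hj
    apply eq_univ_of_forall
    intro y
    have := hdense y
    rwa [hTclosed.closure_eq] at this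
  -- covering by translates
  have hcover : (univ : Set (Fin k → ℝ)) ⊆
      ⋃ m : Fin k → ℤ, ((fun i => ((m i : ℤ) : ℝ)) +ᵥ S) := by
    intro x _
    have hx : x ∈ T := hTuniv ▸ mem_univ x
    obtain ⟨b, m, rfl⟩ := hx
    refine mem_iUnion.mpr ⟨m, ?_⟩
    refine Set.mem_vadd_set.mpr ⟨F n A k b, ⟨b, rfl⟩, ?_⟩
    funext i
    show (fun i => ((m i : ℤ) : ℝ)) i + F n A k b i = F n A k b i + (m i : ℝ)
    ring
  -- conclude positivity
  by_contra hcon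
  push_neg at hcon
  have h0 : volume S = 0 := le_antisymm hcon zero_le
  have h1 : volume (univ : Set (Fin k → ℝ)) ≤
      ∑' m : Fin k → ℤ, volume ((fun i => ((m i : ℤ) : ℝ)) +ᵥ S) :=
    (measure_mono hcover).trans (measure_iUnion_le _)
  have h2 : ∀ m : Fin k → ℤ, volume ((fun i => ((m i : ℤ) : ℝ)) +ᵥ S) = 0 := by
    intro m
    rw [measure_vadd volume _ S, h0]
  rw [tsum_congr h2, tsum_zero] at h1
  have h3 : (1 : ℝ≥0∞) ≤ volume (univ : Set (Fin k → ℝ)) := by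
    have : volume (Set.pi Set.univ fun _ : Fin k => Icc (0:ℝ) 1) = 1 := by
      rw [volume_pi_pi]; simp
    calc (1 : ℝ≥0∞) = volume (Set.pi Set.univ fun _ : Fin k => Icc (0:ℝ) 1) := this.symm
      _ ≤ volume (univ : Set (Fin k → ℝ)) := measure_mono (subset_univ _)
  have := h3.trans h1
  norm_num at this
end

section
/- Fix an integer J > 2 and a real number r with 2/(3J) ≤ r < 1/(J+1). Let V = {(0,0), (0,J), (J,0), (J,2J), (2J,J), (2J,2J)} ⊂ ℝ². For F ⊂ ℝ define T(F) = ⋃_{j=0}^J (r·F + j) and D(F) = {(x_0 − x_1, x_0 − x_2) : x_0, x_1, x_2 ∈ F}. If for some w ∈ ℝ² and some F ⊂ ℝ the set D(F) contains w + conv(V), then D(T(F)) contains r·w + (1−J, 1−J) + conv(V). -/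
open Set Pointwise

/-- `T(F) = ⋃_{j=0}^J (r·F + j)`. -/
def Tmap (J : ℕ) (r : ℝ) (F : Set ℝ) : Set ℝ :=
  ⋃ j ∈ Finset.range (J + 1), (fun x => r * x + (j : ℝ)) '' F

/-- `D(F) = {(x₀ - x₁, x₀ - x₂) : xᵢ ∈ F}`. -/
def Dmap (F : Set ℝ) : Set (ℝ × ℝ) :=
  {p | ∃ x₀ ∈ F, ∃ x₁ ∈ F, ∃ x₂ ∈ F, p = (x₀ - x₁, x₀ - x₂)}


lemma hexA (J : ℕ) (hJ : 2 < J) (V : Set (ℝ × ℝ))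
    (hV : V = {((0 : ℝ), (0 : ℝ)), (0, (J : ℝ)), ((J : ℝ), 0), ((J : ℝ), 2 * (J : ℝ)),
      (2 * (J : ℝ), (J : ℝ)), (2 * (J : ℝ), 2 * (J : ℝ))})
    (x y : ℝ) (h1 : 0 ≤ x) (h2 : x ≤ 2 * J) (h3 : 0 ≤ y) (h4 : y ≤ 2 * J)
    (h5 : x - y ≤ J) (h6 : y - x ≤ J) : (x, y) ∈ convexHull ℝ V := by
  have hJ0 : (0:ℝ) < J := by
    have : (2:ℝ) < J := by exact_mod_cast hJ
    linarith
  obtain ⟨t, ht0, htx, hty, htJ, htx', hty'⟩ :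
      ∃ t : ℝ, 0 ≤ t ∧ x - J ≤ t ∧ y - J ≤ t ∧ t ≤ J ∧ t ≤ x ∧ t ≤ y := by
    refine ⟨max 0 (max (x - J) (y - J)), le_max_left _ _,
      le_trans (le_max_left _ _) (le_max_right _ _),
      le_trans (le_max_right _ _) (le_max_right _ _),
      max_le (le_of_lt hJ0) (max_le (by linarith) (by linarith)),
      max_le h1 (max_le (by linarith) (by linarith)),
      max_le h3 (max_le (by linarith) (by linarith))⟩
  have hmemA : ((x - t, y - t) : ℝ × ℝ) ∈
      convexHull ℝ (({0, (J:ℝ)} : Set ℝ) ×ˢ ({0, (J:ℝ)} : Set ℝ)) := by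
    rw [convexHull_prod, convexHull_pair, segment_eq_Icc (le_of_lt hJ0)]
    constructor <;> constructor <;> simp <;> linarith
  have hmemB : ((t, t) : ℝ × ℝ) ∈ convexHull ℝ ({((0:ℝ), (0:ℝ)), ((J:ℝ), (J:ℝ))} : Set (ℝ × ℝ)) := by
    rw [convexHull_pair]
    exact ⟨1 - t / J, t / J, by rw [sub_nonneg, div_le_one hJ0]; exact htJ,
      by positivity, by field_simp; ring, by simp [Prod.ext_iff, smul_eq_mul]; field_simp⟩
  have hsum : ((x, y) : ℝ × ℝ) ∈ convexHull ℝ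
      ((({0, (J:ℝ)} : Set ℝ) ×ˢ ({0, (J:ℝ)} : Set ℝ)) + {((0:ℝ), (0:ℝ)), ((J:ℝ), (J:ℝ))}) := by
    rw [convexHull_add, Set.mem_add]
    exact ⟨_, hmemA, _, hmemB, by ext <;> simp⟩
  refine convexHull_min ?_ (convex_convexHull ℝ V) hsum
  rintro p hp
  simp only [Set.mem_add, Set.mem_prod, Set.mem_insert_iff, Set.mem_singleton_iff] at hp
  obtain ⟨⟨a1, a2⟩, ⟨ha1, ha2⟩, b, hb, rfl⟩ := hp
  have hmid : ((J:ℝ), (J:ℝ)) ∈ convexHull ℝ V := by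
    have h0 : ((0:ℝ), (0:ℝ)) ∈ V := by rw [hV]; simp
    have h2 : ((2*(J:ℝ)), (2*(J:ℝ))) ∈ V := by rw [hV]; simp
    exact segment_subset_convexHull h0 h2
      ⟨1/2, 1/2, by norm_num, by norm_num, by norm_num,
        by simp [Prod.ext_iff, smul_eq_mul]⟩
  have hvert : ∀ q ∈ V, q ∈ convexHull ℝ V := fun q hq => subset_convexHull ℝ V hq
  rcases ha1 with rfl | rfl <;> rcases ha2 with rfl | rfl <;> rcases hb with rfl | rfl <;>
    simp only [Prod.mk_add_mk, add_zero, zero_add] <;>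
    first
      | exact hmid
      | (apply hvert; rw [hV]; simp [Prod.ext_iff, two_mul])


lemma hexB (J : ℕ) (hJ : 2 < J) (V : Set (ℝ × ℝ))
    (hV : V = {((0 : ℝ), (0 : ℝ)), (0, (J : ℝ)), ((J : ℝ), 0), ((J : ℝ), 2 * (J : ℝ)),
      (2 * (J : ℝ), (J : ℝ)), (2 * (J : ℝ), 2 * (J : ℝ))})
    (p : ℝ × ℝ) (hp : p ∈ convexHull ℝ V) :
    0 ≤ p.1 ∧ p.1 ≤ 2 * J ∧ 0 ≤ p.2 ∧ p.2 ≤ 2 * J ∧ p.1 - p.2 ≤ J ∧ p.2 - p.1 ≤ J := by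
  have hJ0 : (0:ℝ) < J := by
    have : (2:ℝ) < J := by exact_mod_cast hJ
    linarith
  set S : Set (ℝ × ℝ) := {q : ℝ × ℝ |
    0 ≤ q.1 ∧ q.1 ≤ 2 * J ∧ 0 ≤ q.2 ∧ q.2 ≤ 2 * J ∧ q.1 - q.2 ≤ J ∧ q.2 - q.1 ≤ J} with hS
  have hconv : Convex ℝ S := by
    rintro u ⟨u1, u2, u3, u4, u5, u6⟩ v ⟨v1, v2, v3, v4, v5, v6⟩ a b ha hb hab
    simp only [hS, Set.mem_setOf_eq, Prod.fst_add, Prod.snd_add, Prod.smul_fst, Prod.smul_snd,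
      smul_eq_mul]
    refine ⟨by positivity, ?_, by positivity, ?_, ?_, ?_⟩ <;> nlinarith
  have hsub : V ⊆ S := by
    rw [hV, hS]
    rintro q hq
    simp only [Set.mem_insert_iff, Set.mem_singleton_iff] at hq
    rcases hq with rfl | rfl | rfl | rfl | rfl | rfl <;>
      refine ⟨by norm_num, by norm_num <;> linarith, by norm_num, by norm_num <;> linarith,
        by norm_num <;> linarith, by norm_num <;> linarith⟩
  exact convexHull_min hsub hconv hp

lemma jchoice (J : ℕ) (a' b' : ℤ) (ha1 : -1 ≤ a') (ha2 : a' ≤ 2 * J - 1)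
    (hb1 : -1 ≤ b') (hb2 : b' ≤ 2 * J - 1) (hab1 : a' - b' ≤ J) (hab2 : b' - a' ≤ J) :
    ∃ j₀ j₁ j₂ : ℕ, j₀ ≤ J ∧ j₁ ≤ J ∧ j₂ ≤ J ∧
      (j₀ : ℤ) - j₁ = a' - J + 1 ∧ (j₀ : ℤ) - j₂ = b' - J + 1 := by
  obtain ⟨m, hm0, hma, hmb, hmJ, hma', hmb'⟩ :
      ∃ m : ℤ, 0 ≤ m ∧ a' - J + 1 ≤ m ∧ b' - J + 1 ≤ m ∧ m ≤ J ∧ m ≤ a' + 1 ∧ m ≤ b' + 1 := by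
    refine ⟨max 0 (max (a' - J + 1) (b' - J + 1)), le_max_left _ _,
      le_trans (le_max_left _ _) (le_max_right _ _),
      le_trans (le_max_right _ _) (le_max_right _ _),
      max_le (by positivity) (max_le (by omega) (by omega)),
      max_le (by omega) (max_le (by omega) (by omega)),
      max_le (by omega) (max_le (by omega) (by omega))⟩
  exact ⟨m.toNat, (m - (a' - J + 1)).toNat, (m - (b' - J + 1)).toNat,
    by omega, by omega, by omega, by omega, by omega⟩


lemma keychoice (J : ℕ) (hJ : 2 < J) (r : ℝ) (hJr1 : 2/3 ≤ (J:ℝ) * r) (hJr2 : (J:ℝ) * r < 1)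
    (x y : ℝ) (h1 : 0 ≤ x) (h2 : x ≤ 2 * J) (h3 : 0 ≤ y) (h4 : y ≤ 2 * J)
    (h5 : x - y ≤ J) (h6 : y - x ≤ J) :
    ∃ a' b' : ℤ, -1 ≤ a' ∧ a' ≤ 2 * J - 1 ∧ -1 ≤ b' ∧ b' ≤ 2 * J - 1 ∧
      a' - b' ≤ J ∧ b' - a' ≤ J ∧
      0 ≤ x - a' ∧ x - a' ≤ 2 * ((J:ℝ) * r) ∧ 0 ≤ y - b' ∧ y - b' ≤ 2 * ((J:ℝ) * r) ∧
      (x - a') - (y - b') ≤ (J:ℝ) * r ∧ (y - b') - (x - a') ≤ (J:ℝ) * r := by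
  set A : ℤ := ⌈x⌉ with hA
  set B : ℤ := ⌈y⌉ with hB
  have hxA : x ≤ (A:ℝ) := Int.le_ceil x
  have hAx : (A:ℝ) < x + 1 := Int.ceil_lt_add_one x
  have hyB : y ≤ (B:ℝ) := Int.le_ceil y
  have hBy : (B:ℝ) < y + 1 := Int.ceil_lt_add_one y
  have hA0 : 0 ≤ A := Int.ceil_nonneg h1
  have hB0 : 0 ≤ B := Int.ceil_nonneg h3
  have hA2J : A ≤ 2 * J := by
    rw [hA, Int.ceil_le]; push_cast; linarith
  have hB2J : B ≤ 2 * J := by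
    rw [hB, Int.ceil_le]; push_cast; linarith
  have hAB : A ≤ B + J := by
    rw [hA, Int.ceil_le]; push_cast; linarith
  have hBA : B ≤ A + J := by
    rw [hB, Int.ceil_le]; push_cast; linarith
  by_cases hc1 : (x - A + 1) - (y - B + 1) ≤ (J:ℝ) * r
  · by_cases hc2 : (y - B + 1) - (x - A + 1) ≤ (J:ℝ) * r
    · refine ⟨A - 1, B - 1, by omega, by omega, by omega, by omega, by omega, by omega,
        ?_, ?_, ?_, ?_, ?_, ?_⟩ <;> push_cast <;> linarith
    · -- v - u > J*r : use a' = A - 2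
      push_neg at hc2
      have hA1 : 1 ≤ A := by
        by_contra hcon
        have hAeq : A = 0 := by omega
        rw [hAeq] at hc2
        push_cast at hc2
        linarith
      have hBA' : B - A ≤ J - 1 := by
        have hlt : ((B - A : ℤ) : ℝ) < (J:ℝ) := by push_cast; linarith
        have : (B - A : ℤ) < (J : ℤ) := by exact_mod_cast hlt
        omega
      refine ⟨A - 2, B - 1, by omega, by omega, by omega, by omega, by omega, by omega,
        ?_, ?_, ?_, ?_, ?_, ?_⟩ <;> push_cast <;> linarith
  · -- u - v > J*r : use b' = B - 2
    push_neg at hc1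
    have hB1 : 1 ≤ B := by
      by_contra hcon
      have hBeq : B = 0 := by omega
      rw [hBeq] at hc1
      push_cast at hc1
      linarith
    have hAB' : A - B ≤ J - 1 := by
      have hlt : ((A - B : ℤ) : ℝ) < (J:ℝ) := by push_cast; linarith
      have : (A - B : ℤ) < (J : ℤ) := by exact_mod_cast hlt
      omega
    refine ⟨A - 1, B - 2, by omega, by omega, by omega, by omega, by omega, by omega,
      ?_, ?_, ?_, ?_, ?_, ?_⟩ <;> push_cast <;> linarith

theorem stmt14 (J : ℕ) (hJ : 2 < J) (r : ℝ)
    (hr1 : 2 / (3 * (J : ℝ)) ≤ r) (hr2 : r < 1 / ((J : ℝ) + 1))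
    (V : Set (ℝ × ℝ))
    (hV : V = {((0 : ℝ), (0 : ℝ)), (0, (J : ℝ)), ((J : ℝ), 0), ((J : ℝ), 2 * (J : ℝ)),
      (2 * (J : ℝ), (J : ℝ)), (2 * (J : ℝ), 2 * (J : ℝ))})
    (F : Set ℝ) (w : ℝ × ℝ)
    (h : {w} + convexHull ℝ V ⊆ Dmap F) :
    {r • w + ((1 - (J : ℝ), 1 - (J : ℝ)) : ℝ × ℝ)} + convexHull ℝ V ⊆ Dmap (Tmap J r F) := by
  have hJ0 : (0:ℝ) < J := by
    have : (2:ℝ) < J := by exact_mod_cast hJ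
    linarith
  have hr0 : 0 < r := lt_of_lt_of_le (by positivity) hr1
  have hJr1 : 2/3 ≤ (J:ℝ) * r := by
    have := (div_le_iff₀ (by positivity : (0:ℝ) < 3 * J)).mp hr1
    nlinarith
  have hJr2 : (J:ℝ) * r < 1 := by
    have := (lt_div_iff₀ (by positivity : (0:ℝ) < (J:ℝ) + 1)).mp hr2
    nlinarith
  rintro p hp
  rw [singleton_add] at hp
  obtain ⟨q, hq, rfl⟩ := hp
  obtain ⟨g1, g2, g3, g4, g5, g6⟩ := hexB J hJ V hV q hq
  obtain ⟨a', b', k1, k2, k3, k4, k5, k6, k7, k8, k9, k10, k11, k12⟩ :=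
    keychoice J hJ r hJr1 hJr2 q.1 q.2 g1 g2 g3 g4 g5 g6
  have hq' : ((q.1 - a') / r, (q.2 - b') / r) ∈ convexHull ℝ V := by
    apply hexA J hJ V hV
    · exact div_nonneg k7 hr0.le
    · rw [div_le_iff₀ hr0]; nlinarith
    · exact div_nonneg k9 hr0.le
    · rw [div_le_iff₀ hr0]; nlinarith
    · rw [div_sub_div_same, div_le_iff₀ hr0]; linarith
    · rw [div_sub_div_same, div_le_iff₀ hr0]; linarith
  have hD : w + ((q.1 - a') / r, (q.2 - b') / r) ∈ Dmap F := by
    apply h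
    rw [singleton_add]
    exact ⟨_, hq', rfl⟩
  obtain ⟨x₀, hx0, x₁, hx1, x₂, hx2, heq⟩ := hD
  have e1 : w.1 + (q.1 - a') / r = x₀ - x₁ := by
    have := congrArg Prod.fst heq
    simpa using this
  have e2 : w.2 + (q.2 - b') / r = x₀ - x₂ := by
    have := congrArg Prod.snd heq
    simpa using this
  have f1 : r * (x₀ - x₁) = r * w.1 + (q.1 - a') := by
    rw [← e1]; field_simp
  have f2 : r * (x₀ - x₂) = r * w.2 + (q.2 - b') := by
    rw [← e2]; field_simp
  obtain ⟨j₀, j₁, j₂, hj0, hj1, hj2, hja, hjb⟩ := jchoice J a' b' k1 k2 k3 k4 k5 k6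
  have hmem : ∀ (j : ℕ), j ≤ J → ∀ z ∈ F, r * z + (j:ℝ) ∈ Tmap J r F := by
    intro j hj z hz
    simp only [Tmap, Set.mem_iUnion, Finset.mem_range]
    exact ⟨j, by omega, z, hz, rfl⟩
  refine ⟨r * x₀ + j₀, hmem j₀ hj0 x₀ hx0, r * x₁ + j₁, hmem j₁ hj1 x₁ hx1,
    r * x₂ + j₂, hmem j₂ hj2 x₂ hx2, ?_⟩
  have hja' : (j₀ : ℝ) - j₁ = (a' : ℝ) - J + 1 := by exact_mod_cast hja
  have hjb' : (j₀ : ℝ) - j₂ = (b' : ℝ) - J + 1 := by exact_mod_cast hjb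
  have : (r • w + ((1 - (J : ℝ), 1 - (J : ℝ)) : ℝ × ℝ) + q) =
      ((r * x₀ + j₀) - (r * x₁ + j₁), (r * x₀ + j₀) - (r * x₂ + j₂)) := by
    apply Prod.ext <;>
      simp only [Prod.fst_add, Prod.snd_add, Prod.smul_fst, Prod.smul_snd, smul_eq_mul] <;>
      linarith
  exact this
end

section
/- Fix an integer J > 2 and a real number r with 2/(3J) ≤ r < 1/(J+1). Let V = {(0,0), (0,J), (J,0), (J,2J), (2J,J), (2J,2J)} ⊂ ℝ² and let P({0,…,J}) = {(x_0 + x_1, x_0 + x_2) : x_0, x_1, x_2 ∈ {0, 1, …, J}}. Then r·conv(V) + P({0,…,J}) ⊇ (1,1) + conv(V). -/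
open Set Pointwise

lemma comb6 {S : Set (ℝ×ℝ)} {p₁ p₂ p₃ p₄ p₅ p₆ : ℝ×ℝ}
    (h₁ : p₁ ∈ S) (h₂ : p₂ ∈ S) (h₃ : p₃ ∈ S) (h₄ : p₄ ∈ S) (h₅ : p₅ ∈ S) (h₆ : p₆ ∈ S)
    {a₁ a₂ a₃ a₄ a₅ a₆ : ℝ} (ha₁ : 0 ≤ a₁) (ha₂ : 0 ≤ a₂) (ha₃ : 0 ≤ a₃) (ha₄ : 0 ≤ a₄)
    (ha₅ : 0 ≤ a₅) (ha₆ : 0 ≤ a₆) (hsum : a₁+a₂+a₃+a₄+a₅+a₆ = 1) :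
    a₁•p₁+a₂•p₂+a₃•p₃+a₄•p₄+a₅•p₅+a₆•p₆ ∈ convexHull ℝ S := by
  have := (convex_convexHull ℝ S).sum_mem (t := Finset.univ)
    (w := ![a₁,a₂,a₃,a₄,a₅,a₆]) (z := ![p₁,p₂,p₃,p₄,p₅,p₆])
    (fun i _ => by fin_cases i <;> simpa)
    (by simp [Fin.sum_univ_succ]; linarith)
    (fun i _ => by fin_cases i <;> simpa using subset_convexHull ℝ S ‹_›)
  simpa [Fin.sum_univ_succ, add_assoc] using this

lemma hex_comb (N c' d' e' : ℝ) :
    ((1-d')*(1-e')*(1-c') + (d'*e'*(1-c') + (1-d')*(1-e')*c')/2)•((0:ℝ),(0:ℝ))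
      + ((1-d')*e'*(1-c'))•((0:ℝ),N) + (d'*(1-e')*(1-c'))•(N,(0:ℝ)) + ((1-d')*e'*c')•(N,2*N)
      + (d'*(1-e')*c')•(2*N,N)
      + (d'*e'*c' + (d'*e'*(1-c') + (1-d')*(1-e')*c')/2)•(2*N,2*N)
    = (N*(c'+d'), N*(c'+e')) := by
  simp only [Prod.smul_mk, smul_eq_mul, Prod.mk_add_mk, Prod.mk.injEq]
  constructor <;> ring

lemma hex_mem (N s t : ℝ) (hN : 0 < N)
    (hs0 : 0 ≤ s) (hs2 : s ≤ 2*N) (ht0 : 0 ≤ t) (ht2 : t ≤ 2*N)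
    (hst : s - t ≤ N) (hts : t - s ≤ N) :
    (s, t) ∈ convexHull ℝ ({((0:ℝ),(0:ℝ)), (0,N), (N,0), (N,2*N), (2*N,N), (2*N,2*N)} : Set (ℝ×ℝ)) := by
  obtain ⟨c, d, e, hc0, hcN, hd0, hdN, he0, heN, hsde, htde⟩ :
      ∃ c d e : ℝ, 0 ≤ c ∧ c ≤ N ∧ 0 ≤ d ∧ d ≤ N ∧ 0 ≤ e ∧ e ≤ N ∧ s = c + d ∧ t = c + e := by
    rcases le_total (max s t) N with h | h
    · exact ⟨0, s, t, le_refl 0, hN.le, hs0, le_trans (le_max_left s t) h, ht0,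
        le_trans (le_max_right s t) h, by ring, by ring⟩
    · refine ⟨max s t - N, s - (max s t - N), t - (max s t - N), by linarith, ?_, ?_, ?_, ?_, ?_,
        by ring, by ring⟩
      · rcases max_cases s t with ⟨hm, _⟩ | ⟨hm, _⟩ <;> rw [hm] <;> linarith
      · rcases max_cases s t with ⟨hm, _⟩ | ⟨hm, _⟩ <;> rw [hm] <;> linarith
      · linarith [le_max_left s t]
      · rcases max_cases s t with ⟨hm, _⟩ | ⟨hm, _⟩ <;> rw [hm] <;> linarith
      · linarith [le_max_right s t]
  obtain ⟨c', hc'0, hc'1, hc⟩ : ∃ c', 0 ≤ c' ∧ c' ≤ 1 ∧ c = N * c' :=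
    ⟨c / N, div_nonneg hc0 hN.le, (div_le_one hN).2 hcN, by field_simp⟩
  obtain ⟨d', hd'0, hd'1, hd⟩ : ∃ d', 0 ≤ d' ∧ d' ≤ 1 ∧ d = N * d' :=
    ⟨d / N, div_nonneg hd0 hN.le, (div_le_one hN).2 hdN, by field_simp⟩
  obtain ⟨e', he'0, he'1, he⟩ : ∃ e', 0 ≤ e' ∧ e' ≤ 1 ∧ e = N * e' :=
    ⟨e / N, div_nonneg he0 hN.le, (div_le_one hN).2 heN, by field_simp⟩
  have h1c : (0:ℝ) ≤ 1 - c' := by linarith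
  have h1d : (0:ℝ) ≤ 1 - d' := by linarith
  have h1e : (0:ℝ) ≤ 1 - e' := by linarith
  have key := comb6 (S := ({((0:ℝ),(0:ℝ)), (0,N), (N,0), (N,2*N), (2*N,N), (2*N,2*N)} : Set (ℝ×ℝ)))
    (p₁ := ((0:ℝ),(0:ℝ))) (p₂ := ((0:ℝ),N)) (p₃ := (N,(0:ℝ))) (p₄ := (N,2*N)) (p₅ := (2*N,N)) (p₆ := (2*N,2*N))
    (by simp) (by simp) (by simp) (by simp) (by simp) (by simp)
    (a₁ := (1-d')*(1-e')*(1-c') + (d'*e'*(1-c') + (1-d')*(1-e')*c')/2)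
    (a₂ := (1-d')*e'*(1-c')) (a₃ := d'*(1-e')*(1-c')) (a₄ := (1-d')*e'*c') (a₅ := d'*(1-e')*c')
    (a₆ := d'*e'*c' + (d'*e'*(1-c') + (1-d')*(1-e')*c')/2)
    (add_nonneg (mul_nonneg (mul_nonneg h1d h1e) h1c)
      (div_nonneg (add_nonneg (mul_nonneg (mul_nonneg hd'0 he'0) h1c)
        (mul_nonneg (mul_nonneg h1d h1e) hc'0)) (by norm_num)))
    (mul_nonneg (mul_nonneg h1d he'0) h1c)
    (mul_nonneg (mul_nonneg hd'0 h1e) h1c)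
    (mul_nonneg (mul_nonneg h1d he'0) hc'0)
    (mul_nonneg (mul_nonneg hd'0 h1e) hc'0)
    (add_nonneg (mul_nonneg (mul_nonneg hd'0 he'0) hc'0)
      (div_nonneg (add_nonneg (mul_nonneg (mul_nonneg hd'0 he'0) h1c)
        (mul_nonneg (mul_nonneg h1d h1e) hc'0)) (by norm_num)))
    (by ring)
  rw [hex_comb] at key
  have : (N*(c'+d'), N*(c'+e')) = (s, t) := by
    rw [hsde, htde, hc, hd, he, Prod.mk.injEq]
    constructor <;> ring
  rwa [this] at key


lemma hex_sub (N : ℝ) (hN : 0 < N) :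
    convexHull ℝ ({((0:ℝ),(0:ℝ)), (0,N), (N,0), (N,2*N), (2*N,N), (2*N,2*N)} : Set (ℝ×ℝ)) ⊆
    {p : ℝ×ℝ | 0 ≤ p.1 ∧ p.1 ≤ 2*N ∧ 0 ≤ p.2 ∧ p.2 ≤ 2*N ∧ p.1 - p.2 ≤ N ∧ p.2 - p.1 ≤ N} := by
  apply convexHull_min
  · intro p hp
    simp only [Set.mem_insert_iff, Set.mem_singleton_iff] at hp
    rcases hp with rfl | rfl | rfl | rfl | rfl | rfl <;>
      refine ⟨?_, ?_, ?_, ?_, ?_, ?_⟩ <;> simp <;> linarith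
  · rintro p ⟨h1, h2, h3, h4, h5, h6⟩ q ⟨g1, g2, g3, g4, g5, g6⟩ a b ha hb hab
    have e1 : (a • p + b • q).1 = a * p.1 + b * q.1 := rfl
    have e2 : (a • p + b • q).2 = a * p.2 + b * q.2 := rfl
    refine ⟨?_, ?_, ?_, ?_, ?_, ?_⟩ <;> simp only [Set.mem_setOf_eq, e1, e2]
    · linarith [mul_nonneg ha h1, mul_nonneg hb g1]
    · nlinarith [mul_le_mul_of_nonneg_left h2 ha, mul_le_mul_of_nonneg_left g2 hb]
    · linarith [mul_nonneg ha h3, mul_nonneg hb g3]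
    · nlinarith [mul_le_mul_of_nonneg_left h4 ha, mul_le_mul_of_nonneg_left g4 hb]
    · nlinarith [mul_le_mul_of_nonneg_left h5 ha, mul_le_mul_of_nonneg_left g5 hb]
    · nlinarith [mul_le_mul_of_nonneg_left h6 ha, mul_le_mul_of_nonneg_left g6 hb]


lemma int_le_of_cast_lt {a b : ℤ} (h : (a : ℝ) < (b : ℝ) + 1) : a ≤ b := by
  have : a < b + 1 := by exact_mod_cast h
  omega

lemma choose_ab (Jz : ℤ) (hJ : 1 ≤ Jz) (x y : ℝ)
    (hx0 : 0 ≤ x) (hx2 : x ≤ 2*(Jz:ℝ)) (hy0 : 0 ≤ y) (hy2 : y ≤ 2*(Jz:ℝ))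
    (hxy : x - y ≤ (Jz:ℝ)) (hyx : y - x ≤ (Jz:ℝ)) :
    ∃ a b : ℤ, 0 ≤ a ∧ a ≤ 2*Jz ∧ 0 ≤ b ∧ b ≤ 2*Jz ∧ a - b ≤ Jz ∧ b - a ≤ Jz ∧
      0 ≤ x + 1 - (a:ℝ) ∧ x + 1 - (a:ℝ) ≤ 4/3 ∧ 0 ≤ y + 1 - (b:ℝ) ∧ y + 1 - (b:ℝ) ≤ 4/3 ∧
      (x + 1 - (a:ℝ)) - (y + 1 - (b:ℝ)) ≤ 2/3 ∧ (y + 1 - (b:ℝ)) - (x + 1 - (a:ℝ)) ≤ 2/3 := by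
  set mx := ⌊x⌋ with hmx
  set my := ⌊y⌋ with hmy
  set fx := Int.fract x with hfx
  set fy := Int.fract y with hfy
  have hxeq : (mx:ℝ) = x - fx := by rw [hmx, hfx, Int.self_sub_fract]
  have hyeq : (my:ℝ) = y - fy := by rw [hmy, hfy, Int.self_sub_fract]
  have hfx0 : 0 ≤ fx := Int.fract_nonneg x
  have hfx1 : fx < 1 := Int.fract_lt_one x
  have hfy0 : 0 ≤ fy := Int.fract_nonneg y
  have hfy1 : fy < 1 := Int.fract_lt_one y
  have hJR : (1:ℝ) ≤ (Jz:ℝ) := by exact_mod_cast hJ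
  -- generic integer bounds
  have hmx0 : 0 ≤ mx := by rw [hmx]; exact Int.floor_nonneg.2 hx0
  have hmy0 : 0 ≤ my := by rw [hmy]; exact Int.floor_nonneg.2 hy0
  have hmx2 : mx ≤ 2*Jz := by
    have : (mx:ℝ) ≤ ((2*Jz:ℤ):ℝ) := by push_cast; linarith
    exact_mod_cast this
  have hmy2 : my ≤ 2*Jz := by
    have : (my:ℝ) ≤ ((2*Jz:ℤ):ℝ) := by push_cast; linarith
    exact_mod_cast this
  by_cases h1 : fx + 2/3 < fy
  · -- a = mx, b = my + 1
    refine ⟨mx, my + 1, hmx0, hmx2, by omega, ?_, ?_, ?_, by linarith, by linarith,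
      by push_cast; linarith, by push_cast; linarith, by push_cast; linarith, by push_cast; linarith⟩
    · apply int_le_of_cast_lt; push_cast; linarith
    · apply int_le_of_cast_lt; push_cast; linarith
    · apply int_le_of_cast_lt; push_cast; linarith
  · by_cases h2 : fy + 2/3 < fx
    · -- a = mx + 1, b = my
      refine ⟨mx + 1, my, by omega, ?_, hmy0, hmy2, ?_, ?_, by push_cast; linarith,
        by push_cast; linarith, by linarith, by linarith, by push_cast; linarith,
        by push_cast; linarith⟩
      · apply int_le_of_cast_lt; push_cast; linarith
      · apply int_le_of_cast_lt; push_cast; linarith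
      · apply int_le_of_cast_lt; push_cast; linarith
    · by_cases hx2J : x = 2*(Jz:ℝ)
      · have hfxz : fx = 0 := by
          rw [hfx, hx2J]
          have : (2*(Jz:ℝ)) = ((2*Jz : ℤ):ℝ) := by push_cast; ring
          rw [this, Int.fract_intCast]
        by_cases h3 : fy < 1/3
        · -- a = 2Jz, b = my
          refine ⟨2*Jz, my, by omega, le_refl _, hmy0, hmy2, ?_, ?_, by push_cast; linarith,
            by push_cast; linarith, by push_cast; linarith, by push_cast; linarith,
            by push_cast; linarith, by push_cast; linarith⟩
          · apply int_le_of_cast_lt; push_cast; linarith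
          · apply int_le_of_cast_lt; push_cast; linarith
        · -- a = 2Jz, b = my + 1
          have hmy2' : my + 1 ≤ 2*Jz := by
            apply int_le_of_cast_lt; push_cast; linarith
          refine ⟨2*Jz, my + 1, by omega, le_refl _, by omega, by omega, ?_, ?_,
            by push_cast; linarith, by push_cast; linarith, by push_cast; linarith,
            by push_cast; linarith, by push_cast; linarith, by push_cast; linarith⟩
          · apply int_le_of_cast_lt; push_cast; linarith
          · apply int_le_of_cast_lt; push_cast; linarith
      · by_cases hy2J : y = 2*(Jz:ℝ)
        · have hfyz : fy = 0 := by
            rw [hfy, hy2J]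
            have : (2*(Jz:ℝ)) = ((2*Jz : ℤ):ℝ) := by push_cast; ring
            rw [this, Int.fract_intCast]
          by_cases h3 : fx < 1/3
          · -- a = mx, b = 2Jz
            refine ⟨mx, 2*Jz, hmx0, hmx2, by omega, le_refl _, ?_, ?_, by linarith,
              by linarith, by push_cast; linarith, by push_cast; linarith,
              by push_cast; linarith, by push_cast; linarith⟩
            · apply int_le_of_cast_lt; push_cast; linarith
            · apply int_le_of_cast_lt; push_cast; linarith
          · -- a = mx + 1, b = 2Jz
            have hmx2' : mx + 1 ≤ 2*Jz := by
              apply int_le_of_cast_lt; push_cast; linarith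
            refine ⟨mx + 1, 2*Jz, by omega, by omega, by omega, le_refl _, ?_, ?_,
              by push_cast; linarith, by push_cast; linarith, by push_cast; linarith,
              by push_cast; linarith, by push_cast; linarith, by push_cast; linarith⟩
            · apply int_le_of_cast_lt; push_cast; linarith
            · apply int_le_of_cast_lt; push_cast; linarith
        · -- a = mx + 1, b = my + 1
          have hxlt : x < 2*(Jz:ℝ) := lt_of_le_of_ne hx2 hx2J
          have hylt : y < 2*(Jz:ℝ) := lt_of_le_of_ne hy2 hy2J
          have hmx2' : mx + 1 ≤ 2*Jz := by
            apply int_le_of_cast_lt; push_cast; linarith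
          have hmy2' : my + 1 ≤ 2*Jz := by
            apply int_le_of_cast_lt; push_cast; linarith
          refine ⟨mx + 1, my + 1, by omega, hmx2', by omega, hmy2', ?_, ?_,
            by push_cast; linarith, by push_cast; linarith, by push_cast; linarith,
            by push_cast; linarith, by push_cast; linarith, by push_cast; linarith⟩
          · apply int_le_of_cast_lt; push_cast; linarith
          · apply int_le_of_cast_lt; push_cast; linarith

theorem stmt15 (J : ℕ) (hJ : 2 < J) (r : ℝ)
    (hr1 : 2 / (3 * (J : ℝ)) ≤ r) (hr2 : r < 1 / ((J : ℝ) + 1))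
    (V : Set (ℝ × ℝ))
    (hV : V = {((0 : ℝ), (0 : ℝ)), (0, (J : ℝ)), ((J : ℝ), 0), ((J : ℝ), 2 * (J : ℝ)),
      (2 * (J : ℝ), (J : ℝ)), (2 * (J : ℝ), 2 * (J : ℝ))})
    (P : Set (ℝ × ℝ))
    (hP : P = {p | ∃ x₀ x₁ x₂ : ℕ, x₀ ≤ J ∧ x₁ ≤ J ∧ x₂ ≤ J ∧
      p = (((x₀ : ℝ) + (x₁ : ℝ), (x₀ : ℝ) + (x₂ : ℝ)) : ℝ × ℝ)}) :
    {((1 : ℝ), (1 : ℝ))} + convexHull ℝ V ⊆ r • convexHull ℝ V + P := by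
  have hJ1 : 1 ≤ J := by omega
  have hN0 : (0:ℝ) < (J:ℝ) := by exact_mod_cast Nat.zero_lt_of_lt hJ
  have hr0 : 0 < r := lt_of_lt_of_le (by positivity) hr1
  have h23 : 2/3 ≤ r * (J:ℝ) := by
    rw [div_le_iff₀ (by positivity)] at hr1
    nlinarith
  intro w hw
  rw [Set.singleton_add] at hw
  obtain ⟨q, hq, rfl⟩ := hw
  have hq' := hex_sub (J:ℝ) hN0 (by rw [← hV]; exact hq)
  obtain ⟨hx0, hx2, hy0, hy2, hxy, hyx⟩ := hq'
  set x := q.1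
  set y := q.2
  have hJz : ((J:ℤ):ℝ) = (J:ℝ) := by push_cast; ring
  obtain ⟨a, b, ha0, ha2, hb0, hb2, hab, hba, hu0, hu4, hv0, hv4, huv, hvu⟩ :=
    choose_ab (J:ℤ) (by exact_mod_cast hJ1) x y hx0 (by rw [hJz]; exact hx2) hy0
      (by rw [hJz]; exact hy2) (by rw [hJz]; exact hxy) (by rw [hJz]; exact hyx)
  set u := x + 1 - (a:ℝ) with hu
  set v := y + 1 - (b:ℝ) with hv
  -- membership of (u,v) in r • convexHull V
  have hmem1 : ((u, v) : ℝ×ℝ) ∈ r • convexHull ℝ V := by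
    have hdiv : (u / r, v / r) ∈ convexHull ℝ V := by
      rw [hV]
      apply hex_mem (J:ℝ) _ _ hN0
      · exact div_nonneg hu0 hr0.le
      · rw [div_le_iff₀ hr0]; nlinarith
      · exact div_nonneg hv0 hr0.le
      · rw [div_le_iff₀ hr0]; nlinarith
      · rw [div_sub_div_same, div_le_iff₀ hr0]; nlinarith
      · rw [div_sub_div_same, div_le_iff₀ hr0]; nlinarith
    have : ((u, v) : ℝ×ℝ) = r • ((u / r, v / r) : ℝ×ℝ) := by
      rw [Prod.smul_mk, smul_eq_mul, smul_eq_mul, Prod.mk.injEq]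
      constructor <;> field_simp
    rw [this]
    exact Set.smul_mem_smul_set hdiv
  -- membership of (a,b) in P
  have hmem2 : (((a:ℝ), (b:ℝ)) : ℝ×ℝ) ∈ P := by
    rw [hP]
    obtain ⟨A, rfl⟩ : ∃ A : ℕ, (A:ℤ) = a := ⟨a.toNat, Int.toNat_of_nonneg ha0⟩
    obtain ⟨B, rfl⟩ : ∃ B : ℕ, (B:ℤ) = b := ⟨b.toNat, Int.toNat_of_nonneg hb0⟩
    have hA2 : A ≤ 2*J := by exact_mod_cast ha2
    have hB2 : B ≤ 2*J := by exact_mod_cast hb2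
    have hAB : (A:ℤ) - B ≤ J := by exact_mod_cast hab
    have hBA : (B:ℤ) - A ≤ J := by exact_mod_cast hba
    refine ⟨max A B - J, A - (max A B - J), B - (max A B - J), by omega, by omega, by omega, ?_⟩
    have e1 : (max A B - J) + (A - (max A B - J)) = A := by omega
    have e2 : (max A B - J) + (B - (max A B - J)) = B := by omega
    rw [Prod.mk.injEq]
    constructor
    · exact_mod_cast e1.symm
    · exact_mod_cast e2.symm
  rw [Set.mem_add]
  refine ⟨(u, v), hmem1, ((a:ℝ), (b:ℝ)), hmem2, ?_⟩
  show (u, v) + ((a:ℝ), (b:ℝ)) = (1, 1) + q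
  have : ((1:ℝ), (1:ℝ)) + q = ((1 + x, 1 + y) : ℝ×ℝ) := rfl
  rw [this, Prod.mk_add_mk, Prod.mk.injEq]
  refine ⟨?_, ?_⟩
  · rw [hu]; ring
  · rw [hv]; ring
end

section
/- Fix an integer J > 2 and a real number r with 2/(3J) ≤ r ≤ 1/J. Let V = {(0,0), (0,J), (J,0), (J,2J), (2J,J), (2J,2J)} ⊂ ℝ² and let A_u = conv({(0,0), (1,1), (0,1)}). Then A_u ⊂ r·conv(V) + {(0,0), (−1,0)}. -/
open Set Pointwise

lemma combo3 {E : Type*} [AddCommGroup E] [Module ℝ E] {s : Set E} {v0 v1 v2 : E}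
    (h0 : v0 ∈ s) (h1 : v1 ∈ s) (h2 : v2 ∈ s) {c0 c1 c2 : ℝ}
    (hc0 : 0 ≤ c0) (hc1 : 0 ≤ c1) (hc2 : 0 ≤ c2) (hsum : c0 + c1 + c2 = 1) :
    c0 • v0 + c1 • v1 + c2 • v2 ∈ convexHull ℝ s := by
  have h := Finset.centerMass_mem_convexHull (Finset.univ : Finset (Fin 3))
    (w := ![c0, c1, c2]) (z := ![v0, v1, v2]) (s := s) ?_ ?_ ?_
  · simpa [Finset.centerMass, Fin.sum_univ_three, hsum] using h
  · intro i _; fin_cases i <;> simpa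
  · simp [Fin.sum_univ_three, hsum]
  · intro i _; fin_cases i <;> simpa

lemma combo2O {s : Set (ℝ × ℝ)} {v0 v1 p : ℝ × ℝ} (hO : ((0:ℝ), (0:ℝ)) ∈ s)
    (h0 : v0 ∈ s) (h1 : v1 ∈ s) {c0 c1 : ℝ}
    (hc0 : 0 ≤ c0) (hc1 : 0 ≤ c1) (hle : c0 + c1 ≤ 1)
    (he1 : p.1 = c0 * v0.1 + c1 * v1.1) (he2 : p.2 = c0 * v0.2 + c1 * v1.2) :
    p ∈ convexHull ℝ s := by
  have key : p = c0 • v0 + c1 • v1 + (1 - c0 - c1) • (((0:ℝ), (0:ℝ)) : ℝ × ℝ) := by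
    ext <;> simpa
  rw [key]
  exact combo3 h0 h1 hO hc0 hc1 (by linarith) (by ring)

set_option maxHeartbeats 1000000 in
theorem stmt16 (J : ℕ) (hJ : 2 < J) (r : ℝ)
    (hr1 : 2 / (3 * (J : ℝ)) ≤ r) (hr2 : r ≤ 1 / (J : ℝ))
    (V : Set (ℝ × ℝ))
    (hV : V = {((0 : ℝ), (0 : ℝ)), (0, (J : ℝ)), ((J : ℝ), 0), ((J : ℝ), 2 * (J : ℝ)),
      (2 * (J : ℝ), (J : ℝ)), (2 * (J : ℝ), 2 * (J : ℝ))}) :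
    convexHull ℝ {((0 : ℝ), (0 : ℝ)), ((1 : ℝ), (1 : ℝ)), ((0 : ℝ), (1 : ℝ))} ⊆
      r • convexHull ℝ V + ({((0 : ℝ), (0 : ℝ)), ((-1 : ℝ), (0 : ℝ))} : Set (ℝ × ℝ)) := by
  have hJ0 : (0 : ℝ) < J := by positivity
  have hr0 : 0 < r := lt_of_lt_of_le (by positivity) hr1
  have ha1 : 2 / 3 ≤ r * J := by
    rw [div_le_iff₀ (by positivity)] at hr1
    nlinarith
  have ha2 : r * J ≤ 1 := by
    rw [le_div_iff₀ hJ0] at hr2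
    linarith
  have hrJ0 : (0:ℝ) < r * J := by positivity
  -- elements of the triangle satisfy 0 ≤ x ≤ y ≤ 1
  have hsub : convexHull ℝ {((0 : ℝ), (0 : ℝ)), ((1 : ℝ), (1 : ℝ)), ((0 : ℝ), (1 : ℝ))} ⊆
      {p : ℝ × ℝ | 0 ≤ p.1 ∧ p.1 ≤ p.2 ∧ p.2 ≤ 1} := by
    apply convexHull_min
    · rintro p hp
      simp only [Set.mem_insert_iff, Set.mem_singleton_iff] at hp
      rcases hp with rfl | rfl | rfl <;> norm_num
    · rintro ⟨px, py⟩ ⟨hp1, hp2, hp3⟩ ⟨qx, qy⟩ ⟨hq1, hq2, hq3⟩ a b ha hb hab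
      simp only [Set.mem_setOf_eq, Prod.smul_mk, Prod.mk_add_mk, smul_eq_mul] at *
      refine ⟨by nlinarith, by nlinarith, by nlinarith⟩
  intro p hp
  obtain ⟨hx0, hxy, hy1⟩ := hsub hp
  obtain ⟨x, y⟩ := p
  simp only at hx0 hxy hy1
  rw [Set.mem_add]
  have m0 : ((0 : ℝ), (0 : ℝ)) ∈ V := by rw [hV]; simp
  have mA : (((0:ℝ), (J : ℝ)) : ℝ × ℝ) ∈ V := by rw [hV]; simp
  have mB : (((J : ℝ), (0:ℝ)) : ℝ × ℝ) ∈ V := by rw [hV]; simp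
  have mC : (((J : ℝ), 2 * (J : ℝ)) : ℝ × ℝ) ∈ V := by rw [hV]; simp
  have mD : ((2 * (J : ℝ), (J : ℝ)) : ℝ × ℝ) ∈ V := by rw [hV]; simp
  have mE : ((2 * (J : ℝ), 2 * (J : ℝ)) : ℝ × ℝ) ∈ V := by rw [hV]; simp
  rcases le_or_gt (y - x) (r * J) with hcase | hcase
  · -- no shift needed; b = (0,0)
    refine ⟨r • (x / r, y / r), Set.smul_mem_smul_set ?_, (0, 0), by simp, ?_⟩
    · rcases le_or_gt y (2 * x) with hc2 | hc2
      · -- combo of (J,2J), (2J,2J)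
        exact combo2O m0 mC mE (c0 := (y - x) / (r * J)) (c1 := (2 * x - y) / (2 * (r * J)))
          (by apply div_nonneg <;> linarith) (by apply div_nonneg <;> linarith)
          (by rw [div_add_div _ _ (ne_of_gt hrJ0) (by positivity), div_le_one (by positivity)]
              nlinarith)
          (by simp only; field_simp; ring) (by simp only; field_simp; ring)
      · -- combo of (0,J), (J,2J)
        exact combo2O m0 mA mC (c0 := (y - 2 * x) / (r * J)) (c1 := x / (r * J))
          (by apply div_nonneg <;> linarith) (by apply div_nonneg <;> linarith)
          (by rw [← add_div, div_le_one hrJ0]; linarith)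
          (by simp only; field_simp; ring) (by simp only; field_simp; ring)
    · ext <;> simp <;> field_simp
  · -- shift by (-1, 0)
    refine ⟨r • ((x + 1) / r, y / r), Set.smul_mem_smul_set ?_, (-1, 0), by simp, ?_⟩
    · rcases le_or_gt (x + 1) (2 * y) with hc2 | hc2
      · -- combo of (2J,J), (2J,2J)
        exact combo2O m0 mD mE (c0 := (x + 1 - y) / (r * J)) (c1 := (2 * y - (x + 1)) / (2 * (r * J)))
          (by apply div_nonneg <;> linarith) (by apply div_nonneg <;> linarith)
          (by rw [div_add_div _ _ (ne_of_gt hrJ0) (by positivity), div_le_one (by positivity)]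
              nlinarith)
          (by simp only; field_simp; ring) (by simp only; field_simp; ring)
      · -- combo of (J,0), (2J,J)
        exact combo2O m0 mB mD (c0 := (x + 1 - 2 * y) / (r * J)) (c1 := y / (r * J))
          (by apply div_nonneg <;> linarith) (by apply div_nonneg <;> linarith)
          (by rw [← add_div, div_le_one hrJ0]; nlinarith)
          (by simp only; field_simp; ring) (by simp only; field_simp; ring)
    · ext <;> simp <;> field_simp <;> ring
end

section
/- Fix an integer J > 2 and a real number r with 2/(3J) ≤ r ≤ 1/J. Let V = {(0,0), (0,J), (J,0), (J,2J), (2J,J), (2J,2J)} ⊂ ℝ² and let A_l = conv({(0,0), (1,1), (1,0)}). Then A_l ⊂ r·conv(V) + {(0,0), (0,−1)}. -/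
open Set Pointwise

lemma combo3_s17 {S : Set (ℝ × ℝ)} {v0 v1 v2 : ℝ × ℝ} (h0 : v0 ∈ S) (h1 : v1 ∈ S) (h2 : v2 ∈ S)
    {a b c : ℝ} (ha : 0 ≤ a) (hb : 0 ≤ b) (hc : 0 ≤ c) (habc : a + b + c = 1) :
    a • v0 + b • v1 + c • v2 ∈ convexHull ℝ S := by
  have key := Finset.centerMass_mem_convexHull (Finset.univ : Finset (Fin 3))
    (w := ![a, b, c]) (z := ![v0, v1, v2]) (R := ℝ)
    (by intro i _; fin_cases i <;> simpa)
    (by simp [Fin.sum_univ_three, habc])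
    (by intro i _; fin_cases i <;> simpa)
  rwa [Finset.centerMass_eq_of_sum_1 _ _ (by simp [Fin.sum_univ_three, habc]),
    Fin.sum_univ_three] at key
  -- may need simp to evaluate matrix entries

lemma mem_aux {r : ℝ} {C T : Set (ℝ × ℝ)} {q t p : ℝ × ℝ} (hq : q ∈ C) (ht : t ∈ T)
    (hpt : p = r • q + t) : p ∈ r • C + T := by
  rw [hpt]; exact Set.add_mem_add (Set.smul_mem_smul_set hq) ht

set_option maxHeartbeats 1000000 in
theorem stmt17 (J : ℕ) (hJ : 2 < J) (r : ℝ)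
    (hr1 : 2 / (3 * (J : ℝ)) ≤ r) (hr2 : r ≤ 1 / (J : ℝ))
    (V : Set (ℝ × ℝ))
    (hV : V = {((0 : ℝ), (0 : ℝ)), (0, (J : ℝ)), ((J : ℝ), 0), ((J : ℝ), 2 * (J : ℝ)),
      (2 * (J : ℝ), (J : ℝ)), (2 * (J : ℝ), 2 * (J : ℝ))}) :
    convexHull ℝ {((0 : ℝ), (0 : ℝ)), ((1 : ℝ), (1 : ℝ)), ((1 : ℝ), (0 : ℝ))} ⊆
      r • convexHull ℝ V + ({((0 : ℝ), (0 : ℝ)), ((0 : ℝ), (-1 : ℝ))} : Set (ℝ × ℝ)) := by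
  have hJ0 : (0 : ℝ) < J := by exact_mod_cast Nat.lt_of_lt_of_le Nat.zero_lt_two hJ.le
  rw [div_le_iff₀ (by positivity)] at hr1
  rw [le_div_iff₀ hJ0] at hr2
  have hs1 : 2 / 3 ≤ r * J := by nlinarith
  have hs2 : r * J ≤ 1 := hr2
  have hr0 : 0 < r := by nlinarith
  have hs0 : (0 : ℝ) < r * J := by nlinarith
  -- membership of the six vertices of V
  have m00 : ((0 : ℝ), (0 : ℝ)) ∈ V := by rw [hV]; simp
  have m0J : ((0 : ℝ), (J : ℝ)) ∈ V := by rw [hV]; simp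
  have mJ0 : ((J : ℝ), (0 : ℝ)) ∈ V := by rw [hV]; simp
  have mJ2 : ((J : ℝ), 2 * (J : ℝ)) ∈ V := by rw [hV]; simp
  have m2J : (2 * (J : ℝ), (J : ℝ)) ∈ V := by rw [hV]; simp
  have m22 : (2 * (J : ℝ), 2 * (J : ℝ)) ∈ V := by rw [hV]; simp
  -- the triangle is contained in the convex set S'
  have hsub : convexHull ℝ {((0 : ℝ), (0 : ℝ)), ((1 : ℝ), (1 : ℝ)), ((1 : ℝ), (0 : ℝ))} ⊆
      {p : ℝ × ℝ | 0 ≤ p.2 ∧ p.2 ≤ p.1 ∧ p.1 ≤ 1} := by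
    apply convexHull_min
    · rintro p (rfl | rfl | rfl) <;> norm_num
    · rintro ⟨x1, y1⟩ ⟨h1, h2, h3⟩ ⟨x2, y2⟩ ⟨h4, h5, h6⟩ a b ha hb hab
      refine ⟨?_, ?_, ?_⟩ <;> simp only [Prod.smul_mk, Prod.mk_add_mk, smul_eq_mul] <;> nlinarith
  intro p hp
  obtain ⟨hy0, hyx, hx1⟩ := hsub hp
  obtain ⟨x, y⟩ := p
  simp only at hy0 hyx hx1
  have htl : ((0 : ℝ), (0 : ℝ)) ∈ ({((0 : ℝ), (0 : ℝ)), ((0 : ℝ), (-1 : ℝ))} : Set (ℝ × ℝ)) := by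
    simp
  have htr : ((0 : ℝ), (-1 : ℝ)) ∈ ({((0 : ℝ), (0 : ℝ)), ((0 : ℝ), (-1 : ℝ))} : Set (ℝ × ℝ)) := by
    simp
  have hJne : (J : ℝ) ≠ 0 := ne_of_gt hJ0
  have hrne : r ≠ 0 := ne_of_gt hr0
  by_cases hcase : x - y ≤ r * J
  · -- no translation needed
    by_cases hsub2 : x ≤ 2 * y
    · -- combination of (0,0), (2J,J), (2J,2J)
      refine mem_aux (combo3_s17 m00 m2J m22 (a := 1 - x / (2 * (r * J)))
        (b := (x - y) / (r * J)) (c := (2 * y - x) / (2 * (r * J))) ?_ ?_ ?_ ?_) htl ?_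
      · rw [sub_nonneg, div_le_one (by positivity)]; nlinarith
      · apply div_nonneg _ (le_of_lt hs0); linarith
      · apply div_nonneg _ (by positivity); linarith
      · field_simp; ring
      · refine Prod.ext ?_ ?_ <;>
          simp only [Prod.smul_mk, Prod.mk_add_mk, smul_eq_mul] <;> field_simp <;> ring
    · -- combination of (0,0), (J,0), (2J,J)
      refine mem_aux (combo3_s17 m00 mJ0 m2J (a := 1 - (x - y) / (r * J))
        (b := (x - 2 * y) / (r * J)) (c := y / (r * J)) ?_ ?_ ?_ ?_) htl ?_
      · rw [sub_nonneg, div_le_one hs0]; linarith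
      · apply div_nonneg _ (le_of_lt hs0); linarith
      · positivity
      · field_simp; ring
      · refine Prod.ext ?_ ?_ <;>
          simp only [Prod.smul_mk, Prod.mk_add_mk, smul_eq_mul] <;> field_simp <;> ring
  · -- translate by (0,-1)
    push_neg at hcase
    have hY2s : y + 1 ≤ 2 * (r * J) := by nlinarith
    by_cases hsub2 : y + 1 ≤ 2 * x
    · -- combination of (0,0), (J,2J), (2J,2J)
      refine mem_aux (combo3_s17 m00 mJ2 m22 (a := 1 - (y + 1) / (2 * (r * J)))
        (b := (y + 1 - x) / (r * J)) (c := (2 * x - (y + 1)) / (2 * (r * J))) ?_ ?_ ?_ ?_) htr ?_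
      · rw [sub_nonneg, div_le_one (by positivity)]; linarith
      · apply div_nonneg _ (le_of_lt hs0); nlinarith
      · apply div_nonneg _ (by positivity); linarith
      · field_simp; ring
      · refine Prod.ext ?_ ?_ <;>
          simp only [Prod.smul_mk, Prod.mk_add_mk, smul_eq_mul] <;> field_simp <;> ring
    · -- combination of (0,0), (0,J), (J,2J)
      push_neg at hsub2
      refine mem_aux (combo3_s17 m00 m0J mJ2 (a := 1 - (y + 1 - x) / (r * J))
        (b := (y + 1 - 2 * x) / (r * J)) (c := x / (r * J)) ?_ ?_ ?_ ?_) htr ?_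
      · rw [sub_nonneg, div_le_one hs0]; nlinarith
      · apply div_nonneg _ (le_of_lt hs0); linarith
      · apply div_nonneg _ (le_of_lt hs0); linarith
      · field_simp; ring
      · refine Prod.ext ?_ ?_ <;>
          simp only [Prod.smul_mk, Prod.mk_add_mk, smul_eq_mul] <;> field_simp <;> ring
end

section
/- Let d ≥ 1, r ∈ (0,1), and b_0 = 0, b_1, …, b_J ∈ ℝ^d with {b_1, …, b_d} linearly independent. Let k be a positive integer with d ≤ (k+1)·r, and for F ⊂ ℝ^d define T(F) = ⋃_{j=0}^J (r·F + b_j). If K_n ⊂ ℝ^d satisfies conv({(k+1)b_0, (k+1)b_1, …, (k+1)b_d}) ⊂ k·K_n (the k-fold sumset of K_n), then conv({(k+1)b_0, (k+1)b_1, …, (k+1)b_d}) ⊂ k·T(K_n). -/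
open Set Pointwise

section helpers
variable {E : Type*} [AddCommGroup E] [Module ℝ E]

lemma mem_hull_iff' (d : ℕ) (K : ℝ) (hK : 0 < K) (b : ℕ → E) (x : E) :
    x ∈ convexHull ℝ ((fun i : ℕ => K • b i) '' {i | i ≤ d}) ↔
      ∃ μ : ℕ → ℝ, (∀ i ∈ Finset.range (d+1), 0 ≤ μ i) ∧
        (∑ i ∈ Finset.range (d+1), μ i = K) ∧
        x = ∑ i ∈ Finset.range (d+1), μ i • b i := by
  constructor
  · intro hx
    rw [convexHull_eq] at hx
    obtain ⟨ι, t, w, z, hw0, hw1, hz, hcm⟩ := hx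
    have hgex : ∀ i : ι, ∃ n, i ∈ t → n ≤ d ∧ z i = K • b n := by
      intro i
      by_cases hi : i ∈ t
      · obtain ⟨n, hn, hzn⟩ := hz i hi
        exact ⟨n, fun _ => ⟨hn, hzn.symm⟩⟩
      · exact ⟨0, fun hh => absurd hh hi⟩
    choose g hg using hgex
    have hmaps : ∀ i ∈ t, g i ∈ Finset.range (d+1) := fun i hi =>
      Finset.mem_range.2 (Nat.lt_succ_of_le ((hg i hi).1))
    refine ⟨fun n => K * ∑ i ∈ t.filter (fun i => g i = n), w i, ?_, ?_, ?_⟩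
    · intro n _
      exact mul_nonneg hK.le (Finset.sum_nonneg fun i hi => hw0 i (Finset.mem_filter.1 hi).1)
    · rw [← Finset.mul_sum, Finset.sum_fiberwise_of_maps_to hmaps, hw1, mul_one]
    · have h1 : x = ∑ i ∈ t, w i • z i := by
        rw [← hcm, Finset.centerMass_eq_of_sum_1 _ _ hw1]
      rw [h1]
      rw [← Finset.sum_fiberwise_of_maps_to hmaps (fun i => w i • z i)]
      refine Finset.sum_congr rfl fun n hn => ?_
      have h2 : ∑ i ∈ t.filter (fun i => g i = n), w i • z i
          = ∑ i ∈ t.filter (fun i => g i = n), w i • (K • b n) := by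
        refine Finset.sum_congr rfl fun i hi => ?_
        obtain ⟨hit, hgi⟩ := Finset.mem_filter.1 hi
        rw [(hg i hit).2, hgi]
      rw [h2, ← Finset.sum_smul, smul_smul, mul_comm]
  · rintro ⟨μ, hμ0, hμs, rfl⟩
    have hmem := Finset.centerMass_mem_convexHull (Finset.range (d+1)) hμ0
      (by rw [hμs]; exact hK)
      (fun i hi => Set.mem_image_of_mem (fun i : ℕ => K • b i)
        (show i ∈ {i : ℕ | i ≤ d} from Nat.lt_succ_iff.1 (Finset.mem_range.1 hi)))
      (z := fun i => K • b i)
    have hcm : (Finset.range (d+1)).centerMass μ (fun i => K • b i)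
        = ∑ i ∈ Finset.range (d+1), μ i • b i := by
      rw [Finset.centerMass, hμs]
      have h2 : ∑ i ∈ Finset.range (d+1), μ i • (K • b i)
          = K • ∑ i ∈ Finset.range (d+1), μ i • b i := by
        rw [Finset.smul_sum]; exact Finset.sum_congr rfl fun i _ => smul_comm _ _ _
      rw [h2, inv_smul_smul₀ hK.ne']
    rwa [hcm] at hmem

end helpers

lemma bindL_length (C : ℕ → ℕ) (n : ℕ) :
    ((List.range n).flatMap (fun i => List.replicate (C i) i)).length
      = ∑ i ∈ Finset.range n, C i := by
  induction n with
  | zero => simp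
  | succ n ih => simp [List.range_succ, Finset.sum_range_succ, ih]

lemma bindL_sum {M : Type*} [AddCommMonoid M] (C : ℕ → ℕ) (b : ℕ → M) (n : ℕ) :
    (((List.range n).flatMap (fun i => List.replicate (C i) i)).map b).sum
      = ∑ i ∈ Finset.range n, C i • b i := by
  induction n with
  | zero => simp
  | succ n ih => simp [List.range_succ, Finset.sum_range_succ, ih]

lemma bindL_mem (C : ℕ → ℕ) (n : ℕ) {m : ℕ}
    (hm : m ∈ (List.range n).flatMap (fun i => List.replicate (C i) i)) : m < n := by
  obtain ⟨a, ha, hma⟩ := List.mem_flatMap.1 hm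
  rw [List.eq_of_mem_replicate hma]
  exact List.mem_range.1 ha

lemma sum_fn_get {α M : Type*} [AddCommMonoid M] (l : List α) (f : α → M) :
    ∑ m : Fin l.length, f (l.get m) = (l.map f).sum := by
  induction l with
  | nil => simp
  | cons a l ih => simp [Fin.sum_univ_succ, ih]

lemma exists_counts (d k : ℕ) (hd : 1 ≤ d) (hk : 1 ≤ k) (μ : ℕ → ℝ)
    (hμ0 : ∀ i ∈ Finset.range (d+1), 0 ≤ μ i)
    (hμs : ∑ i ∈ Finset.range (d+1), μ i = (k:ℝ)+1) :
    ∃ c' : ℕ → ℕ, (∑ i ∈ Finset.range (d+1), c' i ≤ k) ∧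
      (∀ i ∈ Finset.range (d+1), (c' i : ℝ) ≤ μ i) ∧
      (∑ i ∈ Finset.range d, (μ (i+1) - (c' (i+1) : ℝ)) ≤ (d:ℝ)) := by
  set c : ℕ → ℕ := fun i => ⌊μ i⌋₊ with hc
  have hcle : ∀ i ∈ Finset.range (d+1), (c i : ℝ) ≤ μ i := fun i hi => Nat.floor_le (hμ0 i hi)
  set s := ∑ i ∈ Finset.range (d+1), c i with hsdef
  have hsle : (s : ℝ) ≤ (k : ℝ) + 1 := by
    rw [← hμs, hsdef]
    push_cast
    exact Finset.sum_le_sum hcle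
  have hs : s ≤ k + 1 := by exact_mod_cast hsle
  by_cases hsk : s ≤ k
  · refine ⟨c, hsk, hcle, ?_⟩
    have hlt : ∑ i ∈ Finset.range d, (μ (i+1) - (c (i+1) : ℝ)) < ∑ i ∈ Finset.range d, (1:ℝ) := by
      refine Finset.sum_lt_sum_of_nonempty (Finset.nonempty_range_iff.2 (by omega)) ?_
      intro i _
      have := Nat.lt_floor_add_one (μ (i+1))
      simp only [hc]
      push_cast at this ⊢
      linarith
    simp only [Finset.sum_const, Finset.card_range, nsmul_eq_mul, mul_one] at hlt
    linarith
  · have hseq : s = k + 1 := by omega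
    have hall : ∀ i ∈ Finset.range (d+1), μ i - (c i : ℝ) = 0 := by
      rw [← Finset.sum_eq_zero_iff_of_nonneg (fun i hi => sub_nonneg.2 (hcle i hi))]
      rw [Finset.sum_sub_distrib, hμs, ← Nat.cast_sum, ← hsdef, hseq]
      push_cast; ring
    obtain ⟨i₀, hi₀m, hi₀⟩ : ∃ i₀ ∈ Finset.range (d+1), c i₀ ≠ 0 := by
      by_contra hcon
      push_neg at hcon
      have : s = 0 := Finset.sum_eq_zero hcon
      omega
    set c' : ℕ → ℕ := Function.update c i₀ (c i₀ - 1) with hc'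
    have hc'le : ∀ i, c' i ≤ c i := by
      intro i
      rcases eq_or_ne i i₀ with rfl | hne
      · simp [hc', Nat.sub_le]
      · simp [hc', Function.update_of_ne hne]
    have hsum' : ∑ i ∈ Finset.range (d+1), c' i = k := by
      have h1 : ∑ i ∈ Finset.range (d+1), c' i
          = (c i₀ - 1) + ∑ i ∈ (Finset.range (d+1)).erase i₀, c i := by
        rw [hc', Finset.sum_update_of_mem hi₀m, Finset.erase_eq]
      have h2 : c i₀ + ∑ i ∈ (Finset.range (d+1)).erase i₀, c i = s :=
        Finset.add_sum_erase _ c hi₀m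
      omega
    refine ⟨c', hsum'.le, ?_, ?_⟩
    · intro i hi
      exact le_trans (Nat.cast_le.2 (hc'le i)) (hcle i hi)
    · have hA : ∑ i ∈ Finset.range d, c (i+1) + c 0 = s := (Finset.sum_range_succ' c d).symm
      have hA' : ∑ i ∈ Finset.range d, c' (i+1) + c' 0 = k := by
        rw [← hsum', Finset.sum_range_succ' c' d]
      have hAA' : ∑ i ∈ Finset.range d, c (i+1) ≤ ∑ i ∈ Finset.range d, c' (i+1) + 1 := by
        have := hc'le 0
        omega
      have heq : ∀ i ∈ Finset.range d, μ (i+1) - (c' (i+1) : ℝ)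
          = (c (i+1) : ℝ) - (c' (i+1) : ℝ) := by
        intro i hi
        have h1 := hall (i+1) (by simp at hi ⊢; omega)
        linarith
      rw [Finset.sum_congr rfl heq, Finset.sum_sub_distrib, ← Nat.cast_sum, ← Nat.cast_sum]
      have h1 : ((∑ i ∈ Finset.range d, c (i+1) : ℕ) : ℝ)
          ≤ ((∑ i ∈ Finset.range d, c' (i+1) : ℕ) : ℝ) + 1 := by exact_mod_cast hAA'
      have h2 : (1:ℝ) ≤ (d:ℝ) := by exact_mod_cast hd
      linarith

theorem stmt18 (d J k : ℕ) (hd : 1 ≤ d) (hdJ : d ≤ J)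
    (r : ℝ) (hr0 : 0 < r) (hr1 : r < 1)
    (b : ℕ → EuclideanSpace ℝ (Fin d)) (hb0 : b 0 = 0)
    (hli : LinearIndependent ℝ (fun i : Fin d => b ((i : ℕ) + 1)))
    (hk : 1 ≤ k) (hkr : (d : ℝ) ≤ ((k : ℝ) + 1) * r)
    (Kn : Set (EuclideanSpace ℝ (Fin d)))
    (h : convexHull ℝ ((fun i : ℕ => ((k : ℝ) + 1) • b i) '' {i | i ≤ d}) ⊆ kSum k Kn) :
    convexHull ℝ ((fun i : ℕ => ((k : ℝ) + 1) • b i) '' {i | i ≤ d}) ⊆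
      kSum k (⋃ j ∈ Finset.range (J + 1), (fun x => r • x + b j) '' Kn) := by
  intro x hx
  have hK : (0:ℝ) < (k:ℝ)+1 := by positivity
  obtain ⟨μ, hμ0, hμs, hμx⟩ := (mem_hull_iff' d ((k:ℝ)+1) hK b x).1 hx
  obtain ⟨c', hc'k, hc'le, hc'sum⟩ := exists_counts d k hd hk μ hμ0 hμs
  set s' := ∑ i ∈ Finset.range (d+1), c' i with hs'
  set C : ℕ → ℕ := fun i => if i = 0 then c' 0 + (k - s') else c' i with hC
  have hCsucc : ∀ i : ℕ, C (i+1) = c' (i+1) := fun i => by simp [hC]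
  have hCsum : ∑ i ∈ Finset.range (d+1), C i = k := by
    have h1 : ∑ i ∈ Finset.range d, C (i+1) = ∑ i ∈ Finset.range d, c' (i+1) :=
      Finset.sum_congr rfl fun i _ => hCsucc i
    have h2 := Finset.sum_range_succ' C d
    have h3 := Finset.sum_range_succ' c' d
    rw [h2, h1]
    have h4 : C 0 = c' 0 + (k - s') := by simp [hC]
    rw [← hs'] at h3
    omega
  set L := (List.range (d+1)).flatMap (fun i => List.replicate (C i) i) with hL
  have hlen : L.length = k := by rw [hL, bindL_length, hCsum]
  set x' : EuclideanSpace ℝ (Fin d) :=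
    (1/r) • (x - ∑ i ∈ Finset.range (d+1), (c' i : ℝ) • b i) with hx'
  have hx'mem : x' ∈ convexHull ℝ ((fun i : ℕ => ((k:ℝ)+1) • b i) '' {i | i ≤ d}) := by
    rw [mem_hull_iff' d _ hK b]
    set S : ℝ := ∑ i ∈ Finset.range d, (μ (i+1) - (c' (i+1):ℝ)) with hS
    have hSnn : 0 ≤ S := Finset.sum_nonneg fun i hi =>
      sub_nonneg.2 (hc'le (i+1) (by simp at hi ⊢; omega))
    refine ⟨fun i => if i = 0 then ((k:ℝ)+1) - S/r else (μ i - (c' i : ℝ))/r, ?_, ?_, ?_⟩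
    · intro i hi
      dsimp only
      rcases eq_or_ne i 0 with rfl | hne
      · rw [if_pos rfl]
        have hSd : S / r ≤ (k:ℝ)+1 := by
          rw [div_le_iff₀ hr0]
          calc S ≤ (d:ℝ) := hc'sum
            _ ≤ ((k:ℝ)+1) * r := hkr
        linarith
      · rw [if_neg hne]
        exact div_nonneg (sub_nonneg.2 (hc'le i hi)) hr0.le
    · rw [Finset.sum_range_succ']
      simp only [Nat.succ_ne_zero, if_neg, if_pos, Nat.add_eq_zero, one_ne_zero, and_false,
        ite_false, ite_true]
      rw [← Finset.sum_div, ← hS]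
      ring
    · have hxeq : x' = ∑ i ∈ Finset.range (d+1), ((μ i - (c' i : ℝ))/r) • b i := by
        rw [hx', hμx, ← Finset.sum_sub_distrib, Finset.smul_sum]
        refine Finset.sum_congr rfl fun i _ => ?_
        rw [← sub_smul, smul_smul]
        congr 1
        ring
      rw [hxeq, Finset.sum_range_succ', Finset.sum_range_succ' _ d]
      simp [hb0]
  obtain ⟨f, hf, hfx⟩ := h hx'mem
  set j : Fin k → ℕ := fun m => L.get (finCongr hlen.symm m) with hj
  have hjd : ∀ m : Fin k, j m < d + 1 := by
    intro m
    exact bindL_mem C (d+1) (L.get_mem _)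
  refine ⟨fun m => r • f m + b (j m), ?_, ?_⟩
  · intro m
    refine Set.mem_iUnion₂.2 ⟨j m, Finset.mem_range.2 (by have := hjd m; omega), ?_⟩
    exact ⟨f m, hf m, rfl⟩
  · rw [Finset.sum_add_distrib, ← Finset.smul_sum, ← hfx]
    have hbs : ∑ m : Fin k, b (j m) = ∑ i ∈ Finset.range (d+1), C i • b i := by
      rw [← bindL_sum C b (d+1), ← hL, ← sum_fn_get L b]
      exact Fintype.sum_equiv (finCongr hlen.symm) _ _ (fun m => rfl)
    have hCb : ∑ i ∈ Finset.range (d+1), C i • b i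
        = ∑ i ∈ Finset.range (d+1), (c' i : ℝ) • b i := by
      rw [Finset.sum_range_succ', Finset.sum_range_succ' (fun i => (c' i : ℝ) • b i) d]
      simp only [hCsucc, hb0, smul_zero, add_zero]
      exact Finset.sum_congr rfl fun i _ => (Nat.cast_smul_eq_nsmul ℝ _ _).symm
    rw [hbs, hCb, hx', smul_smul, mul_one_div, div_self hr0.ne', one_smul]
    abel
end
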